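/- arXiv:1405.5551 — 10 statements merged into one kernel-verified Lean document; each statement's English description precedes it below -/
import Mathlib

section
/- Let X be a Banach space and (x_t) a bounded net in X converging weak* to an element η of X**. Then the norm of η equals the limit over t of the infimum of the norms of elements of the convex hull of {x_j : j ≥ t}. -/
open Filter Pointwise

/-- Let `X` be a Banach space and `(x t)` a bounded net in `X` converging
weak* to an element `η` of `X**`.  Then `‖η‖` equals the limit over `t` of the infimum of the
norms of elements of the convex hull of `{x j : j ≥ t}`. -/
theorem norm_eq_limit_inf_convexHull
    {X : Type*} [NormedAddCommGroup X] [NormedSpace ℝ X] [CompleteSpace X]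
    {ι : Type*} [Nonempty ι] [SemilatticeSup ι]
    (x : ι → X) (C : ℝ) (hbdd : ∀ t, ‖x t‖ ≤ C)
    (η : StrongDual ℝ (StrongDual ℝ X))
    (hw : ∀ φ : StrongDual ℝ X,
      Tendsto (fun t => φ (x t)) atTop (nhds (η φ))) :
    Tendsto (fun t => sInf (norm '' (convexHull ℝ (x '' Set.Ici t)))) atTop (nhds ‖η‖) := by
  set D : ι → ℝ := fun t => sInf (norm '' (convexHull ℝ (x '' Set.Ici t))) with hDdef
  have hmemK : ∀ t, ∀ j, t ≤ j → x j ∈ convexHull ℝ (x '' Set.Ici t) := by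
    intro t j hj
    exact subset_convexHull ℝ _ ⟨j, hj, rfl⟩
  have hne : ∀ t, (norm '' (convexHull ℝ (x '' Set.Ici t))).Nonempty := fun t =>
    ⟨‖x t‖, ⟨x t, hmemK t t le_rfl, rfl⟩⟩
  have hbdd0 : ∀ t, ∀ a ∈ norm '' (convexHull ℝ (x '' Set.Ici t)), 0 ≤ a := by
    rintro t a ⟨y, -, rfl⟩; exact norm_nonneg y
  have hbb : ∀ t, BddBelow (norm '' (convexHull ℝ (x '' Set.Ici t))) := fun t =>
    ⟨0, fun a ha => hbdd0 t a ha⟩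
  have hD0 : ∀ t, 0 ≤ D t := fun t => le_csInf (hne t) (hbdd0 t)
  have hDle_norm : ∀ t, ∀ y ∈ convexHull ℝ (x '' Set.Ici t), D t ≤ ‖y‖ := by
    intro t y hy
    exact csInf_le (hbb t) ⟨y, hy, rfl⟩
  have hmono : Monotone D := by
    intro s t hst
    exact csInf_le_csInf (hbb s) (hne t)
      (Set.image_mono (convexHull_mono (Set.image_mono (Set.Ici_subset_Ici.2 hst))))
  -- Step D : D t ≤ ‖η‖ for all t
  have hDle : ∀ t, D t ≤ ‖η‖ := by
    intro t
    by_contra hcon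
    push_neg at hcon
    set r : ℝ := (‖η‖ + D t) / 2 with hrdef
    have hr1 : ‖η‖ < r := by rw [hrdef]; linarith
    have hr2 : r < D t := by rw [hrdef]; linarith
    have hr0 : 0 < r := lt_of_le_of_lt (norm_nonneg η) hr1
    set r' : ℝ := (‖η‖ + r) / 2 with hr'def
    have hr'1 : ‖η‖ < r' := by rw [hr'def]; linarith
    have hr'2 : r' < r := by rw [hr'def]; linarith
    have hr'0 : 0 < r' := lt_of_le_of_lt (norm_nonneg η) hr'1
    set K := convexHull ℝ (x '' Set.Ici t) with hKdef
    set S := K + Metric.ball (0 : X) r with hSdef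
    have hSconv : Convex ℝ S := (convex_convexHull ℝ _).add (convex_ball 0 r)
    have hSopen : IsOpen S := (Metric.isOpen_ball).add_left
    have h0S : (0 : X) ∉ S := by
      rintro ⟨y, hy, b, hb, hyb⟩
      have hbn : ‖b‖ < r := by simpa using Metric.mem_ball.1 hb
      have hyn : ‖y‖ < r := by
        have : y = -b := by
          have := hyb; linear_combination (norm := module) hyb
        rw [this, norm_neg]; exact hbn
      have := hDle_norm t y hy
      linarith
    obtain ⟨f, hf⟩ := geometric_hahn_banach_open_point hSconv hSopen h0S
    have hf0 : ∀ a ∈ S, f a < 0 := by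
      intro a ha; have := hf a ha; simpa using this
    have hfy : ∀ y ∈ K, ∀ b ∈ Metric.ball (0 : X) r, ‖f b‖ < -(f y) := by
      intro y hy b hb
      have h1 : f y + f b < 0 := by
        have := hf0 (y + b) (Set.add_mem_add hy hb)
        simpa [map_add] using this
      have hbneg : -b ∈ Metric.ball (0 : X) r := by
        simpa using Metric.mem_ball.1 hb
      have h2 : f y + f (-b) < 0 := by
        have := hf0 (y + (-b)) (Set.add_mem_add hy hbneg)
        simpa [map_add] using this
      rw [map_neg] at h2
      rw [Real.norm_eq_abs, abs_lt]
      constructor <;> linarith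
    have hnorm : ∀ y ∈ K, ‖f‖ ≤ (-(f y)) / r' := by
      intro y hy
      have hM0 : 0 ≤ -(f y) := by
        have := hfy y hy 0 (Metric.mem_ball_self hr0)
        simpa using this.le
      apply ContinuousLinearMap.opNorm_le_bound _ (div_nonneg hM0 hr'0.le)
      intro z
      rcases eq_or_ne z 0 with rfl | hz
      · simp
      · have hzn : 0 < ‖z‖ := norm_pos_iff.2 hz
        set b := (r' / ‖z‖) • z with hbdef
        have hbn : ‖b‖ = r' := by
          rw [hbdef, norm_smul, Real.norm_eq_abs, abs_of_pos (div_pos hr'0 hzn)]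
          field_simp
        have hbball : b ∈ Metric.ball (0 : X) r := by
          rw [Metric.mem_ball, dist_zero_right, hbn]; exact hr'2
        have hkey := hfy y hy b hbball
        have hfb : f b = (r' / ‖z‖) * f z := by rw [hbdef, map_smul]; rfl
        rw [hfb, Real.norm_eq_abs, abs_mul, abs_of_pos (div_pos hr'0 hzn)] at hkey
        rw [Real.norm_eq_abs]
        rw [div_mul_eq_mul_div, le_div_iff₀ hr'0]
        have := mul_le_mul_of_nonneg_left hkey.le hzn.le
        calc |f z| * r' = ‖z‖ * (r' / ‖z‖ * |f z|) := by field_simp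
          _ ≤ ‖z‖ * (-(f y)) := by nlinarith [abs_nonneg (f z)]
          _ = -(f y) * ‖z‖ := by ring
    have hfpos : 0 < ‖f‖ := by
      have hxk : x t ∈ K := hmemK t t le_rfl
      have : f (x t) < 0 := by
        have := hf0 (x t + 0) (Set.add_mem_add hxk (Metric.mem_ball_self hr0))
        simpa using this
      have hfne : f ≠ 0 := by
        intro h; rw [h] at this; simp at this
      exact norm_pos_iff.2 hfne
    have hev : ∀ j ≥ t, f (x j) ≤ -(r' * ‖f‖) := by
      intro j hj
      have := hnorm (x j) (hmemK t j hj)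
      rw [le_div_iff₀ hr'0] at this
      linarith
    have hlim : η f ≤ -(r' * ‖f‖) :=
      le_of_tendsto (hw f) (eventually_atTop.2 ⟨t, hev⟩)
    have hfinal : r' * ‖f‖ ≤ ‖η‖ * ‖f‖ := by
      calc r' * ‖f‖ ≤ -(η f) := by linarith
        _ ≤ |η f| := neg_le_abs _
        _ = ‖η f‖ := (Real.norm_eq_abs _).symm
        _ ≤ ‖η‖ * ‖f‖ := η.le_opNorm f
    nlinarith
  -- monotone convergence to the sup
  have hbdda : BddAbove (Set.range D) := ⟨‖η‖, by rintro a ⟨t, rfl⟩; exact hDle t⟩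
  have htend : Tendsto D atTop (nhds (⨆ t, D t)) := tendsto_atTop_ciSup hmono hbdda
  have hSle : (⨆ t, D t) ≤ ‖η‖ := ciSup_le hDle
  have hSge : ‖η‖ ≤ ⨆ t, D t := by
    have hSv0 : 0 ≤ ⨆ t, D t :=
      le_trans (hD0 (Classical.arbitrary ι)) (le_ciSup hbdda _)
    apply ContinuousLinearMap.opNorm_le_bound _ hSv0
    intro φ
    apply le_of_forall_pos_le_add
    intro ε hε
    set δ : ℝ := ε / (‖φ‖ + 1) with hδdef
    have hφ1 : (0:ℝ) < ‖φ‖ + 1 := by positivity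
    have hδ0 : 0 < δ := div_pos hε hφ1
    obtain ⟨t, ht⟩ := (Metric.tendsto_atTop.1 (hw φ)) δ hδ0
    have hconv : ∀ y ∈ convexHull ℝ (x '' Set.Ici t), dist (φ y) (η φ) ≤ δ := by
      intro y hy
      have hsub : x '' Set.Ici t ⊆ (φ : X →ₗ[ℝ] ℝ) ⁻¹' Metric.closedBall (η φ) δ := by
        rintro _ ⟨j, hj, rfl⟩
        exact Metric.mem_closedBall.2 (le_of_lt (ht j hj))
      have hcv : Convex ℝ ((φ : X →ₗ[ℝ] ℝ) ⁻¹' Metric.closedBall (η φ) δ) :=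
        (convex_closedBall _ _).linear_preimage (φ : X →ₗ[ℝ] ℝ)
      exact Metric.mem_closedBall.1 (convexHull_min hsub hcv hy)
    obtain ⟨a, ⟨y, hyK, rfl⟩, hya⟩ :=
      exists_lt_of_csInf_lt (hne t) (show sInf (norm '' (convexHull ℝ (x '' Set.Ici t))) < D t + δ by
        rw [hDdef]; linarith)
    have h1 : ‖η φ‖ ≤ ‖φ y‖ + δ := by
      have hd := hconv y hyK
      rw [Real.dist_eq] at hd
      rw [Real.norm_eq_abs, Real.norm_eq_abs]
      calc |η φ| = |φ y + (η φ - φ y)| := by ring_nf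
        _ ≤ |φ y| + |η φ - φ y| := abs_add_le _ _
        _ ≤ |φ y| + δ := by rw [abs_sub_comm]; linarith
    have h2 : ‖φ y‖ ≤ ‖φ‖ * ‖y‖ := φ.le_opNorm y
    have h3 : D t ≤ ⨆ t, D t := le_ciSup hbdda t
    have hδε : δ * (‖φ‖ + 1) = ε := div_mul_cancel₀ _ (ne_of_gt hφ1)
    have hy0 : 0 ≤ ‖y‖ := norm_nonneg y
    have hφ0 : 0 ≤ ‖φ‖ := norm_nonneg φ
    nlinarith [hD0 t]
  have heq : (⨆ t, D t) = ‖η‖ := le_antisymm hSle hSge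
  rw [hDdef] at htend
  rw [← heq]
  exact htend
end

section
/- In a unital Banach algebra, if x satisfies ‖1 − x‖ ≤ 1, then the element x^{1/n} defined by the binomial series satisfies (x^{1/n})^n = x for every positive integer n. -/
/-- The generalized binomial coefficient `C(t, k) = t(t-1)⋯(t-k+1)/k!`. -/
noncomputable def gbinom (t : ℝ) (k : ℕ) : ℝ :=
  (∏ i ∈ Finset.range k, (t - i)) / (Nat.factorial k : ℝ)

/-- The `t`-th power of `x` defined by the binomial series
`x^t = Σ_{k≥0} C(t,k)(−1)^k (1−x)^k`. -/
noncomputable def binomPow {A : Type*} [NormedRing A] [NormedSpace ℝ A]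
    (x : A) (t : ℝ) : A :=
  ∑' k : ℕ, ((gbinom t k) * (-1 : ℝ) ^ k) • (1 - x) ^ k

set_option linter.unusedSectionVars false

lemma gbinom_zero (t : ℝ) : gbinom t 0 = 1 := by simp [gbinom]

lemma gbinom_one (t : ℝ) : gbinom t 1 = t := by simp [gbinom]

lemma gbinom_succ (t : ℝ) (k : ℕ) :
    gbinom t (k + 1) = gbinom t k * (t - k) / (k + 1) := by
  unfold gbinom
  rw [Finset.prod_range_succ, Nat.factorial_succ]
  have h1 : (Nat.factorial k : ℝ) ≠ 0 := Nat.cast_ne_zero.mpr (Nat.factorial_ne_zero k)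
  have h2 : ((k : ℝ) + 1) ≠ 0 := by positivity
  push_cast
  field_simp

lemma gbinom_eq_choose (t : ℝ) (k : ℕ) : gbinom t k = Ring.choose t k := by
  have h1 : (descPochhammer ℤ k).smeval t = ∏ i ∈ Finset.range k, (t - i) := by
    induction k with
    | zero => simp [descPochhammer_zero, Polynomial.smeval_one]
    | succ k ih =>
      rw [descPochhammer_succ_right, Polynomial.smeval_mul, ih, Finset.prod_range_succ]
      congr 1
      simp [Polynomial.smeval_sub, Polynomial.smeval_X, Polynomial.smeval_natCast]
  have h2 := Ring.descPochhammer_eq_factorial_smul_choose (R := ℝ) t k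
  rw [h1] at h2
  have h3 : (Nat.factorial k : ℝ) ≠ 0 := Nat.cast_ne_zero.mpr (Nat.factorial_ne_zero k)
  rw [gbinom, h2, nsmul_eq_mul, mul_div_cancel_left₀ _ h3]

lemma gbinom_vandermonde (s t : ℝ) (k : ℕ) :
    gbinom (s + t) k = ∑ ij ∈ Finset.HasAntidiagonal.antidiagonal k, gbinom s ij.1 * gbinom t ij.2 := by
  simp only [gbinom_eq_choose]
  exact Ring.add_choose_eq k (Commute.all s t)

lemma summable_abs_gbinom {t : ℝ} (ht0 : 0 < t) (ht1 : t ≤ 1) :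
    Summable fun k => |gbinom t k| := by
  set c : ℕ → ℝ := fun k => |gbinom t k| with hc
  have habs : ∀ k : ℕ, 1 ≤ k → c (k + 1) = c k * ((k : ℝ) - t) / ((k : ℝ) + 1) := by
    intro k hk
    have hkt : t ≤ (k : ℝ) := le_trans ht1 (by exact_mod_cast hk)
    have h2 : |t - (k : ℝ)| = (k : ℝ) - t := by
      rw [abs_sub_comm, abs_of_nonneg (by linarith)]
    simp only [hc, gbinom_succ t k, abs_div, abs_mul, h2,
      abs_of_pos (by positivity : (0:ℝ) < (k : ℝ) + 1)]
  set f : ℕ → ℝ := fun m => ((m : ℝ) + 1) * c (m + 1) with hf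
  have key : ∀ m : ℕ, t * c (m + 1) = f m - f (m + 1) := by
    intro m
    have h := habs (m + 1) (Nat.le_add_left 1 m)
    simp only [hf]
    push_cast
    rw [h]
    have h2 : ((m : ℝ) + 1 + 1) ≠ 0 := by positivity
    field_simp
    push_cast
    ring
  have cnonneg : ∀ k, 0 ≤ c k := fun k => abs_nonneg _
  have fnonneg : ∀ m, 0 ≤ f m := fun m => mul_nonneg (by positivity) (cnonneg _)
  have hbound : ∀ N, ∑ m ∈ Finset.range N, c (m + 1) ≤ 1 := by
    intro N
    have h1 : ∑ m ∈ Finset.range N, (f m - f (m + 1)) = f 0 - f N :=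
      Finset.sum_range_sub' f N
    have h2 : t * ∑ m ∈ Finset.range N, c (m + 1) ≤ t := by
      rw [Finset.mul_sum]
      calc ∑ m ∈ Finset.range N, t * c (m + 1) = f 0 - f N := by
            rw [← h1]; exact Finset.sum_congr rfl fun m _ => key m
        _ ≤ f 0 := by linarith [fnonneg N]
        _ = t := by simp [hf, hc, gbinom_one, abs_of_pos ht0]
    have h3 : t * ∑ m ∈ Finset.range N, c (m + 1) ≤ t * 1 := by linarith
    exact (mul_le_mul_iff_right₀ ht0).mp h3
  have hsum : Summable fun m => c (m + 1) :=
    summable_of_sum_range_le (fun m => cnonneg _) hbound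
  exact (summable_nat_add_iff 1).mp hsum

section Aux

variable {A : Type*} [NormedRing A] [NormedAlgebra ℂ A] [NormOneClass A] [CompleteSpace A]

lemma summable_norm_binomTerm (x : A) (hx : ‖1 - x‖ ≤ 1) {t : ℝ} (ht0 : 0 < t) (ht1 : t ≤ 1) :
    Summable fun k : ℕ => ‖((gbinom t k) * (-1 : ℝ) ^ k) • (1 - x) ^ k‖ := by
  refine Summable.of_nonneg_of_le (fun k => norm_nonneg _) (fun k => ?_)
    (summable_abs_gbinom ht0 ht1)
  rw [norm_smul]
  have h1 : ‖(1 - x) ^ k‖ ≤ 1 :=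
    le_trans (norm_pow_le (1 - x) k) (pow_le_one₀ (norm_nonneg _) hx)
  have h2 : ‖gbinom t k * (-1 : ℝ) ^ k‖ = |gbinom t k| := by
    rw [Real.norm_eq_abs, abs_mul, abs_pow, abs_neg, abs_one, one_pow, mul_one]
  rw [h2]
  calc |gbinom t k| * ‖(1 - x) ^ k‖ ≤ |gbinom t k| * 1 :=
        mul_le_mul_of_nonneg_left h1 (abs_nonneg _)
    _ = |gbinom t k| := mul_one _

lemma binomPow_add (x : A) (hx : ‖1 - x‖ ≤ 1) {s t : ℝ}
    (hs0 : 0 < s) (hs1 : s ≤ 1) (ht0 : 0 < t) (ht1 : t ≤ 1) :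
    binomPow x s * binomPow x t = binomPow x (s + t) := by
  rw [binomPow, binomPow, binomPow,
    tsum_mul_tsum_eq_tsum_sum_antidiagonal_of_summable_norm
      (summable_norm_binomTerm x hx hs0 hs1) (summable_norm_binomTerm x hx ht0 ht1)]
  refine tsum_congr fun n => ?_
  rw [gbinom_vandermonde, Finset.sum_mul, Finset.sum_smul]
  refine Finset.sum_congr rfl fun ij hij => ?_
  have hij' : ij.1 + ij.2 = n := Finset.HasAntidiagonal.mem_antidiagonal.mp hij
  rw [smul_mul_smul_comm]
  rw [← pow_add, hij']
  congr 1
  rw [← hij', pow_add]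
  ring

lemma binomPow_one' (x : A) : binomPow x 1 = x := by
  have hzero : ∀ (k : ℕ), k ∉ ({0, 1} : Finset ℕ) →
      ((gbinom 1 k * (-1 : ℝ) ^ k) • (1 - x) ^ k) = 0 := by
    intro k hk
    simp only [Finset.mem_insert, Finset.mem_singleton, not_or] at hk
    have h2 : 2 ≤ k := by omega
    have hmem : (1 : ℕ) ∈ Finset.range k := Finset.mem_range.mpr (by omega)
    have hg : gbinom 1 k = 0 := by
      unfold gbinom
      rw [Finset.prod_eq_zero hmem (by norm_num), zero_div]
    simp [hg]
  rw [binomPow, tsum_eq_sum hzero]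
  rw [Finset.sum_pair (by norm_num : (0:ℕ) ≠ 1)]
  simp [gbinom]

end Aux

/-- In a unital Banach algebra, if `‖1 − x‖ ≤ 1`, then the element
`x^{1/n}` defined by the binomial series satisfies `(x^{1/n})^n = x` for every positive
integer `n`. -/
theorem binomPow_nthRoot_pow
    {A : Type*} [NormedRing A] [NormedAlgebra ℂ A] [NormOneClass A] [CompleteSpace A]
    (x : A) (hx : ‖1 - x‖ ≤ 1) (n : ℕ) (hn : 0 < n) :
    (binomPow x (1 / (n : ℝ))) ^ n = x := by
  have hn' : (1:ℝ) ≤ n := by exact_mod_cast hn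
  have hnpos : (0:ℝ) < n := by linarith
  have ht0 : 0 < 1 / (n:ℝ) := by positivity
  have ht1 : 1 / (n:ℝ) ≤ 1 := by rw [div_le_one hnpos]; exact hn'
  have key : ∀ m : ℕ, 1 ≤ m → m ≤ n →
      (binomPow x (1 / (n : ℝ))) ^ m = binomPow x ((m : ℝ) / n) := by
    intro m
    induction m with
    | zero => omega
    | succ m ih =>
      intro _ hm
      rcases Nat.eq_zero_or_pos m with hm0 | hm1
      · subst hm0; simp
      · have h := ih hm1 (by omega)
        have hs0 : 0 < (m:ℝ)/n := by positivity
        have hs1 : (m:ℝ)/n ≤ 1 := by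
          rw [div_le_one hnpos]; exact_mod_cast Nat.le_of_succ_le hm
        rw [pow_succ, h, binomPow_add x hx hs0 hs1 ht0 ht1]
        congr 1
        push_cast
        ring
  have h := key n hn le_rfl
  rw [h, div_self (ne_of_gt hnpos), binomPow_one']
end

section
/- Let A be a unital Banach algebra and x ∈ A an element whose numerical range lies in the closed right half plane (i.e., Re φ(x) ≥ 0 for every norm-one functional φ with φ(1) = 1). Then for every ε > 0, the element x + ε1 lies in C·{a : ‖1 − a‖ ≤ 1} where C = ‖x‖²/ε + ε. -/
set_option maxHeartbeats 1000000

lemma key_norm_one_sub_smul {A : Type*} [NormedRing A] [NormedAlgebra ℂ A] [NormOneClass A]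
    [CompleteSpace A] (x : A)
    (hacc : ∀ φ : StrongDual ℂ A, ‖φ‖ = 1 → φ 1 = 1 → 0 ≤ (φ x).re)
    (t : ℝ) (ht : 0 ≤ t) : ‖1 - t • x‖ ≤ 1 + t ^ 2 * ‖x‖ ^ 2 := by
  set u : A := 1 - t • x with hu_def
  by_cases hu : u = 0
  · rw [hu, norm_zero]; positivity
  obtain ⟨ψ, hψ1, hψu⟩ := exists_dual_vector ℂ u (norm_ne_zero_iff.2 hu)
  have hupos : (0:ℝ) < ‖u‖ := norm_pos_iff.2 hu
  set φ : StrongDual ℂ A :=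
    ((‖u‖ : ℂ))⁻¹ • (ψ.comp ((ContinuousLinearMap.mul ℂ A).flip u)) with hφ_def
  have hφ_apply : ∀ y : A, φ y = ((‖u‖⁻¹ : ℝ) : ℂ) * ψ (y * u) := by
    intro y
    simp [hφ_def, ContinuousLinearMap.mul_apply']
  have h1 : φ 1 = 1 := by
    rw [hφ_apply, one_mul, hψu]
    push_cast
    exact inv_mul_cancel₀ (by exact_mod_cast norm_ne_zero_iff.2 hu)
  have hφle : ‖φ‖ ≤ 1 := by
    apply ContinuousLinearMap.opNorm_le_bound _ zero_le_one
    intro y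
    rw [hφ_apply, norm_mul]
    calc ‖((‖u‖⁻¹ : ℝ) : ℂ)‖ * ‖ψ (y * u)‖ ≤ ‖u‖⁻¹ * (‖ψ‖ * ‖y * u‖) := by
          apply mul_le_mul _ (ψ.le_opNorm _) (norm_nonneg _) (by positivity)
          rw [Complex.norm_real, Real.norm_eq_abs, abs_of_nonneg (by positivity)]
      _ ≤ ‖u‖⁻¹ * (1 * (‖y‖ * ‖u‖)) := by
          apply mul_le_mul_of_nonneg_left _ (by positivity)
          exact mul_le_mul (le_of_eq hψ1) (norm_mul_le _ _) (norm_nonneg _) zero_le_one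
      _ = ‖u‖⁻¹ * ‖u‖ * ‖y‖ := by ring
      _ = 1 * ‖y‖ := by rw [inv_mul_cancel₀ (ne_of_gt hupos)]
  have hφnorm : ‖φ‖ = 1 := by
    refine le_antisymm hφle ?_
    have := φ.le_opNorm 1
    rw [h1, norm_one] at this
    simpa using this
  have h0 : 0 ≤ (φ x).re := hacc φ hφnorm h1
  have hre : (φ x).re = ‖u‖⁻¹ * (ψ (x * u)).re := by
    rw [hφ_apply, Complex.re_ofReal_mul]
  have hψxu : 0 ≤ (ψ (x * u)).re := by
    rw [hre] at h0
    exact (mul_nonneg_iff_of_pos_left (by positivity)).1 h0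
  -- x * u = x - t • (x * x)
  have hxu : x * u = x - t • (x * x) := by
    rw [hu_def, mul_sub, mul_one, mul_smul_comm]
  have hsplit : (ψ (x * u)).re = (ψ x).re - t * (ψ (x * x)).re := by
    rw [hxu, map_sub, ψ.map_smul_of_tower, Complex.sub_re, Complex.real_smul,
      Complex.re_ofReal_mul]
  have hxx : |(ψ (x * x)).re| ≤ ‖x‖ ^ 2 := by
    calc |(ψ (x * x)).re| ≤ ‖ψ (x * x)‖ := Complex.abs_re_le_norm _
      _ ≤ ‖ψ‖ * ‖x * x‖ := ψ.le_opNorm _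
      _ ≤ 1 * (‖x‖ * ‖x‖) := mul_le_mul (le_of_eq hψ1) (norm_mul_le _ _) (norm_nonneg _) zero_le_one
      _ = ‖x‖ ^ 2 := by ring
  have hψx : -(t * ‖x‖ ^ 2) ≤ (ψ x).re := by
    rw [hsplit] at hψxu
    nlinarith [abs_le.1 hxx]
  -- now conclude
  have hfin : ‖u‖ = (ψ u).re := by rw [hψu]; simp
  have hsplit2 : (ψ u).re = (ψ 1).re - t * (ψ x).re := by
    rw [hu_def, map_sub, ψ.map_smul_of_tower, Complex.sub_re, Complex.real_smul,
      Complex.re_ofReal_mul]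
  have hψ1le : (ψ 1).re ≤ 1 := by
    calc (ψ 1).re ≤ ‖ψ 1‖ := Complex.re_le_norm _
      _ ≤ ‖ψ‖ * ‖(1 : A)‖ := ψ.le_opNorm _
      _ = 1 := by rw [hψ1, norm_one, one_mul]
  rw [hfin, hsplit2]
  nlinarith [hψx]


/-- Let `A` be a unital Banach algebra and `x ∈ A` an element whose
numerical range lies in the closed right half plane (i.e. `Re φ(x) ≥ 0` for every state
`φ`).  Then for every `ε > 0` the element `x + ε·1` lies in `C · {a : ‖1 − a‖ ≤ 1}`,
where `C = ‖x‖²/ε + ε`. -/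
theorem accretive_add_eps_mem_smul_FSet
    {A : Type*} [NormedRing A] [NormedAlgebra ℂ A] [NormOneClass A] [CompleteSpace A]
    (x : A)
    (hacc : ∀ φ : StrongDual ℂ A, ‖φ‖ = 1 → φ 1 = 1 → 0 ≤ (φ x).re)
    (ε : ℝ) (hε : 0 < ε) :
    ∃ a : A, ‖1 - a‖ ≤ 1 ∧ x + ε • (1 : A) = (‖x‖ ^ 2 / ε + ε) • a := by
  set K : ℝ := ‖x‖ ^ 2 / ε with hK
  set C : ℝ := K + ε with hC
  have hKnn : 0 ≤ K := by positivity
  have hCpos : 0 < C := by positivity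
  refine ⟨C⁻¹ • (x + ε • 1), ?_, ?_⟩
  · -- norm bound
    have key : ‖K • (1 : A) - x‖ ≤ C := by
      by_cases hx : x = 0
      · simp [hx, hK, abs_of_nonneg hKnn]
        positivity
      · have hxpos : (0:ℝ) < ‖x‖ := norm_pos_iff.2 hx
        set t : ℝ := ε / ‖x‖ ^ 2 with htd
        have htpos : 0 < t := by positivity
        have hKt : K * t = 1 := by
          rw [hK, htd]; field_simp
        have hlem := key_norm_one_sub_smul x hacc t (le_of_lt htpos)
        have heq : K • (1 : A) - x = K • (1 - t • x) := by
          rw [smul_sub, smul_smul, hKt, one_smul]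
        rw [heq, norm_smul, Real.norm_eq_abs, abs_of_nonneg hKnn]
        calc K * ‖1 - t • x‖ ≤ K * (1 + t ^ 2 * ‖x‖ ^ 2) :=
              mul_le_mul_of_nonneg_left hlem hKnn
          _ = K + (K * t) * (t * ‖x‖ ^ 2) := by ring
          _ = K + ε := by rw [hKt, htd]; field_simp
    have heq2 : (1 : A) - C⁻¹ • (x + ε • 1) = C⁻¹ • (K • (1 : A) - x) := by
      rw [smul_sub, smul_smul]
      have : C⁻¹ * K = 1 - C⁻¹ * ε := by
        field_simp [hC]
        linarith
      rw [this, sub_smul, one_smul, smul_add]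
      abel_nf
      rw [smul_smul]
    rw [heq2, norm_smul, Real.norm_eq_abs, abs_of_nonneg (by positivity)]
    calc C⁻¹ * ‖K • (1 : A) - x‖ ≤ C⁻¹ * C :=
          mul_le_mul_of_nonneg_left key (by positivity)
      _ = 1 := inv_mul_cancel₀ (ne_of_gt hCpos)
  · rw [smul_smul, mul_inv_cancel₀ (ne_of_gt hCpos), one_smul]
end

section
/- Let A be a unital Banach algebra and x ∈ A accretive (numerical range in the closed right half plane). Then 1 + x is invertible and ‖1 − x(1+x)^{-1}‖ ≤ 1. -/
open NormedSpace

/-- Key norm estimate: if `x` is accretive and `y` is a two-sided inverse of `1 + x`,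
then `‖y‖ ≤ 1`. -/
lemma accretive_inv_norm_le {A : Type*} [NormedRing A] [NormedAlgebra ℂ A]
    [NormOneClass A] [CompleteSpace A] (x : A)
    (hacc : ∀ φ : StrongDual ℂ A, ‖φ‖ = 1 → φ 1 = 1 → 0 ≤ (φ x).re)
    (y : A) (h1 : (1 + x) * y = 1) (h2 : y * (1 + x) = 1) : ‖y‖ ≤ 1 := by
  by_cases hy : y = 0
  · simp [hy]
  obtain ⟨g, hg1, hg2⟩ := exists_dual_vector ℂ y (norm_ne_zero_iff.mpr hy)
  have hy' : (0:ℝ) < ‖y‖ := norm_pos_iff.mpr hy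
  set φ : StrongDual ℂ A :=
    ((‖y‖ : ℂ))⁻¹ • (g.comp (ContinuousLinearMap.mul ℂ A y)) with hφ
  have hφapp : ∀ a, φ a = (‖y‖ : ℂ)⁻¹ * g (y * a) := by
    intro a; simp [hφ, ContinuousLinearMap.smul_apply, ContinuousLinearMap.mul_apply']
  have hφ1 : φ 1 = 1 := by
    rw [hφapp, mul_one, hg2]
    exact inv_mul_cancel₀ (by exact_mod_cast hy'.ne')
  have hφle : ‖φ‖ ≤ 1 := by
    have hcomp : ‖g.comp (ContinuousLinearMap.mul ℂ A y)‖ ≤ ‖y‖ := by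
      refine le_trans (ContinuousLinearMap.opNorm_comp_le _ _) ?_
      have := ContinuousLinearMap.opNorm_mul_apply_le ℂ A y
      calc ‖g‖ * ‖ContinuousLinearMap.mul ℂ A y‖ ≤ 1 * ‖y‖ := by
            apply mul_le_mul (le_of_eq hg1) this (norm_nonneg _) zero_le_one
        _ = ‖y‖ := one_mul _
    calc ‖φ‖ ≤ ‖((‖y‖ : ℂ))⁻¹‖ * ‖g.comp (ContinuousLinearMap.mul ℂ A y)‖ := by
          exact _root_.norm_smul_le ((‖y‖ : ℂ))⁻¹ (g.comp (ContinuousLinearMap.mul ℂ A y) : A →L[ℂ] ℂ)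
      _ ≤ ‖((‖y‖ : ℂ))⁻¹‖ * ‖y‖ := by
          apply mul_le_mul_of_nonneg_left hcomp (norm_nonneg _)
      _ = 1 := by
          rw [norm_inv, Complex.norm_real, Real.norm_of_nonneg hy'.le]
          field_simp
  have hφnorm : ‖φ‖ = 1 := by
    refine le_antisymm hφle ?_
    have := φ.le_opNorm 1
    rw [hφ1, norm_one, norm_one, mul_one] at this
    exact this
  have h0 := hacc φ hφnorm hφ1
  -- compute φ x
  have hyx : y * x = 1 - y := by
    have : y * 1 + y * x = 1 := by rw [← mul_add]; exact h2
    rw [mul_one] at this; exact eq_sub_of_add_eq' this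
  have hφx : φ x = (‖y‖ : ℂ)⁻¹ * g 1 - 1 := by
    rw [hφapp, hyx, map_sub, hg2, mul_sub]
    congr 1
    exact inv_mul_cancel₀ (by exact_mod_cast hy'.ne')
  rw [hφx] at h0
  have hre : ((‖y‖ : ℂ)⁻¹ * g 1).re = ‖y‖⁻¹ * (g 1).re := by
    rw [← Complex.ofReal_inv, Complex.re_ofReal_mul]
  rw [Complex.sub_re, Complex.one_re, hre] at h0
  have hg1le : (g 1).re ≤ 1 := by
    have h := g.le_opNorm 1
    rw [hg1, norm_one, one_mul] at h
    calc (g 1).re ≤ |(g 1).re| := le_abs_self _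
      _ ≤ ‖g 1‖ := Complex.abs_re_le_norm _
      _ ≤ 1 := h
  have h3 : 1 ≤ ‖y‖⁻¹ * (g 1).re := by linarith
  have h4 : ‖y‖ * (‖y‖⁻¹ * (g 1).re) = (g 1).re := by field_simp
  nlinarith

/-- Accretivity is preserved by nonnegative real scaling. -/
lemma accretive_smul {A : Type*} [NormedRing A] [NormedAlgebra ℂ A]
    [NormOneClass A] [CompleteSpace A] (x : A)
    (hacc : ∀ φ : StrongDual ℂ A, ‖φ‖ = 1 → φ 1 = 1 → 0 ≤ (φ x).re)
    (t : ℝ) (ht : 0 ≤ t) :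
    ∀ φ : StrongDual ℂ A, ‖φ‖ = 1 → φ 1 = 1 → 0 ≤ (φ ((t : ℂ) • x)).re := by
  intro φ hn h1
  rw [map_smul, smul_eq_mul, Complex.re_ofReal_mul]
  exact mul_nonneg ht (hacc φ hn h1)

/-- Perturbation step: invertibility of `1 + t•x` propagates to nearby `s`. -/
lemma accretive_step {A : Type*} [NormedRing A] [NormedAlgebra ℂ A]
    [NormOneClass A] [CompleteSpace A] (x : A)
    (hacc : ∀ φ : StrongDual ℂ A, ‖φ‖ = 1 → φ 1 = 1 → 0 ≤ (φ x).re)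
    (t s : ℝ) (ht : 0 ≤ t) (hd : |s - t| * ‖x‖ < 1)
    (hu : IsUnit (1 + (t : ℂ) • x)) : IsUnit (1 + (s : ℂ) • x) := by
  obtain ⟨u, hu⟩ := hu
  set y : A := ↑u⁻¹ with hy
  have h1 : (1 + (t : ℂ) • x) * y = 1 := by rw [hy, ← hu]; exact u.mul_inv
  have h2 : y * (1 + (t : ℂ) • x) = 1 := by rw [hy, ← hu]; exact u.inv_mul
  have hyle : ‖y‖ ≤ 1 :=
    accretive_inv_norm_le ((t : ℂ) • x) (accretive_smul x hacc t ht) y h1 h2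
  set z : A := ((s - t : ℝ) : ℂ) • (y * x) with hz
  have hzlt : ‖z‖ < 1 := by
    calc ‖z‖ ≤ ‖((s - t : ℝ) : ℂ)‖ * (‖y‖ * ‖x‖) := by
          refine le_trans (_root_.norm_smul_le _ _) ?_
          exact mul_le_mul_of_nonneg_left (norm_mul_le _ _) (norm_nonneg _)
      _ ≤ |s - t| * (1 * ‖x‖) := by
          rw [Complex.norm_real, Real.norm_eq_abs]
          refine mul_le_mul_of_nonneg_left ?_ (abs_nonneg _)
          exact mul_le_mul_of_nonneg_right hyle (norm_nonneg _)
      _ = |s - t| * ‖x‖ := by rw [one_mul]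
      _ < 1 := hd
  have huz : IsUnit (1 + z) := by
    have := (Units.oneSub (-z) (by rwa [norm_neg])).isUnit
    rwa [Units.val_oneSub, sub_neg_eq_add] at this
  have key : (1 + (t : ℂ) • x) * (1 + z) = 1 + (s : ℂ) • x := by
    have hx : (1 + (t : ℂ) • x) * (y * x) = x := by rw [← mul_assoc, h1, one_mul]
    rw [mul_add, mul_one, hz, mul_smul_comm, hx, add_assoc, ← add_smul]
    norm_num
  rw [← key]
  exact (hu ▸ u.isUnit).mul huz

/-- Let `A` be a unital Banach algebra and `x ∈ A` accretive (numerical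
range in the closed right half plane).  Then `1 + x` is invertible and
`‖1 − x(1+x)⁻¹‖ ≤ 1`. -/
theorem accretive_one_add_invertible_and_Ftransform_mem_FSet
    {A : Type*} [NormedRing A] [NormedAlgebra ℂ A] [NormOneClass A] [CompleteSpace A]
    (x : A)
    (hacc : ∀ φ : StrongDual ℂ A, ‖φ‖ = 1 → φ 1 = 1 → 0 ≤ (φ x).re) :
    ∃ y : A, (1 + x) * y = 1 ∧ y * (1 + x) = 1 ∧ ‖1 - x * y‖ ≤ 1 := by
  have hxpos : (0:ℝ) < ‖x‖ + 1 := by positivity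
  have main : ∀ n : ℕ, ∀ t : ℝ, 0 ≤ t → t * (‖x‖ + 1) ≤ n → IsUnit (1 + (t : ℂ) • x) := by
    intro n
    induction n with
    | zero =>
        intro t ht hle
        have : t = 0 := by push_cast at hle; nlinarith
        subst this
        simp
    | succ n ih =>
        intro t ht hle
        set t' : ℝ := max 0 (t - 1 / (‖x‖ + 1)) with ht'
        have ht'0 : 0 ≤ t' := le_max_left _ _
        have ht'le : t' * (‖x‖ + 1) ≤ n := by
          rcases max_cases 0 (t - 1 / (‖x‖ + 1)) with ⟨h, _⟩ | ⟨h, _⟩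
          · rw [ht', h, zero_mul]; positivity
          · rw [ht', h, sub_mul, div_mul_cancel₀ _ hxpos.ne']
            push_cast at hle ⊢; linarith
        have hdist : |t - t'| * ‖x‖ < 1 := by
          have h1 : |t - t'| ≤ 1 / (‖x‖ + 1) := by
            rcases max_cases 0 (t - 1 / (‖x‖ + 1)) with ⟨h, h'⟩ | ⟨h, _⟩
            · rw [ht', h, sub_zero, abs_of_nonneg ht]
              have : 0 < 1 / (‖x‖ + 1) := by positivity
              linarith
            · rw [ht', h, sub_sub_cancel, abs_of_nonneg (by positivity)]
          calc |t - t'| * ‖x‖ ≤ (1 / (‖x‖ + 1)) * ‖x‖ :=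
                mul_le_mul_of_nonneg_right h1 (norm_nonneg _)
            _ < 1 := by rw [div_mul_eq_mul_div, one_mul, div_lt_one hxpos]; linarith
        exact accretive_step x hacc t' t ht'0 hdist (ih t' ht'0 ht'le)
  have h1u : IsUnit (1 + x) := by
    have := main (⌈‖x‖ + 1⌉₊) 1 zero_le_one
      (by rw [one_mul]; exact Nat.le_ceil _)
    simpa using this
  obtain ⟨u, hu⟩ := h1u
  refine ⟨↑u⁻¹, by rw [← hu]; exact u.mul_inv, by rw [← hu]; exact u.inv_mul, ?_⟩
  have h1 : (1 + x) * ↑u⁻¹ = 1 := by rw [← hu]; exact u.mul_inv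
  have h2 : (↑u⁻¹ : A) * (1 + x) = 1 := by rw [← hu]; exact u.inv_mul
  have h3 : (↑u⁻¹ : A) + x * ↑u⁻¹ = 1 := by
    calc (↑u⁻¹ : A) + x * ↑u⁻¹ = (1 + x) * ↑u⁻¹ := by rw [add_mul, one_mul]
      _ = 1 := h1
  have key : 1 - x * ↑u⁻¹ = (↑u⁻¹ : A) := (eq_sub_of_add_eq h3).symm
  rw [key]
  exact accretive_inv_norm_le x hacc _ h1 h2
end

section
/- Let A be a unital Banach algebra and x ∈ A accretive. Then the closed subalgebra generated by x equals the closed subalgebra generated by F(x) = x(1+x)^{-1}. Consequently the closure of xA equals the closure of F(x)A. -/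
open ContinuousLinearMap in
lemma accretive_mul_lower_bound {A : Type*} [NormedRing A] [NormedAlgebra ℂ A]
    [NormOneClass A] (x : A)
    (hacc : ∀ φ : StrongDual ℂ A, ‖φ‖ = 1 → φ 1 = 1 → 0 ≤ (φ x).re)
    (c : ℂ) (hc : 0 ≤ c.re) (a : A) :
    c.re * ‖a‖ ≤ ‖(c • 1 + x) * a‖ := by
  rcases eq_or_ne a 0 with rfl | ha
  · simp
  have hna : (0:ℝ) < ‖a‖ := norm_pos_iff.mpr ha
  obtain ⟨φ, hφ1, hφa⟩ := exists_dual_vector ℂ a (norm_ne_zero_iff.mpr ha)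
  set ψ : StrongDual ℂ A :=
    (‖a‖ : ℂ)⁻¹ • (φ.comp ((ContinuousLinearMap.mul ℂ A).flip a)) with hψdef
  have hψ_apply : ∀ z : A, ψ z = (‖a‖ : ℂ)⁻¹ * φ (z * a) := fun z => rfl
  have hψ1 : ψ 1 = 1 := by
    rw [hψ_apply, one_mul, hφa]
    exact inv_mul_cancel₀ (by exact_mod_cast hna.ne')
  have hψnorm : ‖ψ‖ = 1 := by
    refine le_antisymm ?_ ?_
    · refine ContinuousLinearMap.opNorm_le_bound _ zero_le_one (fun z => ?_)
      rw [hψ_apply, norm_mul, norm_inv, Complex.norm_real, norm_norm]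
      calc ‖a‖⁻¹ * ‖φ (z * a)‖ ≤ ‖a‖⁻¹ * (‖φ‖ * ‖z * a‖) := by
            gcongr; exact φ.le_opNorm _
        _ ≤ ‖a‖⁻¹ * (1 * (‖z‖ * ‖a‖)) := by
            gcongr
            · exact hφ1.le
            · exact norm_mul_le _ _
        _ = ‖z‖ := by
            rw [one_mul, mul_comm ‖z‖ ‖a‖, ← mul_assoc, inv_mul_cancel₀ hna.ne', one_mul]
        _ ≤ 1 * ‖z‖ := by rw [one_mul]
    · have := ψ.le_opNorm 1
      rw [hψ1, norm_one, norm_one, mul_one] at this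
      exact this
  have hre : 0 ≤ (ψ x).re := hacc ψ hψnorm hψ1
  have hkey : φ ((c • 1 + x) * a) = (‖a‖ : ℂ) * (c + ψ x) := by
    rw [add_mul, smul_mul_assoc, one_mul, map_add, map_smul, hφa, hψ_apply]
    have h0 : (‖a‖:ℂ) ≠ 0 := by exact_mod_cast hna.ne'
    field_simp
    rw [smul_eq_mul, mul_comm c]
    rfl
  calc c.re * ‖a‖ ≤ (c.re + (ψ x).re) * ‖a‖ := by nlinarith
    _ = (c + ψ x).re * ‖a‖ := by rw [Complex.add_re]
    _ ≤ ‖c + ψ x‖ * ‖a‖ := by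
        gcongr
        exact (Complex.re_le_norm _).trans (le_of_eq rfl)
    _ = ‖(‖a‖ : ℂ) * (c + ψ x)‖ := by
        rw [norm_mul, Complex.norm_real, norm_norm]; ring
    _ = ‖φ ((c • 1 + x) * a)‖ := by rw [hkey]
    _ ≤ ‖φ‖ * ‖(c • 1 + x) * a‖ := φ.le_opNorm _
    _ = ‖(c • 1 + x) * a‖ := by rw [hφ1, one_mul]


lemma accretive_isUnit {A : Type*} [NormedRing A] [NormedAlgebra ℂ A]
    [NormOneClass A] [CompleteSpace A] (x : A)
    (hacc : ∀ φ : StrongDual ℂ A, ‖φ‖ = 1 → φ 1 = 1 → 0 ≤ (φ x).re)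
    (c : ℂ) (hc : 0 < c.re) : IsUnit (c • (1:A) + x) := by
  set σ : ℝ := c.re with hσ
  -- descent step
  have step : ∀ (d : ℂ) (δ : ℝ), σ ≤ d.re → 0 ≤ δ → δ ≤ σ / 2 →
      IsUnit (d • (1:A) + x) → IsUnit ((d - δ) • (1:A) + x) := by
    intro d δ hd hδ0 hδ hu
    obtain ⟨u, hu⟩ := hu
    have hdpos : (0:ℝ) < d.re := lt_of_lt_of_le hc hd
    have hinv : ‖((u⁻¹ : Aˣ) : A)‖ ≤ 1 / d.re := by
      have h1 := accretive_mul_lower_bound x hacc d hdpos.le ((u⁻¹ : Aˣ) : A)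
      rw [← hu, u.mul_inv, norm_one] at h1
      rw [le_div_iff₀ hdpos]
      linarith [h1]
    have hvnorm : ‖(δ : ℂ) • ((u⁻¹ : Aˣ) : A)‖ < 1 := by
      rw [norm_smul, Complex.norm_real, Real.norm_eq_abs, abs_of_nonneg hδ0]
      calc δ * ‖((u⁻¹ : Aˣ) : A)‖ ≤ (σ/2) * (1/d.re) := by
            apply mul_le_mul hδ hinv (norm_nonneg _) (by linarith)
        _ ≤ (σ/2) * (1/σ) := by
            apply mul_le_mul_of_nonneg_left (one_div_le_one_div_of_le hc hd) (by linarith)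
        _ = 1/2 := by
            field_simp
        _ < 1 := by norm_num
    refine ⟨u * Units.oneSub _ hvnorm, ?_⟩
    rw [Units.val_mul, Units.val_oneSub, mul_sub, mul_one, mul_smul_comm,
      u.mul_inv, hu, sub_smul]
    abel
  -- base point far to the right
  set m : ℝ := ‖x‖ + 1 with hm
  have hm0 : (0:ℝ) < m := by positivity
  have base : IsUnit ((c + m) • (1:A) + x) := by
    have hsre : 0 < (c + (m:ℂ)).re := by
      simp only [Complex.add_re, Complex.ofReal_re]
      linarith
    have hs0 : (c + (m:ℂ)) ≠ 0 := fun h => by simp [h] at hsre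
    have habs : ‖x‖ < ‖c + (m:ℂ)‖ := by
      calc ‖x‖ < m := by simp [hm]
        _ ≤ (c + (m:ℂ)).re := by
            simp only [Complex.add_re, Complex.ofReal_re]; linarith [hc]
        _ ≤ ‖c + (m:ℂ)‖ := Complex.re_le_norm _
    have hvn : ‖-((c + (m:ℂ))⁻¹ • x)‖ < 1 := by
      rw [norm_neg, norm_smul, norm_inv]
      rw [inv_mul_lt_iff₀ (lt_of_le_of_lt (norm_nonneg x) habs), mul_one]
      exact habs
    set u₀ := Units.oneSub _ hvn with hu₀
    have hval : ((c + (m:ℂ)) • (u₀ : A)) = (c + m) • (1:A) + x := by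
      rw [hu₀, Units.val_oneSub, sub_neg_eq_add, smul_add, smul_smul,
        mul_inv_cancel₀ hs0, one_smul]
    refine ⟨⟨(c + (m:ℂ)) • (u₀ : A), (c + (m:ℂ))⁻¹ • ((u₀⁻¹ : Aˣ) : A), ?_, ?_⟩, hval⟩
    · rw [smul_mul_smul_comm, mul_inv_cancel₀ hs0, u₀.mul_inv, one_smul]
    · rw [smul_mul_smul_comm, inv_mul_cancel₀ hs0, u₀.inv_mul, one_smul]
  -- descend in n steps of size m/n
  obtain ⟨n, hn⟩ := exists_nat_ge (2 * m / σ)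
  have hσ2 : 0 < σ / 2 := by linarith
  have hn0 : (0:ℝ) < n := lt_of_lt_of_le (by positivity) hn
  set δ : ℝ := m / n with hδdef
  have hδ0 : 0 ≤ δ := by positivity
  have hmn : (n:ℝ) * δ = m := by
    rw [hδdef, mul_div_cancel₀ _ hn0.ne']
  have hδle : δ ≤ σ / 2 := by
    rw [hδdef, div_le_div_iff₀ hn0 (by norm_num : (0:ℝ) < 2)]
    have h2 : 2 * m ≤ (n:ℝ) * σ := by
      have := (div_le_iff₀ hc).mp hn
      linarith
    linarith
  have claim : ∀ k : ℕ, k ≤ n → IsUnit ((c + ((m - (k:ℝ) * δ : ℝ) : ℂ)) • (1:A) + x) := by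
    intro k
    induction k with
    | zero => intro _; simpa using base
    | succ k ih =>
      intro hk1
      have hk : k ≤ n := Nat.le_of_succ_le hk1
      have hrem : 0 ≤ m - ((k:ℝ)+1) * δ := by
        have h1 : ((k:ℝ)+1) ≤ n := by exact_mod_cast hk1
        have h2 : ((k:ℝ)+1) * δ ≤ (n:ℝ) * δ := by
          apply mul_le_mul_of_nonneg_right h1 hδ0
        linarith
      have hre : σ ≤ (c + ((m - (k:ℝ) * δ : ℝ) : ℂ)).re := by
        simp only [Complex.add_re, Complex.ofReal_re, hσ]
        have : (0:ℝ) ≤ m - (k:ℝ) * δ := by nlinarith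
        linarith
      have h3 := step _ δ hre hδ0 hδle (ih hk)
      have heq : (c + ((m - (k:ℝ) * δ : ℝ) : ℂ)) - (δ:ℂ) = c + ((m - ((k+1:ℕ):ℝ) * δ : ℝ) : ℂ) := by
        push_cast; ring
      rwa [heq] at h3
  have hfin := claim n le_rfl
  have hnδ : m - (n:ℝ) * δ = 0 := by rw [hmn]; ring
  rw [hnδ] at hfin
  simpa using hfin


lemma unit_inv_comm {A : Type*} [Monoid A] (u : Aˣ) (a : A)
    (h : a * u = ↑u * a) : a * ↑u⁻¹ = ↑u⁻¹ * a := by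
  have h2 : (↑u⁻¹ : A) * (a * ↑u) * ↑u⁻¹ = ↑u⁻¹ * (↑u * a) * ↑u⁻¹ := by rw [h]
  calc a * ↑u⁻¹ = (↑u⁻¹ * ↑u) * a * ↑u⁻¹ := by rw [u.inv_mul, one_mul]
    _ = ↑u⁻¹ * (↑u * a) * ↑u⁻¹ := by simp only [mul_assoc]
    _ = ↑u⁻¹ * (a * ↑u) * ↑u⁻¹ := by rw [h]
    _ = ↑u⁻¹ * a * (↑u * ↑u⁻¹) := by simp only [mul_assoc]
    _ = ↑u⁻¹ * a := by rw [u.mul_inv, mul_one]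

open Filter Topology in
lemma xy_mem_closure_adjoin {A : Type*} [NormedRing A] [NormedAlgebra ℂ A]
    [NormOneClass A] [CompleteSpace A] (x y : A)
    (hacc : ∀ φ : StrongDual ℂ A, ‖φ‖ = 1 → φ 1 = 1 → 0 ≤ (φ x).re)
    (hy : (1 + x) * y = 1) (hy' : y * (1 + x) = 1) :
    x * y ∈ closure ((NonUnitalAlgebra.adjoin ℂ {x} : NonUnitalSubalgebra ℂ A) : Set A) := by
  have hSclosed : IsClosed ((NonUnitalAlgebra.elemental ℂ x : NonUnitalSubalgebra ℂ A) : Set A) :=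
    NonUnitalAlgebra.elemental.isClosed ℂ x
  show x * y ∈ ((NonUnitalAlgebra.elemental ℂ x : NonUnitalSubalgebra ℂ A) : Set A)
  obtain ⟨N, hN⟩ := exists_nat_gt ‖x‖
  have hN0 : (0:ℝ) < N := lt_of_le_of_lt (norm_nonneg x) hN
  have hNC : ((N:ℂ)) ≠ 0 := by exact_mod_cast hN0.ne'
  have claim : ∀ k : ℕ, k ≤ N → ∃ z : A,
      (1 + ((k:ℂ)/(N:ℂ)) • x) * z = 1 ∧ z * (1 + ((k:ℂ)/(N:ℂ)) • x) = 1 ∧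
      ‖z‖ ≤ 1 ∧ x * z ∈ NonUnitalAlgebra.elemental ℂ x ∧ z * x = x * z := by
    intro k
    induction k with
    | zero =>
      intro _
      refine ⟨1, by simp, by simp, by simp, ?_, by simp⟩
      rw [mul_one]
      exact NonUnitalAlgebra.elemental.self_mem ℂ x
    | succ k ih =>
      intro hk1
      obtain ⟨z, h1, h2, h3, h4, h5⟩ := ih (Nat.le_of_succ_le hk1)
      obtain ⟨w, hw⟩ : ∃ w : A, w = x * z := ⟨_, rfl⟩
      have h4w : w ∈ NonUnitalAlgebra.elemental ℂ x := hw ▸ h4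
      obtain ⟨v, hv⟩ : ∃ v : A, v = -(((N:ℂ))⁻¹ • w) := ⟨_, rfl⟩
      have hvnorm : ‖v‖ < 1 := by
        rw [hv, norm_neg, norm_smul, norm_inv]
        have hNnorm : ‖((N:ℂ))‖ = (N:ℝ) := by simp
        rw [hNnorm, inv_mul_lt_iff₀ hN0, mul_one]
        have hwn : ‖w‖ ≤ ‖x‖ := by
          calc ‖w‖ = ‖x * z‖ := by rw [hw]
            _ ≤ ‖x‖ * ‖z‖ := norm_mul_le _ _
            _ ≤ ‖x‖ * 1 := by gcongr
            _ = ‖x‖ := mul_one _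
        exact lt_of_le_of_lt hwn hN
      let u : Aˣ := Units.oneSub v hvnorm
      have huval : (u : A) = 1 + ((N:ℂ))⁻¹ • w := by
        have h0 : (u : A) = 1 - v := rfl
        rw [h0, hv, sub_neg_eq_add]
      have huinv : ((u⁻¹ : Aˣ) : A) = ∑' n : ℕ, v ^ n := rfl
      have hxw : x * w = w * x := by rw [hw, mul_assoc, h5]
      have hzw : z * w = w * z := by rw [hw, ← mul_assoc, h5]
      have hxu : x * u = ↑u * x := by
        rw [huval, mul_add, add_mul, mul_one, one_mul, mul_smul_comm, smul_mul_assoc, hxw]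
      have hzu : z * u = ↑u * z := by
        rw [huval, mul_add, add_mul, mul_one, one_mul, mul_smul_comm, smul_mul_assoc, hzw]
      have hwu : w * u = ↑u * w := by
        rw [huval, mul_add, add_mul, mul_one, one_mul, mul_smul_comm, smul_mul_assoc]
      have hxui : x * ↑u⁻¹ = ↑u⁻¹ * x := unit_inv_comm u x hxu
      have hzui : z * ↑u⁻¹ = ↑u⁻¹ * z := unit_inv_comm u z hzu
      have hwui : w * ↑u⁻¹ = ↑u⁻¹ * w := unit_inv_comm u w hwu
      obtain ⟨z', hz'⟩ : ∃ z' : A, z' = ↑u⁻¹ * z := ⟨_, rfl⟩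
      have hsucc : ((((k+1:ℕ)):ℂ)/(N:ℂ)) • x = ((k:ℂ)/(N:ℂ)) • x + ((N:ℂ))⁻¹ • x := by
        rw [← add_smul]
        congr 1
        push_cast
        field_simp
      have hfactor_mul : (1 + (((k+1:ℕ):ℂ)/(N:ℂ)) • x) * z = ↑u := by
        rw [hsucc, ← add_assoc, add_mul, h1, smul_mul_assoc, ← hw, huval]
      have hcomm1 : (1 + (((k+1:ℕ):ℂ)/(N:ℂ)) • x) * ↑u⁻¹
          = ↑u⁻¹ * (1 + (((k+1:ℕ):ℂ)/(N:ℂ)) • x) := by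
        rw [add_mul, mul_add, one_mul, mul_one, smul_mul_assoc, mul_smul_comm, hxui]
      have hleft : (1 + (((k+1:ℕ):ℂ)/(N:ℂ)) • x) * z' = 1 := by
        rw [hz', ← mul_assoc, hcomm1, mul_assoc, hfactor_mul, u.inv_mul]
      have hright : z' * (1 + (((k+1:ℕ):ℂ)/(N:ℂ)) • x) = 1 := by
        have hzcomm : z * (1 + (((k+1:ℕ):ℂ)/(N:ℂ)) • x)
            = (1 + (((k+1:ℕ):ℂ)/(N:ℂ)) • x) * z := by
          rw [add_mul, mul_add, one_mul, mul_one, smul_mul_assoc, mul_smul_comm, h5]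
        rw [hz', mul_assoc, hzcomm, ← mul_assoc, ← hcomm1, mul_assoc, ← hz', hleft]
      -- norm bound
      have hnorm : ‖z'‖ ≤ 1 := by
        have hkpos : (0:ℝ) < (k:ℝ) + 1 := by positivity
        have ht0 : ((((k+1:ℕ)):ℂ)/(N:ℂ)) ≠ 0 := by
          apply div_ne_zero _ hNC
          exact_mod_cast (Nat.succ_ne_zero k)
        have htinv : ((((k+1:ℕ)):ℂ)/(N:ℂ))⁻¹ = (((N:ℝ)/((k:ℝ)+1) : ℝ) : ℂ) := by
          rw [inv_div]
          push_cast
          norm_num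
        have hpos : 0 ≤ (((((k+1:ℕ)):ℂ)/(N:ℂ))⁻¹).re := by
          rw [htinv, Complex.ofReal_re]
          positivity
        have habs : ‖(((k+1:ℕ)):ℂ)/(N:ℂ)‖ = ((k:ℝ)+1)/(N:ℝ) := by
          rw [norm_div, Complex.norm_natCast, Complex.norm_natCast]
          push_cast
          ring
        have hsmul : ((((k+1:ℕ)):ℂ)/(N:ℂ)) • ((((((k+1:ℕ)):ℂ)/(N:ℂ))⁻¹ • (1:A)) + x)
            = 1 + ((((k+1:ℕ)):ℂ)/(N:ℂ)) • x := by
          rw [smul_add, smul_smul, mul_inv_cancel₀ ht0, one_smul]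
        have hb := accretive_mul_lower_bound x hacc ((((k+1:ℕ)):ℂ)/(N:ℂ))⁻¹ hpos z'
        calc ‖z'‖ = (‖(((k+1:ℕ)):ℂ)/(N:ℂ)‖ * (((((k+1:ℕ)):ℂ)/(N:ℂ))⁻¹).re) * ‖z'‖ := by
              rw [habs, htinv, Complex.ofReal_re]
              field_simp
          _ = ‖(((k+1:ℕ)):ℂ)/(N:ℂ)‖ * ((((((k+1:ℕ)):ℂ)/(N:ℂ))⁻¹).re * ‖z'‖) := by ring
          _ ≤ ‖(((k+1:ℕ)):ℂ)/(N:ℂ)‖ * ‖(((((k+1:ℕ)):ℂ)/(N:ℂ))⁻¹ • 1 + x) * z'‖ := by gcongr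
          _ = ‖(((((k+1:ℕ)):ℂ)/(N:ℂ)) • ((((((k+1:ℕ)):ℂ)/(N:ℂ))⁻¹ • (1:A)) + x)) * z'‖ := by
              rw [smul_mul_assoc, norm_smul]
          _ = ‖(1 + ((((k+1:ℕ)):ℂ)/(N:ℂ)) • x) * z'‖ := by rw [hsmul]
          _ = 1 := by rw [hleft, norm_one]
      -- membership
      have hvmem : v ∈ NonUnitalAlgebra.elemental ℂ x := by
        rw [hv]
        exact neg_mem (SMulMemClass.smul_mem _ h4w)
      have hterm : ∀ n : ℕ, w * v ^ n ∈ NonUnitalAlgebra.elemental ℂ x := by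
        intro n
        induction n with
        | zero => simpa using h4w
        | succ n ihn =>
          rw [pow_succ, ← mul_assoc]
          exact mul_mem ihn hvmem
      have hsum : Summable (fun n : ℕ => v ^ n) := summable_geometric_of_norm_lt_one hvnorm
      have hxz' : x * z' = ∑' n : ℕ, w * v ^ n := by
        rw [hsum.tsum_mul_left w, ← huinv, hz', ← mul_assoc, hxui, mul_assoc, ← hw, ← hwui]
      have hmem : x * z' ∈ NonUnitalAlgebra.elemental ℂ x := by
        rw [hxz']
        have hsum2 : Summable (fun n : ℕ => w * v ^ n) := hsum.mul_left w
        refine hSclosed.mem_of_tendsto hsum2.hasSum.tendsto_sum_nat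
          (Filter.Eventually.of_forall fun n => ?_)
        exact sum_mem (fun i _ => hterm i)
      have hz'x : z' * x = x * z' := by
        rw [hz', mul_assoc, h5, ← mul_assoc, ← hxui, mul_assoc]
      exact ⟨z', hleft, hright, hnorm, hmem, hz'x⟩
  obtain ⟨z, h1, h2, _, h4, _⟩ := claim N le_rfl
  rw [div_self hNC, one_smul] at h1 h2
  have hzy : z = y := by
    calc z = z * ((1 + x) * y) := by rw [hy, mul_one]
      _ = (z * (1 + x)) * y := by rw [mul_assoc]
      _ = y := by rw [h2, one_mul]
  rw [← hzy]
  exact h4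


open scoped ENNReal NNReal in
open Filter Topology in
/-- Let `A` be a unital Banach algebra and `x ∈ A` accretive, with
`y = (1+x)⁻¹`.  Then the closed subalgebra generated by `x` equals the closed subalgebra
generated by `F(x) = x(1+x)⁻¹ = x * y`.  Consequently the closure of `xA` equals the
closure of `F(x)A`. -/
theorem closure_adjoin_eq_closure_adjoin_Ftransform
    {A : Type*} [NormedRing A] [NormedAlgebra ℂ A] [NormOneClass A] [CompleteSpace A]
    (x y : A)
    (hacc : ∀ φ : StrongDual ℂ A, ‖φ‖ = 1 → φ 1 = 1 → 0 ≤ (φ x).re)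
    (hy : (1 + x) * y = 1) (hy' : y * (1 + x) = 1) :
    closure ((NonUnitalAlgebra.adjoin ℂ {x} : NonUnitalSubalgebra ℂ A) : Set A) =
      closure ((NonUnitalAlgebra.adjoin ℂ {x * y} : NonUnitalSubalgebra ℂ A) : Set A) ∧
    closure {w : A | ∃ a : A, w = x * a} = closure {w : A | ∃ a : A, w = (x * y) * a} := by
  haveI : Nontrivial A := by
    refine nontrivial_of_ne 1 0 (fun h => ?_)
    have h1 : ‖(1:A)‖ = 1 := norm_one
    rw [h, norm_zero] at h1
    exact one_ne_zero h1.symm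
  -- basic algebra
  have hyx : y * x = x * y := by
    have hx1 : x * ((⟨1 + x, y, hy, hy'⟩ : Aˣ) : A) = ((⟨1 + x, y, hy, hy'⟩ : Aˣ) : A) * x := by
      show x * (1 + x) = (1 + x) * x
      rw [mul_add, add_mul, mul_one, one_mul]
    have := unit_inv_comm (⟨1 + x, y, hy, hy'⟩ : Aˣ) x hx1
    exact this.symm
  have h1my : (1:A) - x * y = y := by
    rw [← hy, add_mul, one_mul]
    abel
  have hsub : x - x * y = x * (x * y) := by
    have h' : x * ((1:A) - x * y) = x * y := by rw [h1my]
    rw [mul_sub, mul_one] at h'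
    have h2 := congrArg (fun t => x - t) h'
    simp only [sub_sub_cancel] at h2
    exact h2.symm
  have hFxcomm : (x * y) * x = x * (x * y) := by
    rw [mul_assoc, hyx]
  -- every ν with ‖ν‖ ≥ 1 is not in the spectrum of x * y
  have hUnit : ∀ ν : ℂ, 1 ≤ ‖ν‖ → IsUnit (ν • (1:A) - x * y) := by
    intro ν hν
    by_cases hν1 : ν = 1
    · subst hν1
      rw [one_smul]
      rw [h1my]
      exact ⟨⟨y, 1 + x, hy', hy⟩, rfl⟩
    · have hν1' : ν - 1 ≠ 0 := sub_ne_zero.mpr hν1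
      have hnormSq1 : 1 ≤ Complex.normSq ν := by
        have h2 : ‖ν‖^2 = Complex.normSq ν := by
          rw [Complex.sq_norm]
        nlinarith [hν]
      have hgt : ν.re < Complex.normSq ν := by
        by_contra hle
        push_neg at hle
        have ha1 : 1 ≤ ν.re := le_trans hnormSq1 hle
        have hsq : ν.re ^ 2 + ν.im ^ 2 = Complex.normSq ν := by
          rw [Complex.normSq_apply]; ring
        have hale : ν.re ≤ 1 := by nlinarith
        have hre1 : ν.re = 1 := le_antisymm hale ha1
        have him0 : ν.im = 0 := by nlinarith
        exact hν1 (Complex.ext hre1 him0)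
      have hc : 0 < (ν / (ν - 1)).re := by
        rw [Complex.div_re]
        rw [← add_div]
        apply div_pos
        · have : ν.re * (ν - 1).re + ν.im * (ν - 1).im = Complex.normSq ν - ν.re := by
            simp [Complex.sub_re, Complex.sub_im, Complex.normSq_apply]
            ring
          rw [this]
          linarith
        · exact Complex.normSq_pos.mpr hν1'
      obtain ⟨u, hu⟩ := accretive_isUnit x hacc (ν / (ν - 1)) hc
      have hfact : ν • (1:A) - x * y = ((ν - 1) • ((ν / (ν - 1)) • (1:A) + x)) * y := by
        have hcancel : (ν - 1) * (ν / (ν - 1)) = ν := by field_simp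
        rw [smul_add, smul_smul, hcancel, add_mul, smul_mul_assoc, smul_mul_assoc, one_mul]
        have hone : (1:A) = y + x * y := sub_eq_iff_eq_add.mp h1my
        calc ν • (1:A) - x * y = ν • (y + x * y) - x * y := by rw [← hone]
          _ = ν • y + (ν - 1) • (x * y) := by
              rw [smul_add, sub_smul, one_smul]; abel
      have hyUnit : IsUnit y := ⟨⟨y, 1 + x, hy', hy⟩, rfl⟩
      have hva : ((ν - 1) • ((u:A))) * ((ν - 1)⁻¹ • ((u⁻¹ : Aˣ) : A)) = 1 := by
        rw [smul_mul_smul_comm, mul_inv_cancel₀ hν1', u.mul_inv, one_smul]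
      have hvb : ((ν - 1)⁻¹ • ((u⁻¹ : Aˣ) : A)) * ((ν - 1) • ((u:A))) = 1 := by
        rw [smul_mul_smul_comm, inv_mul_cancel₀ hν1', u.inv_mul, one_smul]
      have hsmulUnit : IsUnit ((ν - 1) • ((ν / (ν - 1)) • (1:A) + x)) := by
        refine ⟨⟨(ν - 1) • ((u:A)), (ν - 1)⁻¹ • ((u⁻¹ : Aˣ) : A), hva, hvb⟩, ?_⟩
        show (ν - 1) • ((u:A)) = _
        rw [hu]
      rw [hfact]
      exact hsmulUnit.mul hyUnit
  -- spectral radius of x * y is < 1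
  have hspecF : ∀ z ∈ spectrum ℂ (x * y), ‖z‖₊ < 1 := by
    intro z hz
    by_contra hge
    push_neg at hge
    have h1z : 1 ≤ ‖z‖ := by exact_mod_cast hge
    rw [spectrum.mem_iff] at hz
    exact hz (by
      rw [Algebra.algebraMap_eq_smul_one]
      exact hUnit z h1z)
  have hrad : spectralRadius ℂ (x * y) < 1 := by
    have := spectrum.spectralRadius_lt_of_forall_lt (a := x * y) (r := 1) hspecF
    simpa using this
  obtain ⟨r, hr1, hr2⟩ := ENNReal.lt_iff_exists_nnreal_btwn.mp hrad
  have hrlt1 : (r : ℝ) < 1 := by exact_mod_cast hr2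
  have hgel := spectrum.pow_nnnorm_pow_one_div_tendsto_nhds_spectralRadius (x * y)
  have hev : ∀ᶠ n : ℕ in atTop, (‖(x * y) ^ n‖₊ : ℝ≥0∞) ^ (1 / (n:ℝ)) < (r : ℝ≥0∞) :=
    hgel.eventually_lt_const hr1
  have hbound : ∀ᶠ n : ℕ in atTop, ‖(x * y) ^ n‖ ≤ (r : ℝ) ^ n := by
    filter_upwards [hev, eventually_ge_atTop 1] with n hn hn1
    have hne : (n:ℝ) ≠ 0 := by positivity
    have h2 : (((‖(x * y) ^ n‖₊ : ℝ≥0∞) ^ (1 / (n:ℝ))) ^ (n:ℝ)) ≤ ((r : ℝ≥0∞)) ^ (n:ℝ) :=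
      ENNReal.rpow_le_rpow hn.le (by positivity)
    rw [← ENNReal.rpow_mul, one_div, inv_mul_cancel₀ hne, ENNReal.rpow_one,
      ENNReal.rpow_natCast, ← ENNReal.coe_pow, ENNReal.coe_le_coe] at h2
    calc ‖(x * y) ^ n‖ = ((‖(x * y) ^ n‖₊ : ℝ)) := rfl
      _ ≤ ((r ^ n : ℝ≥0) : ℝ) := by exact_mod_cast h2
      _ = (r : ℝ) ^ n := by push_cast; ring
  have hFn : Tendsto (fun n : ℕ => (x * y) ^ n) atTop (𝓝 0) :=
    squeeze_zero_norm' hbound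
      (tendsto_pow_atTop_nhds_zero_of_lt_one r.coe_nonneg hrlt1)
  have hmulx : Tendsto (fun n : ℕ => (x * y) ^ n * x) atTop (𝓝 0) := by
    have := hFn.mul (tendsto_const_nhds (x := x))
    rw [zero_mul] at this
    exact this
  -- partial sums
  have hSn : ∀ n : ℕ, (∑ k ∈ Finset.range n, (x * y) ^ (k + 1)) = x - (x * y) ^ n * x := by
    intro n
    induction n with
    | zero => simp
    | succ n ihn =>
      rw [Finset.sum_range_succ, ihn]
      have hkey : (x * y) ^ n * x - (x * y) ^ (n + 1) = (x * y) ^ (n + 1) * x := by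
        calc (x * y) ^ n * x - (x * y) ^ (n + 1)
            = (x * y) ^ n * (x - x * y) := by rw [pow_succ, mul_sub]
          _ = (x * y) ^ n * (x * (x * y)) := by rw [hsub]
          _ = (x * y) ^ n * ((x * y) * x) := by rw [← hFxcomm]
          _ = (x * y) ^ (n + 1) * x := by rw [pow_succ, mul_assoc ((x * y) ^ n) (x * y) x]
      calc x - (x * y) ^ n * x + (x * y) ^ (n + 1)
          = x - ((x * y) ^ n * x - (x * y) ^ (n + 1)) := by abel
        _ = x - (x * y) ^ (n + 1) * x := by rw [hkey]
  have hgx : Tendsto (fun n : ℕ => ∑ k ∈ Finset.range n, (x * y) ^ (k + 1)) atTop (𝓝 x) := by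
    have h0 : Tendsto (fun n : ℕ => x - (x * y) ^ n * x) atTop (𝓝 (x - 0)) :=
      tendsto_const_nhds.sub hmulx
    rw [sub_zero] at h0
    exact h0.congr (fun n => (hSn n).symm)
  have hpowmem : ∀ k : ℕ, (x * y) ^ (k + 1) ∈ NonUnitalAlgebra.adjoin ℂ ({x * y} : Set A) := by
    intro k
    induction k with
    | zero => simpa using NonUnitalAlgebra.self_mem_adjoin_singleton ℂ (x * y)
    | succ k ihk =>
      rw [pow_succ]
      exact mul_mem ihk (NonUnitalAlgebra.self_mem_adjoin_singleton ℂ (x * y))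
  have hx_mem : x ∈ closure ((NonUnitalAlgebra.adjoin ℂ {x * y} : NonUnitalSubalgebra ℂ A) : Set A) := by
    refine mem_closure_of_tendsto hgx (Filter.Eventually.of_forall fun n => ?_)
    exact sum_mem fun i _ => hpowmem i
  have hF_mem := xy_mem_closure_adjoin x y hacc hy hy'
  constructor
  · apply Set.Subset.antisymm
    · apply closure_minimal _ isClosed_closure
      have hle : NonUnitalAlgebra.adjoin ℂ ({x} : Set A) ≤
          NonUnitalAlgebra.elemental ℂ (x * y) :=
        NonUnitalAlgebra.adjoin_le (Set.singleton_subset_iff.mpr hx_mem)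
      exact fun a ha => hle ha
    · apply closure_minimal _ isClosed_closure
      have hle : NonUnitalAlgebra.adjoin ℂ ({x * y} : Set A) ≤
          NonUnitalAlgebra.elemental ℂ x :=
        NonUnitalAlgebra.adjoin_le (Set.singleton_subset_iff.mpr hF_mem)
      exact fun a ha => hle ha
  · apply Set.Subset.antisymm
    · apply closure_minimal _ isClosed_closure
      rintro w ⟨a, rfl⟩
      have htend : Tendsto (fun n : ℕ => (∑ k ∈ Finset.range n, (x * y) ^ (k + 1)) * a)
          atTop (𝓝 (x * a)) := hgx.mul tendsto_const_nhds
      refine mem_closure_of_tendsto htend (Filter.Eventually.of_forall fun n => ?_)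
      refine ⟨∑ k ∈ Finset.range n, (x * y) ^ k * a, ?_⟩
      rw [Finset.sum_mul, Finset.mul_sum]
      congr 1
      funext k
      rw [pow_succ', mul_assoc]
    · apply closure_minimal _ isClosed_closure
      rintro w ⟨a, rfl⟩
      exact subset_closure ⟨y * a, by rw [mul_assoc]⟩
end

section
/- Let A be a unital Banach algebra and p ∈ A an idempotent. Then ‖1 − p‖ ≤ 1 if and only if p is accretive (its numerical range lies in the closed right half plane). -/
open Complex Set

set_option linter.unusedSectionVars false
section Aux
variable {A : Type*} [NormedRing A] [NormedAlgebra ℂ A] [NormOneClass A]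

noncomputable def stQuot (x : A) (t : ℝ) : ℝ := (‖(1 : A) + t • x‖ - 1) / t

noncomputable def stN (x : A) : ℝ := sInf (stQuot x '' Ioi 0)

lemma stQuot_mono (x : A) {s t : ℝ} (hs : 0 < s) (hst : s ≤ t) :
    stQuot x s ≤ stQuot x t := by
  have ht : 0 < t := hs.trans_le hst
  have hid : t • ((1:A) + s • x) = s • ((1:A) + t • x) + (t - s) • (1:A) := by module
  have hnorm : t * ‖(1:A) + s • x‖ ≤ s * ‖(1:A) + t • x‖ + (t - s) := by
    calc t * ‖(1:A) + s • x‖ = ‖t • ((1:A) + s • x)‖ := by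
          rw [norm_smul, Real.norm_of_nonneg ht.le]
      _ = ‖s • ((1:A) + t • x) + (t - s) • (1:A)‖ := by rw [hid]
      _ ≤ ‖s • ((1:A) + t • x)‖ + ‖(t - s) • (1:A)‖ := norm_add_le _ _
      _ = s * ‖(1:A) + t • x‖ + (t - s) := by
          rw [norm_smul, norm_smul, Real.norm_of_nonneg hs.le,
            Real.norm_of_nonneg (by linarith), norm_one, mul_one]
  rw [stQuot, stQuot, div_le_div_iff₀ hs ht]
  nlinarith

lemma stQuot_lb (x : A) {t : ℝ} (ht : 0 < t) : -‖x‖ ≤ stQuot x t := by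
  have h1 : (1:ℝ) ≤ ‖(1:A) + t • x‖ + t * ‖x‖ := by
    have : ‖(1:A)‖ ≤ ‖(1:A) + t • x‖ + ‖t • x‖ := by
      calc ‖(1:A)‖ = ‖((1:A) + t • x) - t • x‖ := by rw [add_sub_cancel_right]
        _ ≤ ‖(1:A) + t • x‖ + ‖t • x‖ := norm_sub_le _ _
    rwa [norm_one, norm_smul, Real.norm_of_nonneg ht.le] at this
  rw [stQuot, le_div_iff₀ ht]
  nlinarith [norm_nonneg x]

lemma stQuot_ub (x : A) {t : ℝ} (ht : 0 < t) : stQuot x t ≤ ‖x‖ := by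
  have : ‖(1:A) + t • x‖ ≤ 1 + t * ‖x‖ := by
    calc ‖(1:A) + t • x‖ ≤ ‖(1:A)‖ + ‖t • x‖ := norm_add_le _ _
      _ = 1 + t * ‖x‖ := by rw [norm_one, norm_smul, Real.norm_of_nonneg ht.le]
  rw [stQuot, div_le_iff₀ ht]
  nlinarith [norm_nonneg x]

lemma stN_set_nonempty (x : A) : (stQuot x '' Ioi 0).Nonempty :=
  ⟨stQuot x 1, ⟨1, by norm_num, rfl⟩⟩

lemma stN_set_bddBelow (x : A) : BddBelow (stQuot x '' Ioi 0) := by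
  refine ⟨-‖x‖, ?_⟩
  rintro a ⟨t, ht, rfl⟩
  exact stQuot_lb x ht

lemma stN_le (x : A) {t : ℝ} (ht : 0 < t) : stN x ≤ stQuot x t :=
  csInf_le (stN_set_bddBelow x) ⟨t, ht, rfl⟩

lemma le_stN (x : A) {c : ℝ} (h : ∀ t : ℝ, 0 < t → c ≤ stQuot x t) : c ≤ stN x := by
  refine le_csInf (stN_set_nonempty x) ?_
  rintro a ⟨t, ht, rfl⟩
  exact h t ht

lemma stN_le_norm (x : A) : stN x ≤ ‖x‖ := (stN_le x one_pos).trans (stQuot_ub x one_pos)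

lemma stN_zero : stN (0 : A) = 0 := by
  refine le_antisymm ?_ (le_stN 0 fun t ht => ?_)
  · have := stN_le (0 : A) one_pos
    simpa [stQuot] using this
  · simp [stQuot]

lemma stN_add (x y : A) : stN (x + y) ≤ stN x + stN y := by
  refine le_of_forall_pos_le_add fun ε hε => ?_
  obtain ⟨a, ⟨t₁, ht₁, rfl⟩, ha⟩ :=
    exists_lt_of_csInf_lt (stN_set_nonempty x) (show stN x < stN x + ε/2 by linarith)
  obtain ⟨b, ⟨t₂, ht₂, rfl⟩, hb⟩ :=
    exists_lt_of_csInf_lt (stN_set_nonempty y) (show stN y < stN y + ε/2 by linarith)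
  set t := min t₁ t₂ / 2 with htdef
  have ht : 0 < t := by
    rw [htdef]; exact div_pos (lt_min ht₁ ht₂) two_pos
  have h2t : 0 < 2 * t := by linarith
  have key : stQuot (x + y) t ≤ stQuot x (2*t) + stQuot y (2*t) := by
    have hid : (2:ℝ) • ((1:A) + t • (x + y)) = ((1:A) + (2*t) • x) + ((1:A) + (2*t) • y) := by
      module
    have hnorm : 2 * ‖(1:A) + t • (x + y)‖ ≤ ‖(1:A) + (2*t) • x‖ + ‖(1:A) + (2*t) • y‖ := by
      calc 2 * ‖(1:A) + t • (x + y)‖ = ‖(2:ℝ) • ((1:A) + t • (x + y))‖ := by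
            rw [norm_smul]; norm_num
        _ = ‖((1:A) + (2*t) • x) + ((1:A) + (2*t) • y)‖ := by rw [hid]
        _ ≤ _ := norm_add_le _ _
    rw [stQuot, stQuot, stQuot, ← add_div, div_le_div_iff₀ ht h2t]
    nlinarith
  have hx2 : stQuot x (2*t) ≤ stQuot x t₁ :=
    stQuot_mono x h2t (by rw [htdef]; nlinarith [min_le_left t₁ t₂])
  have hy2 : stQuot y (2*t) ≤ stQuot y t₂ :=
    stQuot_mono y h2t (by rw [htdef]; nlinarith [min_le_right t₁ t₂])
  have := stN_le (x + y) ht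
  linarith

lemma stQuot_smul (x : A) {c t : ℝ} (hc : 0 < c) (ht : 0 < t) :
    stQuot (c • x) t = c * stQuot x (t * c) := by
  have h : (t : ℝ) • (c • x) = (t * c) • x := by rw [smul_smul]
  rw [stQuot, stQuot, h]
  field_simp

lemma stN_smul {c : ℝ} (hc : 0 < c) (x : A) : stN (c • x) = c * stN x := by
  refine le_antisymm ?_ ?_
  · have hub : stN (c • x) / c ≤ stN x := by
      refine le_stN x fun t ht => ?_
      have h1 : stN (c • x) ≤ stQuot (c • x) (t / c) := stN_le _ (by positivity)
      have h2 : stQuot (c • x) (t / c) = c * stQuot x t := by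
        rw [stQuot_smul x hc (by positivity), div_mul_cancel₀ _ hc.ne']
      rw [div_le_iff₀ hc]
      nlinarith
    calc stN (c • x) = c * (stN (c • x) / c) := by field_simp
      _ ≤ c * stN x := by nlinarith
  · refine le_stN (c • x) fun t ht => ?_
    have h2 : stQuot (c • x) t = c * stQuot x (t * c) := stQuot_smul x hc ht
    have h3 : stN x ≤ stQuot x (t * c) := stN_le x (by positivity)
    rw [h2]
    nlinarith

lemma stN_one_le : stN (1 : A) ≤ 1 := stN_le_norm 1 |>.trans (by simp)

lemma stN_neg_one_le : stN (-1 : A) ≤ -1 := by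
  have h : stQuot (-1 : A) (1/2) = -1 := by
    have hid : (1:A) + (1/2 : ℝ) • (-1 : A) = (1/2 : ℝ) • (1:A) := by module
    rw [stQuot, hid, norm_smul]
    norm_num
  have := stN_le (-1 : A) (by norm_num : (0:ℝ) < 1/2)
  linarith

lemma stN_smul_I_le (c : ℂ) (hc : c.re = 0) : stN (c • (1 : A)) ≤ 0 := by
  refine le_of_forall_pos_le_add fun ε hε => ?_
  have key : ∀ t : ℝ, 0 < t → stQuot (c • (1:A)) t ≤ t * ‖c‖^2 / 2 := by
    intro t ht
    have hid : (1:A) + t • (c • (1:A)) = ((1 : ℂ) + t • c) • (1:A) := by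
      rw [add_smul, one_smul, smul_assoc]
    have habs : ‖(1 : ℂ) + t • c‖ ≤ 1 + t^2 * ‖c‖^2 / 2 := by
      have h2 : ‖(1 : ℂ) + t • c‖ = Real.sqrt (1 + t^2 * ‖c‖^2) := by
        rw [Complex.norm_def]
        congr 1
        rw [Complex.normSq_apply]
        simp only [Complex.add_re, Complex.add_im, Complex.one_re, Complex.one_im,
          Complex.smul_re, Complex.smul_im, hc, mul_zero, add_zero, zero_add,
          Complex.sq_norm, Complex.normSq_apply, smul_eq_mul]
        ring
      rw [h2]
      have : (1 + t^2 * ‖c‖^2 : ℝ) ≤ (1 + t^2 * ‖c‖^2 / 2)^2 := by nlinarith [sq_nonneg (t * ‖c‖)]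
      calc Real.sqrt (1 + t^2 * ‖c‖^2) ≤ Real.sqrt ((1 + t^2 * ‖c‖^2 / 2)^2) :=
            Real.sqrt_le_sqrt this
        _ = 1 + t^2 * ‖c‖^2 / 2 := Real.sqrt_sq (by positivity)
    have hnorm : ‖(1:A) + t • (c • (1:A))‖ ≤ 1 + t^2 * ‖c‖^2/2 := by
      rw [hid, norm_smul, norm_one, mul_one]; exact habs
    rw [stQuot, div_le_div_iff₀ ht (by norm_num : (0:ℝ) < 2)]
    nlinarith
  by_cases hc0 : ‖c‖ = 0
  · have := (stN_le (c • (1:A)) one_pos).trans (key 1 one_pos)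
    rw [hc0] at this
    norm_num at this
    linarith
  · have hcpos : 0 < ‖c‖ := lt_of_le_of_ne (norm_nonneg c) (Ne.symm hc0)
    set t := 2 * ε / ‖c‖^2 with htdef
    have ht : 0 < t := by positivity
    have hkey := (stN_le (c • (1:A)) ht).trans (key t ht)
    have hne : ‖c‖^2 ≠ 0 := pow_ne_zero 2 hc0
    have heq : t * ‖c‖^2 / 2 = ε := by
      rw [htdef, div_mul_cancel₀ _ hne]; ring
    linarith [heq ▸ hkey]

end Aux

section Aux2
set_option linter.unusedSectionVars false
variable {A : Type*} [NormedRing A] [NormedAlgebra ℂ A] [NormOneClass A]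

lemma exists_bad_state (p : A) (hpos : 0 < stN (-p)) :
    ∃ φ : StrongDual ℂ A, ‖φ‖ = 1 ∧ φ 1 = 1 ∧ (φ p).re < 0 := by
  have hp0 : p ≠ 0 := by
    rintro rfl
    rw [neg_zero, stN_zero] at hpos
    exact lt_irrefl 0 hpos
  have hv : (-p : A) ≠ 0 := neg_ne_zero.2 hp0
  set v : A := -p with hvdef
  -- Hahn–Banach extension of `c • v ↦ c * stN v` dominated by `stN`
  obtain ⟨g, hg_eq, hg_le⟩ :=
    exists_extension_of_le_sublinear (LinearPMap.mkSpanSingleton v (stN v) hv) stN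
      (fun c hc x => stN_smul hc x)
      (fun x y => stN_add x y)
      (by
        rintro ⟨x, hx⟩
        obtain ⟨c, rfl⟩ := Submodule.mem_span_singleton.1 hx
        have happ : (LinearPMap.mkSpanSingleton v (stN v) hv) ⟨c • v, hx⟩ = c • stN v :=
          LinearPMap.mkSpanSingleton'_apply v (stN v) _ c hx
        rw [happ]
        rcases lt_trichotomy c 0 with hc | hc | hc
        · have h1 : stN (c • v) = -c * stN (-v) := by
            have : c • v = (-c) • (-v) := by module
            rw [this, stN_smul (by linarith) (-v)]
          have h2 : 0 ≤ stN v + stN (-v) := by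
            have := stN_add v (-v)
            rw [add_neg_cancel, stN_zero] at this
            linarith
          rw [h1]
          simp only [smul_eq_mul]
          nlinarith
        · subst hc
          simp [stN_zero]
        · rw [stN_smul hc v]
          simp [smul_eq_mul])
  have hg_v : g v = stN v := by
    have := hg_eq ⟨v, Submodule.mem_span_singleton_self v⟩
    rw [this, LinearPMap.mkSpanSingleton_apply]
  -- g is bounded
  have hg_bound : ∀ x : A, ‖g x‖ ≤ 1 * ‖x‖ := by
    intro x
    rw [one_mul, Real.norm_eq_abs, abs_le]
    constructor
    · have h1 : g (-x) ≤ stN (-x) := hg_le (-x)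
      have h2 : stN (-x) ≤ ‖(-x : A)‖ := stN_le_norm (-x)
      rw [map_neg, norm_neg] at *
      linarith [hg_le (-x), (stN_le_norm (-x)), norm_neg x ▸ (stN_le_norm (-x))]
    · exact (hg_le x).trans (stN_le_norm x)
  set G : A →L[ℝ] ℝ := LinearMap.mkContinuous g 1 hg_bound with hGdef
  have hG_apply : ∀ x : A, G x = g x := fun x => rfl
  have hG_norm : ‖G‖ ≤ 1 := LinearMap.mkContinuous_norm_le g zero_le_one hg_bound
  set φ : A →L[ℂ] ℂ := G.extendTo𝕜' with hφdef
  have hφ_apply : ∀ x : A, φ x = (G x : ℂ) - Complex.I * (G (Complex.I • x) : ℂ) :=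
    fun x => ContinuousLinearMap.extendTo𝕜'_apply G x
  -- g 1 = 1
  have hg_one : g (1 : A) = 1 := by
    have h1 : g 1 ≤ 1 := (hg_le 1).trans stN_one_le
    have h2 : g (-1 : A) ≤ -1 := (hg_le (-1)).trans stN_neg_one_le
    rw [map_neg] at h2
    linarith
  -- g (I • 1) = 0
  have hg_I : g ((Complex.I : ℂ) • (1 : A)) = 0 := by
    have h1 : g ((Complex.I : ℂ) • (1:A)) ≤ 0 :=
      (hg_le _).trans (stN_smul_I_le Complex.I (by simp))
    have h2 : g ((-Complex.I : ℂ) • (1:A)) ≤ 0 :=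
      (hg_le _).trans (stN_smul_I_le (-Complex.I) (by simp))
    rw [neg_smul, map_neg] at h2
    linarith
  have hφ_one : φ (1 : A) = 1 := by
    rw [hφ_apply 1, hG_apply, hG_apply, hg_one, hg_I]
    simp
  have hφ_norm : ‖φ‖ = 1 := by
    refine le_antisymm ?_ ?_
    · rw [hφdef, show ‖G.extendTo𝕜'‖ = ‖G‖ from ContinuousLinearMap.norm_extendTo𝕜' G]
      exact hG_norm
    · have := φ.le_opNorm 1
      rw [hφ_one] at this
      simpa using this
  have hφ_re : (φ p).re < 0 := by
    have : (φ p).re = g p := by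
      rw [hφ_apply p, hG_apply, hG_apply]
      simp
    rw [this]
    have : g p = - g v := by rw [hvdef, map_neg, neg_neg]
    rw [this, hg_v]
    linarith
  exact ⟨φ, hφ_norm, hφ_one, hφ_re⟩

end Aux2

section Aux3
set_option linter.unusedSectionVars false
variable {A : Type*} [NormedRing A] [NormedAlgebra ℂ A] [NormOneClass A]

lemma idem_pow (p : A) (hp : p * p = p) (s : ℝ) :
    ∀ n : ℕ, ((1:A) - s • p)^n = 1 - (1 - (1-s)^n) • p := by
  intro n
  induction n with
  | zero => simp
  | succ n ih =>
    rw [pow_succ, ih]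
    set c : ℝ := 1 - (1-s)^n with hcdef
    have hmul : ((1:A) - c • p) * ((1:A) - s • p)
        = 1 - s • p - c • p + (c * s) • p := by
      have : (c • p) * (s • p) = (c * s) • (p * p) := by
        rw [smul_mul_assoc, mul_smul_comm, smul_smul]
      rw [sub_mul, mul_sub, mul_sub, this, hp]
      simp only [one_mul, mul_one]
      abel
    rw [hmul]
    have hcoef : 1 - (1-s)^(n+1) = s + c - c * s := by
      rw [hcdef]; ring
    rw [hcoef]
    module

lemma norm_one_sub_le_of_stN (p : A) (hp : p * p = p) (hN : stN (-p) ≤ 0) :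
    ‖(1:A) - p‖ ≤ 1 := by
  by_cases hp0 : p = 0
  · simp [hp0]
  set M : ℝ := ‖p‖ with hMdef
  have hM : 0 < M := norm_pos_iff.2 hp0
  refine le_of_forall_pos_le_add fun δ hδ => ?_
  set K : ℝ := max 1 (Real.log (2 * M / δ)) with hKdef
  have hK : 0 < K := lt_of_lt_of_le one_pos (le_max_left _ _)
  set ε : ℝ := Real.log (1 + δ/2) / K with hεdef
  have hε : 0 < ε := div_pos (Real.log_pos (by linarith)) hK
  obtain ⟨a, ⟨t, ht, rfl⟩, hat⟩ :=
    exists_lt_of_csInf_lt (stN_set_nonempty (-p)) (show stN (-p) < ε by linarith)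
  set n : ℕ := ⌈K / t⌉₊ + ⌈K⌉₊ + 1 with hndef
  have hn : 0 < n := by positivity
  have hnR : (0:ℝ) < n := by exact_mod_cast hn
  set s : ℝ := K / n with hsdef
  have hs0 : 0 < s := div_pos hK hnR
  have hst : s ≤ t := by
    rw [hsdef, div_le_iff₀ hnR]
    have h1 : K / t ≤ (⌈K / t⌉₊ : ℝ) := Nat.le_ceil _
    have h2 : ((⌈K / t⌉₊ : ℕ) : ℝ) ≤ n := by
      have : ⌈K / t⌉₊ ≤ n := by omega
      exact_mod_cast this
    have := (div_le_iff₀ ht).1 (h1.trans h2)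
    linarith
  have hs1 : s < 1 := by
    rw [hsdef, div_lt_one hnR]
    have h1 : K ≤ (⌈K⌉₊ : ℝ) := Nat.le_ceil _
    have h2 : ((⌈K⌉₊ : ℕ) : ℝ) < n := by
      have : ⌈K⌉₊ < n := by omega
      exact_mod_cast this
    linarith
  have hsn : s * n = K := div_mul_cancel₀ K hnR.ne'
  -- ‖1 - s•p‖ ≤ 1 + ε*s
  have hq : stQuot (-p) s < ε := lt_of_le_of_lt (stQuot_mono (-p) hs0 hst) hat
  have hnorm_s : ‖(1:A) - s • p‖ ≤ 1 + ε * s := by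
    have hrw : (1:A) + s • (-p) = (1:A) - s • p := by module
    rw [stQuot, hrw, div_lt_iff₀ hs0] at hq
    nlinarith
  -- the two exponential bounds
  have hb1 : (1 + ε * s)^n ≤ 1 + δ/2 := by
    have h1 : (1 + ε * s) ≤ Real.exp (ε * s) := by
      have := Real.add_one_le_exp (ε * s)
      linarith
    have h2 : (1 + ε * s)^n ≤ Real.exp (ε * s)^n :=
      pow_le_pow_left₀ (by positivity) h1 n
    have h3 : Real.exp (ε * s)^n = Real.exp (ε * s * n) := by
      rw [← Real.exp_nat_mul]; ring_nf
    have h4 : ε * s * n = Real.log (1 + δ/2) := by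
      rw [mul_assoc, hsn, hεdef, div_mul_cancel₀ _ hK.ne']
    rw [h3, h4, Real.exp_log (by linarith)] at h2
    exact h2
  have hb2 : (1 - s)^n * M ≤ δ/2 := by
    have h1 : (1 - s) ≤ Real.exp (-s) := by
      have := Real.add_one_le_exp (-s)
      linarith
    have h2 : (1 - s)^n ≤ Real.exp (-s)^n :=
      pow_le_pow_left₀ (by linarith) h1 n
    have h3 : Real.exp (-s)^n = Real.exp (-(s * n)) := by
      rw [← Real.exp_nat_mul]; ring_nf
    have h4 : Real.exp (-(s*n)) ≤ δ / (2 * M) := by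
      rw [hsn]
      have h5 : Real.log (2 * M / δ) ≤ K := le_max_right _ _
      have h6 : Real.exp (Real.log (2 * M / δ)) ≤ Real.exp K := Real.exp_le_exp.2 h5
      rw [Real.exp_log (by positivity)] at h6
      rw [Real.exp_neg]
      rw [inv_le_comm₀ (Real.exp_pos K) (by positivity)]
      rw [inv_div]
      exact h6
    have h7 : (1 - s)^n ≤ δ / (2 * M) := (h3 ▸ h2).trans h4
    have h8 : δ / (2 * M) * M = δ / 2 := by field_simp
    nlinarith
  -- conclude
  have hpow := idem_pow p hp s n
  have h7 : ‖(1:A) - (1 - (1-s)^n) • p‖ ≤ (1 + ε * s)^n := by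
    rw [← hpow]
    calc ‖((1:A) - s • p)^n‖ ≤ ‖(1:A) - s • p‖^n := norm_pow_le' _ hn
      _ ≤ (1 + ε * s)^n := pow_le_pow_left₀ (norm_nonneg _) hnorm_s n
  have hdecomp : (1:A) - p = ((1:A) - (1 - (1-s)^n) • p) - ((1-s)^n • p) := by module
  have h8 : ‖(1:A) - p‖ ≤ ‖(1:A) - (1 - (1-s)^n) • p‖ + ‖((1-s)^n : ℝ) • p‖ := by
    rw [hdecomp]; exact norm_sub_le _ _
  have h9 : ‖((1-s)^n : ℝ) • p‖ = (1-s)^n * M := by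
    rw [norm_smul, Real.norm_of_nonneg (pow_nonneg (by linarith) n)]
  rw [h9] at h8
  linarith

end Aux3

/-- Let `A` be a unital Banach algebra and `p ∈ A` an idempotent.  Then
`‖1 − p‖ ≤ 1` if and only if `p` is accretive (its numerical range lies in the closed
right half plane). -/
theorem idempotent_norm_one_sub_le_one_iff_accretive
    {A : Type*} [NormedRing A] [NormedAlgebra ℂ A] [NormOneClass A] [CompleteSpace A]
    (p : A) (hp : p * p = p) :
    ‖1 - p‖ ≤ 1 ↔
      ∀ φ : StrongDual ℂ A, ‖φ‖ = 1 → φ 1 = 1 → 0 ≤ (φ p).re := by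
  constructor
  · intro h φ hφn hφ1
    have h1 : (φ (1 - p)).re ≤ 1 := by
      calc (φ (1 - p)).re ≤ ‖φ (1 - p)‖ := Complex.re_le_norm _
        _ ≤ ‖φ‖ * ‖(1 : A) - p‖ := φ.le_opNorm _
        _ ≤ 1 := by rw [hφn, one_mul]; exact h
    have h2 : φ (1 - p) = 1 - φ p := by rw [map_sub, hφ1]
    rw [h2, Complex.sub_re, Complex.one_re] at h1
    linarith
  · intro h
    by_cases hN : stN (-p) ≤ 0
    · exact norm_one_sub_le_of_stN p hp hN
    · exfalso
      obtain ⟨φ, hφn, hφ1, hφre⟩ := exists_bad_state p (lt_of_not_ge hN)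
      exact absurd (h φ hφn hφ1) (not_le.2 hφre)
end

section
/- There is a universal constant bound: if A is a unital Banach algebra, x ∈ A is accretive with ‖x‖ ≤ 1, and 0 < α < 1, then ‖x^α‖ ≤ (2 sin(απ))/(π α (1−α)). In particular ‖x^{1/m}‖ ≤ 2m/(m−1) for m ≥ 2. -/
open MeasureTheory Set

/-- The fractional power of `x` given by the Balakrishnan representation
`x^α = (sin(απ)/π) ∫₀^∞ t^{α−1} (t+x)⁻¹ x dt`. -/
noncomputable def balPow {A : Type*} [NormedRing A] [NormedSpace ℝ A]
    (x : A) (α : ℝ) : A :=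
  (Real.sin (α * Real.pi) / Real.pi) •
    ∫ t in Set.Ioi (0 : ℝ), t ^ (α - 1) • (Ring.inverse (t • (1 : A) + x) * x)

theorem bal_lower {A : Type*} [NormedRing A] [NormedAlgebra ℂ A] [NormOneClass A]
    (x : A)
    (hacc : ∀ φ : StrongDual ℂ A, ‖φ‖ = 1 → φ 1 = 1 → 0 ≤ (φ x).re)
    {t : ℝ} (ht : 0 ≤ t) (b : A) : t * ‖b‖ ≤ ‖(t • 1 + x) * b‖ := by
  rcases eq_or_ne b 0 with rfl | hb
  · simp
  obtain ⟨φ, hφ1, hφb⟩ := exists_dual_vector ℂ b (norm_ne_zero_iff.2 hb)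
  set ψ : StrongDual ℂ A := ((‖b‖ : ℂ)⁻¹) • (φ.comp ((ContinuousLinearMap.mul ℂ A).flip b)) with hψ
  have hb0 : (0:ℝ) < ‖b‖ := norm_pos_iff.2 hb
  have hψapp : ∀ y : A, ψ y = (‖b‖ : ℂ)⁻¹ * φ (y * b) := fun y => rfl
  have hψ1 : ψ 1 = 1 := by
    rw [hψapp, one_mul, hφb]
    exact inv_mul_cancel₀ (by exact_mod_cast hb0.ne')
  have hψle : ‖ψ‖ ≤ 1 := by
    refine ContinuousLinearMap.opNorm_le_bound _ zero_le_one fun y => ?_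
    rw [hψapp, norm_mul]
    calc ‖((‖b‖:ℂ))⁻¹‖ * ‖φ (y * b)‖ ≤ ‖b‖⁻¹ * (‖φ‖ * ‖y * b‖) := by
          gcongr
          · rw [norm_inv]; simp
          · exact φ.le_opNorm _
      _ ≤ ‖b‖⁻¹ * (1 * (‖y‖ * ‖b‖)) := by
          gcongr
          · rw [hφ1]
          · exact norm_mul_le y b
      _ = 1 * ‖y‖ := by field_simp
  have hψn : ‖ψ‖ = 1 := by
    refine le_antisymm hψle ?_
    have := ψ.le_opNorm 1
    rw [hψ1, norm_one, norm_one, mul_one] at this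
    exact this
  have hre := hacc ψ hψn hψ1
  have key : φ ((t • 1 + x) * b) = (‖b‖ : ℂ) * ψ (t • 1 + x) := by
    rw [hψapp, ← mul_assoc, mul_inv_cancel₀ (by exact_mod_cast hb0.ne'), one_mul]
  have hψtx : ψ (t • 1 + x) = (t : ℂ) + ψ x := by
    have h1 : t • (1 : A) = ((t : ℂ)) • (1 : A) := by
      rw [← smul_one_smul ℂ t (1 : A)]; norm_num
    rw [map_add, h1, ψ.map_smul, hψ1, smul_eq_mul, mul_one]
  have hnorm : ‖φ ((t • 1 + x) * b)‖ ≤ ‖(t • 1 + x) * b‖ := by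
    have := φ.le_opNorm ((t • 1 + x) * b)
    rwa [hφ1, one_mul] at this
  have hre2 : t * ‖b‖ ≤ (φ ((t • 1 + x) * b)).re := by
    rw [key, hψtx]
    have : ((‖b‖:ℂ) * ((t:ℂ) + ψ x)).re = ‖b‖ * (t + (ψ x).re) := by
      simp [Complex.mul_re]
    rw [this]
    nlinarith
  calc t * ‖b‖ ≤ (φ ((t • 1 + x) * b)).re := hre2
    _ ≤ ‖φ ((t • 1 + x) * b)‖ := Complex.re_le_norm _
    _ ≤ ‖(t • 1 + x) * b‖ := hnorm

theorem bal_inv_norm {A : Type*} [NormedRing A] [NormedAlgebra ℂ A] [NormOneClass A] [CompleteSpace A]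
    (x : A)
    (hacc : ∀ φ : StrongDual ℂ A, ‖φ‖ = 1 → φ 1 = 1 → 0 ≤ (φ x).re)
    {t : ℝ} (ht : 0 < t) (h : IsUnit (t • (1:A) + x)) :
    ‖Ring.inverse (t • (1:A) + x)‖ ≤ 1 / t := by
  have h1 := bal_lower x hacc ht.le (Ring.inverse (t • (1:A) + x))
  rw [Ring.mul_inverse_cancel _ h, norm_one] at h1
  rw [le_div_iff₀ ht, mul_comm]
  exact h1

theorem bal_isUnit {A : Type*} [NormedRing A] [NormedAlgebra ℂ A] [NormOneClass A] [CompleteSpace A]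
    (x : A)
    (hacc : ∀ φ : StrongDual ℂ A, ‖φ‖ = 1 → φ 1 = 1 → 0 ≤ (φ x).re)
    {t : ℝ} (ht : 0 < t) : IsUnit (t • (1:A) + x) := by
  have big : ∀ s : ℝ, ‖x‖ < s → IsUnit (s • (1:A) + x) := by
    intro s hs
    have hs0 : 0 < s := lt_of_le_of_lt (norm_nonneg x) hs
    have h1 : IsUnit ((1:A) - (-(s⁻¹ • x))) := by
      refine isUnit_one_sub_of_norm_lt_one ?_
      rw [norm_neg, norm_smul, norm_inv, Real.norm_eq_abs, abs_of_pos hs0,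
        inv_mul_lt_iff₀ hs0, mul_one]
      exact hs
    have h2 : s • ((1:A) - (-(s⁻¹ • x))) = s • (1:A) + x := by
      rw [sub_neg_eq_add, smul_add, smul_smul, mul_inv_cancel₀ hs0.ne', one_smul]
    have h3 : IsUnit ((s • (1:A)) * ((1:A) - (-(s⁻¹ • x)))) :=
      ((Units.mk0 (s:ℝ) hs0.ne') • (1 : Aˣ)).isUnit.mul h1
    rwa [smul_mul_assoc, one_mul, h2] at h3
  set T : ℝ := ‖x‖ + t with hT
  have hTx : ‖x‖ < T := by simp [hT, ht]
  have hT0 : 0 < T := lt_of_le_of_lt (norm_nonneg x) hTx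
  have hUT : IsUnit (T • (1:A) + x) := big T hTx
  set R : A := Ring.inverse (T • (1:A) + x) with hR
  have hinv : ‖R‖ ≤ 1 / T := bal_inv_norm x hacc hT0 hUT
  have hstep : IsUnit ((1:A) - (-((t - T) • R))) := by
    refine isUnit_one_sub_of_norm_lt_one ?_
    rw [norm_neg, norm_smul, Real.norm_eq_abs]
    have habs : |t - T| = ‖x‖ := by rw [hT]; rw [abs_of_nonpos (by have := norm_nonneg x; linarith)]; ring
    rw [habs]
    calc ‖x‖ * ‖R‖ ≤ ‖x‖ * (1 / T) := by
          exact mul_le_mul_of_nonneg_left hinv (norm_nonneg x)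
      _ < 1 := by rw [mul_one_div, div_lt_one hT0]; exact hTx
  have key : (T • (1:A) + x) * ((1:A) - (-((t - T) • R))) = t • (1:A) + x := by
    rw [sub_neg_eq_add, mul_add, mul_one, mul_smul_comm,
      Ring.mul_inverse_cancel _ hUT]
    rw [add_comm (T • (1:A) + x), ← add_assoc, ← add_smul]
    ring_nf
  have := hUT.mul hstep
  rwa [key] at this

theorem bal_invx_two {A : Type*} [NormedRing A] [NormedAlgebra ℂ A] [NormOneClass A] [CompleteSpace A]
    (x : A)
    (hacc : ∀ φ : StrongDual ℂ A, ‖φ‖ = 1 → φ 1 = 1 → 0 ≤ (φ x).re)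
    {t : ℝ} (ht : 0 < t) : ‖Ring.inverse (t • (1:A) + x) * x‖ ≤ 2 := by
  have hU := bal_isUnit x hacc ht
  have hinv := bal_inv_norm x hacc ht hU
  have key : Ring.inverse (t • (1:A) + x) * x
      = 1 - t • Ring.inverse (t • (1:A) + x) := by
    have h1 : Ring.inverse (t • (1:A) + x) * (t • (1:A) + x) = 1 :=
      Ring.inverse_mul_cancel _ hU
    rw [mul_add, mul_smul_comm, mul_one] at h1
    linear_combination (norm := (abel)) h1
  rw [key]
  calc ‖(1:A) - t • Ring.inverse (t • (1:A) + x)‖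
      ≤ ‖(1:A)‖ + ‖t • Ring.inverse (t • (1:A) + x)‖ := norm_sub_le _ _
    _ ≤ 1 + 1 := by
        rw [norm_one, norm_smul, Real.norm_eq_abs, abs_of_pos ht]
        gcongr
        calc t * ‖Ring.inverse (t • (1:A) + x)‖ ≤ t * (1/t) :=
              mul_le_mul_of_nonneg_left hinv ht.le
          _ = 1 := by field_simp
    _ = 2 := by norm_num

theorem bal_integral_bound {A : Type*} [NormedRing A] [NormedAlgebra ℂ A] [NormOneClass A] [CompleteSpace A]
    (x : A)
    (hacc : ∀ φ : StrongDual ℂ A, ‖φ‖ = 1 → φ 1 = 1 → 0 ≤ (φ x).re)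
    (hx : ‖x‖ ≤ 1) {α : ℝ} (h0 : 0 < α) (h1 : α < 1) :
    ‖∫ t in Set.Ioi (0 : ℝ), t ^ (α - 1) • (Ring.inverse (t • (1 : A) + x) * x)‖
      ≤ 2 / α + 1 / (1 - α) := by
  set f : ℝ → A := fun t => t ^ (α - 1) • (Ring.inverse (t • (1 : A) + x) * x) with hf
  set g : ℝ → ℝ := fun t => if t ≤ 1 then 2 * t ^ (α - 1) else t ^ (α - 2) with hg
  have hgle : ∀ t : ℝ, t ≤ 1 → g t = 2 * t ^ (α - 1) := fun t ht => if_pos ht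
  have hggt : ∀ t : ℝ, ¬(t ≤ 1) → g t = t ^ (α - 2) := fun t ht => if_neg ht
  -- integrability of g
  have hgIoc : IntegrableOn g (Ioc (0:ℝ) 1) := by
    have : IntegrableOn (fun t : ℝ => 2 * t ^ (α - 1)) (Ioc (0:ℝ) 1) := by
      have := (intervalIntegral.intervalIntegrable_rpow' (a := 0) (b := 1)
        (r := α - 1) (by linarith)).const_mul 2
      rwa [intervalIntegrable_iff_integrableOn_Ioc_of_le zero_le_one] at this
    exact this.congr_fun (fun t ht => (hgle t ht.2).symm) measurableSet_Ioc
  have hgIoi : IntegrableOn g (Ioi (1:ℝ)) := by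
    have : IntegrableOn (fun t : ℝ => t ^ (α - 2)) (Ioi (1:ℝ)) :=
      integrableOn_Ioi_rpow_of_lt (by linarith) one_pos
    exact this.congr_fun (fun t ht =>
      (hggt t (not_le.2 (show (1:ℝ) < t from ht))).symm) measurableSet_Ioi
  have hsplit : Ioi (0:ℝ) = Ioc 0 1 ∪ Ioi 1 := (Ioc_union_Ioi_eq_Ioi zero_le_one).symm
  have hgint : IntegrableOn g (Ioi (0:ℝ)) := by
    rw [hsplit]; exact hgIoc.union hgIoi
  -- pointwise bound
  have hbound : ∀ t ∈ Ioi (0:ℝ), ‖f t‖ ≤ g t := by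
    intro t ht
    have ht0 : (0:ℝ) < t := ht
    have hnf : ‖f t‖ = t ^ (α - 1) * ‖Ring.inverse (t • (1 : A) + x) * x‖ := by
      rw [hf, norm_smul, Real.norm_eq_abs, abs_of_nonneg (Real.rpow_nonneg ht0.le _)]
    by_cases hle : t ≤ 1
    · rw [hnf, hgle t hle, mul_comm (2:ℝ)]
      exact mul_le_mul_of_nonneg_left (bal_invx_two x hacc ht0) (Real.rpow_nonneg ht0.le _)
    · rw [hnf, hggt t hle]
      push_neg at hle
      have h2 : ‖Ring.inverse (t • (1 : A) + x) * x‖ ≤ 1 / t := by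
        calc ‖Ring.inverse (t • (1 : A) + x) * x‖
            ≤ ‖Ring.inverse (t • (1 : A) + x)‖ * ‖x‖ := norm_mul_le _ _
          _ ≤ (1 / t) * 1 :=
              mul_le_mul (bal_inv_norm x hacc ht0 (bal_isUnit x hacc ht0)) hx
                (norm_nonneg _) (by positivity)
          _ = 1 / t := mul_one _
      calc t ^ (α - 1) * ‖Ring.inverse (t • (1 : A) + x) * x‖
          ≤ t ^ (α - 1) * (1 / t) :=
            mul_le_mul_of_nonneg_left h2 (Real.rpow_nonneg ht0.le _)
        _ = t ^ (α - 2) := by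
            rw [one_div, ← Real.rpow_neg_one t, ← Real.rpow_add ht0]
            congr 1; ring
  -- measurability of f
  have hcont : ContinuousOn f (Ioi (0:ℝ)) := by
    have c2 : ContinuousOn (fun t : ℝ => Ring.inverse (t • (1:A) + x)) (Ioi 0) := by
      intro t ht
      have hU := bal_isUnit x hacc (show (0:ℝ) < t from ht)
      have hcg : Continuous (fun t : ℝ => t • (1:A) + x) :=
        (continuous_id.smul continuous_const).add continuous_const
      have : ContinuousAt Ring.inverse ((t:ℝ) • (1:A) + x) := by
        have := NormedRing.inverse_continuousAt hU.unit
        rwa [hU.unit_spec] at this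
      exact (ContinuousAt.comp (x := t) this hcg.continuousAt).continuousWithinAt
    have c1 : ContinuousOn (fun t : ℝ => t ^ (α - 1)) (Ioi (0:ℝ)) := fun t ht =>
      (Real.continuousAt_rpow_const t (α - 1) (Or.inl (ne_of_gt ht))).continuousWithinAt
    exact c1.smul (c2.mul continuousOn_const)
  have hmeas : AEStronglyMeasurable f (volume.restrict (Ioi (0:ℝ))) :=
    hcont.aestronglyMeasurable measurableSet_Ioi
  have hbae : ∀ᵐ t ∂(volume.restrict (Ioi (0:ℝ))), ‖f t‖ ≤ g t :=
    (ae_restrict_iff' measurableSet_Ioi).2 (.of_forall hbound)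
  -- compute the integral of g
  have hval : ∫ t in Ioi (0:ℝ), g t = 2 / α + 1 / (1 - α) := by
    rw [hsplit, setIntegral_union Ioc_disjoint_Ioi_same measurableSet_Ioi hgIoc hgIoi]
    have e1 : ∫ t in Ioc (0:ℝ) 1, g t = 2 / α := by
      rw [setIntegral_congr_fun measurableSet_Ioc (fun t ht => hgle t ht.2)]
      rw [← intervalIntegral.integral_of_le zero_le_one]
      rw [intervalIntegral.integral_const_mul, integral_rpow (Or.inl (by linarith))]
      rw [show α - 1 + 1 = α by ring, Real.one_rpow, Real.zero_rpow (ne_of_gt h0)]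
      ring
    have e2 : ∫ t in Ioi (1:ℝ), g t = 1 / (1 - α) := by
      rw [setIntegral_congr_fun measurableSet_Ioi
        (fun t ht => hggt t (not_le.2 (show (1:ℝ) < t from ht)))]
      rw [integral_Ioi_rpow_of_lt (by linarith) one_pos]
      rw [show α - 2 + 1 = α - 1 by ring, Real.one_rpow,
        div_eq_div_iff (by intro h; apply absurd h; intro h2; linarith : α - 1 ≠ 0) (by linarith : (1:ℝ) - α ≠ 0)]
      ring
    rw [e1, e2]
  calc ‖∫ t in Ioi (0:ℝ), f t‖ ≤ ∫ t in Ioi (0:ℝ), g t :=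
        norm_integral_le_of_norm_le hgint hbae
    _ = 2 / α + 1 / (1 - α) := hval

/-- If `A` is a unital Banach algebra, `x ∈ A` is accretive with
`‖x‖ ≤ 1`, and `0 < α < 1`, then `‖x^α‖ ≤ 2 sin(απ)/(π α (1−α))`; in particular
`‖x^{1/m}‖ ≤ 2m/(m−1)` for `m ≥ 2`. -/
theorem balPow_norm_le
    {A : Type*} [NormedRing A] [NormedAlgebra ℂ A] [NormOneClass A] [CompleteSpace A]
    (x : A)
    (hacc : ∀ φ : StrongDual ℂ A, ‖φ‖ = 1 → φ 1 = 1 → 0 ≤ (φ x).re)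
    (hx : ‖x‖ ≤ 1) :
    (∀ α : ℝ, 0 < α → α < 1 →
      ‖balPow x α‖ ≤ 2 * Real.sin (α * Real.pi) / (Real.pi * α * (1 - α))) ∧
    (∀ m : ℕ, 2 ≤ m → ‖balPow x (1 / (m : ℝ))‖ ≤ 2 * m / (m - 1)) := by
  have part1 : ∀ α : ℝ, 0 < α → α < 1 →
      ‖balPow x α‖ ≤ 2 * Real.sin (α * Real.pi) / (Real.pi * α * (1 - α)) := by
    intro α hα0 hα1
    have hπ := Real.pi_pos
    have hsin : 0 ≤ Real.sin (α * Real.pi) :=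
      Real.sin_nonneg_of_nonneg_of_le_pi (by positivity) (by nlinarith)
    have hI := bal_integral_bound x hacc hx hα0 hα1
    rw [balPow, norm_smul, Real.norm_eq_abs, abs_of_nonneg (by positivity)]
    set s := Real.sin (α * Real.pi) with hs
    calc s / Real.pi * ‖∫ t in Set.Ioi (0 : ℝ),
            t ^ (α - 1) • (Ring.inverse (t • (1 : A) + x) * x)‖
        ≤ s / Real.pi * (2 / α + 1 / (1 - α)) := by
          exact mul_le_mul_of_nonneg_left hI (by positivity)
      _ ≤ s / Real.pi * (2 / (α * (1 - α))) := by
          refine mul_le_mul_of_nonneg_left ?_ (by positivity)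
          rw [div_add_div _ _ (ne_of_gt hα0) (ne_of_gt (by linarith : (0:ℝ) < 1 - α)),
            div_le_div_iff₀ (by nlinarith) (by nlinarith)]
          nlinarith [mul_pos hα0 (by linarith : (0:ℝ) < 1 - α), hα0, hα1]
      _ = 2 * s / (Real.pi * α * (1 - α)) := by
          field_simp
  refine ⟨part1, fun m hm => ?_⟩
  have hπ := Real.pi_pos
  have hmr : (2:ℝ) ≤ (m:ℝ) := by exact_mod_cast hm
  have hmr0 : (0:ℝ) < (m:ℝ) := by linarith
  have hα0 : (0:ℝ) < 1 / (m:ℝ) := by positivity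
  have hα1 : 1 / (m:ℝ) < 1 := by
    rw [div_lt_one hmr0]; linarith
  have h := part1 (1 / (m:ℝ)) hα0 hα1
  refine h.trans ?_
  have hs0 : 0 ≤ Real.sin (1 / (m:ℝ) * Real.pi) :=
    Real.sin_nonneg_of_nonneg_of_le_pi (by positivity) (by nlinarith)
  have hsle : Real.sin (1 / (m:ℝ) * Real.pi) ≤ 1 / (m:ℝ) * Real.pi :=
    Real.sin_le (by positivity)
  have hD : (0:ℝ) < Real.pi * (1 / (m:ℝ)) * (1 - 1 / (m:ℝ)) := by
    have : (0:ℝ) < 1 - 1 / (m:ℝ) := by linarith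
    positivity
  rw [div_le_div_iff₀ hD (by linarith : (0:ℝ) < (m:ℝ) - 1)]
  have hinv : (m:ℝ) * (1 / (m:ℝ)) = 1 := by field_simp
  nlinarith [mul_le_mul_of_nonneg_right hsle (by linarith : (0:ℝ) ≤ (m:ℝ) - 1), hπ, hs0, hinv, hmr]
end

section
/- For 0 < α < 1 there is a constant K such that for any unital Banach algebra A, commuting accretive elements a, b ∈ A, and c ∈ A with ‖c‖ ≤ 1, one has ‖(a^α − b^α)c‖ ≤ K ‖(a−b)c‖^α. -/
open MeasureTheory

section Aux
open Set

variable {A : Type*} [NormedRing A] [NormedAlgebra ℂ A] [NormOneClass A] [CompleteSpace A]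

/-- Accretive: numerical range in the closed right half plane. -/
def Accretive (a : A) : Prop :=
  ∀ φ : StrongDual ℂ A, ‖φ‖ = 1 → φ 1 = 1 → 0 ≤ (φ a).re

theorem Accretive.lower {a : A} (ha : Accretive a) {t : ℝ} (ht : 0 ≤ t) (x : A) :
    t * ‖x‖ ≤ ‖(t • (1:A) + a) * x‖ := by
  rcases eq_or_ne x 0 with rfl | hx
  · simp
  obtain ⟨g, hg1, hgx'⟩ := exists_dual_vector ℂ x (norm_ne_zero_iff.mpr hx)
  have hgx : g x = Complex.ofReal ‖x‖ := hgx'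
  have hxpos : (0:ℝ) < ‖x‖ := norm_pos_iff.mpr hx
  set M : A →L[ℂ] A := (ContinuousLinearMap.mul ℂ A).flip x with hM
  have hMapp : ∀ z : A, M z = z * x := fun z => rfl
  have hMnorm : ‖M‖ ≤ ‖x‖ := by
    refine ContinuousLinearMap.opNorm_le_bound _ (norm_nonneg x) fun z => ?_
    rw [hMapp, mul_comm ‖x‖]
    exact norm_mul_le z x
  set ψ : StrongDual ℂ A := ((‖x‖⁻¹ : ℝ) : ℂ) • (g.comp M) with hψ
  have hψapp : ∀ z : A, ψ z = ((‖x‖⁻¹ : ℝ) : ℂ) * g (z * x) := fun z => rfl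
  have hψ1 : ψ 1 = 1 := by
    rw [hψapp, one_mul, hgx, ← Complex.ofReal_mul, inv_mul_cancel₀ hxpos.ne', Complex.ofReal_one]
  have hψnorm : ‖ψ‖ = 1 := by
    refine le_antisymm ?_ ?_
    · calc ‖ψ‖ ≤ ‖((‖x‖⁻¹ : ℝ) : ℂ)‖ * ‖g.comp M‖ := by rw [hψ]; exact norm_smul_le (((‖x‖⁻¹ : ℝ) : ℂ)) (g.comp M)
        _ ≤ ‖x‖⁻¹ * (‖g‖ * ‖M‖) := by
            gcongr
            · simp [abs_of_nonneg (inv_nonneg.mpr hxpos.le)]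
            · exact ContinuousLinearMap.opNorm_comp_le _ _
        _ ≤ ‖x‖⁻¹ * (1 * ‖x‖) := by gcongr; exact hg1.le
        _ = 1 := by field_simp
    · have : (1:ℝ) = ‖ψ 1‖ := by rw [hψ1]; norm_num
      rw [this]
      calc ‖ψ 1‖ ≤ ‖ψ‖ * ‖(1:A)‖ := ψ.le_opNorm 1
        _ = ‖ψ‖ := by rw [norm_one, mul_one]
  have hre : 0 ≤ (g (a * x)).re := by
    have h0 := ha ψ hψnorm hψ1
    rw [hψapp] at h0
    have : (((‖x‖⁻¹ : ℝ) : ℂ) * g (a * x)).re = ‖x‖⁻¹ * (g (a * x)).re := by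
      simp [Complex.mul_re]
    rw [this] at h0
    nlinarith [inv_pos.mpr hxpos]
  -- main estimate
  have hexp : (t • (1:A) + a) * x = t • x + a * x := by
    rw [add_mul, smul_mul_assoc, one_mul]
  have hφval : g ((t • (1:A) + a) * x) = (t:ℂ) * (‖x‖:ℂ) + g (a * x) := by
    rw [hexp, map_add, g.map_smul_of_tower, hgx, Complex.real_smul]
  have hrele : t * ‖x‖ + (g (a * x)).re ≤ ‖(t • (1:A) + a) * x‖ := by
    have h1 : (g ((t • (1:A) + a) * x)).re = t * ‖x‖ + (g (a * x)).re := by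
      rw [hφval]; simp [Complex.add_re, Complex.mul_re]
    calc t * ‖x‖ + (g (a * x)).re = (g ((t • (1:A) + a) * x)).re := h1.symm
      _ ≤ ‖g ((t • (1:A) + a) * x)‖ := Complex.re_le_norm _
      _ = ‖g ((t • (1:A) + a) * x)‖ := rfl
      _ ≤ ‖g‖ * ‖(t • (1:A) + a) * x‖ := g.le_opNorm _
      _ = ‖(t • (1:A) + a) * x‖ := by rw [hg1, one_mul]
  linarith

theorem Accretive.isUnit {a : A} (ha : Accretive a) {t : ℝ} (ht : 0 < t) :
    IsUnit (t • (1:A) + a) := by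
  -- First: big T = ‖a‖ + t + 1 works by Neumann series
  set T : ℝ := ‖a‖ + t + 1 with hT
  have hTpos : 0 < T := by positivity
  have hUnitT : IsUnit (T • (1:A) + a) := by
    have h1 : ‖T⁻¹ • a‖ < 1 := by
      rw [norm_smul, norm_inv, Real.norm_of_nonneg hTpos.le]
      rcases eq_or_lt_of_le (norm_nonneg a) with h | h
      · rw [← h]; simp
      · rw [inv_mul_lt_iff₀ hTpos, mul_one]
        simp only [hT]; linarith
    have h2 : IsUnit ((1:A) + T⁻¹ • a) := by
      have := (Units.oneSub (-(T⁻¹ • a)) (by rwa [norm_neg])).isUnit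
      rwa [Units.val_oneSub, sub_neg_eq_add] at this
    have h3 : T • ((1:A) + T⁻¹ • a) = T • (1:A) + a := by
      rw [smul_add, smul_smul, mul_inv_cancel₀ hTpos.ne', one_smul]
    rw [← h3]
    exact h2.smul (Units.mk0 T hTpos.ne')
  -- inverse norm bound at T from the lower bound
  obtain ⟨u, hu⟩ := hUnitT
  have hinv : ‖(↑u⁻¹ : A)‖ ≤ 1 / T := by
    have := ha.lower hTpos.le (↑u⁻¹ : A)
    rw [← hu] at this
    rw [u.mul_inv] at this
    rw [norm_one] at this
    rw [le_div_iff₀ hTpos, mul_comm]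
    exact this
  -- perturb from T down to t
  have hnear : ‖(t • (1:A) + a) - ↑u‖ < ‖(↑u⁻¹ : A)‖⁻¹ := by
    have hne : (0:ℝ) < ‖(↑u⁻¹ : A)‖ := by
      rcases eq_or_lt_of_le (norm_nonneg (↑u⁻¹ : A)) with h | h
      · exfalso
        have : (↑u⁻¹ : A) = 0 := by rwa [eq_comm, norm_eq_zero] at h
        have h1 : ((1:A)) = 0 := by rw [← u.inv_mul, this, zero_mul]
        have := norm_one (α := A)
        rw [h1, norm_zero] at this; norm_num at this
      · exact h
    have hbig : T ≤ ‖(↑u⁻¹ : A)‖⁻¹ := by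
      rw [← one_div, le_div_iff₀ hne]
      calc T * ‖(↑u⁻¹ : A)‖ ≤ T * (1/T) := by gcongr
        _ = 1 := by field_simp
    have hdiff : (t • (1:A) + a) - ↑u = (t - T) • (1:A) := by
      rw [hu]; rw [sub_smul]; abel
    rw [hdiff, norm_smul, norm_one, mul_one, Real.norm_eq_abs,
      abs_of_nonpos (by simp only [hT]; linarith [norm_nonneg a])]
    calc -(t - T) = T - t := by ring
      _ < T := by linarith
      _ ≤ _ := hbig
  exact (Units.ofNearby u _ hnear).isUnit

theorem Accretive.norm_inverse_le {a : A} (ha : Accretive a) {t : ℝ} (ht : 0 < t) :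
    ‖Ring.inverse (t • (1:A) + a)‖ ≤ 1 / t := by
  have hu := ha.isUnit ht
  have h1 : (t • (1:A) + a) * Ring.inverse (t • (1:A) + a) = 1 := Ring.mul_inverse_cancel _ hu
  have := ha.lower ht.le (Ring.inverse (t • (1:A) + a))
  rw [h1, norm_one] at this
  rw [le_div_iff₀ ht, mul_comm]
  exact this

theorem Accretive.inverse_mul_self_eq {a : A} (ha : Accretive a) {t : ℝ} (ht : 0 < t) :
    Ring.inverse (t • (1:A) + a) * a = 1 - t • Ring.inverse (t • (1:A) + a) := by
  have h := Ring.inverse_mul_cancel _ (ha.isUnit ht)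
  have h2 : Ring.inverse (t • (1:A) + a) * (t • (1:A) + a)
      = t • Ring.inverse (t • (1:A) + a) + Ring.inverse (t • (1:A) + a) * a := by
    rw [mul_add, mul_smul_comm, mul_one]
  rw [h2] at h
  linear_combination (norm := abel) h

theorem Accretive.norm_inverse_mul_self_le {a : A} (ha : Accretive a) {t : ℝ} (ht : 0 < t) :
    ‖Ring.inverse (t • (1:A) + a) * a‖ ≤ 2 := by
  rw [ha.inverse_mul_self_eq ht]
  calc ‖(1:A) - t • Ring.inverse (t • (1:A) + a)‖
      ≤ ‖(1:A)‖ + ‖t • Ring.inverse (t • (1:A) + a)‖ := norm_sub_le _ _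
    _ ≤ 1 + 1 := by
        rw [norm_one]
        gcongr
        rw [norm_smul, Real.norm_of_nonneg ht.le]
        calc t * ‖Ring.inverse (t • (1:A) + a)‖ ≤ t * (1/t) := by
              gcongr; exact ha.norm_inverse_le ht
          _ = 1 := by field_simp
    _ = 2 := by norm_num

/-- Key identity: `(Ra a − Rb b) c = t • (Ra (Rb ((a−b)c)))`. -/
theorem key_identity {a b c : A} (ha : Accretive a) (hb : Accretive b)
    (hcomm : a * b = b * a) {t : ℝ} (ht : 0 < t) :
    (Ring.inverse (t • (1:A) + a) * a - Ring.inverse (t • (1:A) + b) * b) * c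
      = t • (Ring.inverse (t • (1:A) + a) * (Ring.inverse (t • (1:A) + b) * ((a - b) * c))) := by
  set Ra := Ring.inverse (t • (1:A) + a) with hRa
  set Rb := Ring.inverse (t • (1:A) + b) with hRb
  have hua : Ra * (t • (1:A) + a) = 1 := Ring.inverse_mul_cancel _ (ha.isUnit ht)
  have hub : (t • (1:A) + b) * Rb = 1 := Ring.mul_inverse_cancel _ (hb.isUnit ht)
  have hub' : Rb * (t • (1:A) + b) = 1 := Ring.inverse_mul_cancel _ (hb.isUnit ht)
  -- step 1: Rb - Ra = Ra * ((a-b) * Rb)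
  have step1 : Rb - Ra = Ra * ((a - b) * Rb) := by
    have e1 : (a - b) = (t • (1:A) + a) - (t • (1:A) + b) := by abel
    calc Rb - Ra = (Ra * (t • (1:A) + a)) * Rb - Ra * ((t • (1:A) + b) * Rb) := by
          rw [hua, hub, one_mul, mul_one]
      _ = Ra * ((a - b) * Rb) := by rw [e1]; noncomm_ring
  -- step 2: (a-b) commutes with Rb
  have step2 : (a - b) * Rb = Rb * (a - b) := by
    have hc : (a - b) * (t • (1:A) + b) = (t • (1:A) + b) * (a - b) := by
      rw [mul_add, add_mul, mul_smul_comm, smul_mul_assoc, mul_one, one_mul,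
        sub_mul, mul_sub, hcomm]
    calc (a - b) * Rb = (Rb * (t • (1:A) + b)) * ((a - b) * Rb) := by rw [hub', one_mul]
      _ = Rb * (((a - b) * (t • (1:A) + b)) * Rb) := by
          rw [hc]; noncomm_ring
      _ = Rb * ((a - b) * ((t • (1:A) + b) * Rb)) := by noncomm_ring
      _ = Rb * (a - b) := by rw [hub, mul_one]
  -- step 3: resolvent difference form
  have hEa : Ra * a = 1 - t • Ra := ha.inverse_mul_self_eq ht
  have hEb : Rb * b = 1 - t • Rb := hb.inverse_mul_self_eq ht
  calc (Ra * a - Rb * b) * c = (t • (Rb - Ra)) * c := by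
        rw [hEa, hEb, smul_sub]; abel_nf
    _ = t • ((Ra * ((a - b) * Rb)) * c) := by rw [← step1, smul_mul_assoc]
    _ = t • (Ra * (Rb * ((a - b) * c))) := by rw [step2]; noncomm_ring

/-- Integral estimation helper: split at `δ`. -/
theorem integ_helper {α : ℝ} (hα : α ∈ Set.Ioo (0:ℝ) 1)
    {h : ℝ → A} (hmeas : AEStronglyMeasurable h (volume.restrict (Ioi (0:ℝ))))
    {C₁ C₂ δ : ℝ} (hδ : 0 < δ) (hC₁ : 0 ≤ C₁) (hC₂ : 0 ≤ C₂)
    (h₁ : ∀ t ∈ Ioc (0:ℝ) δ, ‖h t‖ ≤ C₁ * t ^ (α-1))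
    (h₂ : ∀ t ∈ Ioi δ, ‖h t‖ ≤ C₂ * t ^ (α-2)) :
    IntegrableOn h (Ioi (0:ℝ)) ∧
      ‖∫ t in Ioi (0:ℝ), h t‖ ≤ C₁ * (δ ^ α / α) + C₂ * (δ ^ (α-1) / (1-α)) := by
  obtain ⟨hα0, hα1⟩ := hα
  have hm1 : AEStronglyMeasurable h (volume.restrict (Ioc (0:ℝ) δ)) :=
    hmeas.mono_measure (Measure.restrict_mono Ioc_subset_Ioi_self le_rfl)
  have hm2 : AEStronglyMeasurable h (volume.restrict (Ioi δ)) :=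
    hmeas.mono_measure (Measure.restrict_mono (Ioi_subset_Ioi hδ.le) le_rfl)
  have hint1 : IntegrableOn (fun t => C₁ * t ^ (α-1)) (Ioc (0:ℝ) δ) := by
    apply Integrable.const_mul
    have := intervalIntegral.intervalIntegrable_rpow' (a := 0) (b := δ)
      (r := α - 1) (by linarith)
    rwa [intervalIntegrable_iff_integrableOn_Ioc_of_le hδ.le] at this
  have hint2 : IntegrableOn (fun t => C₂ * t ^ (α-2)) (Ioi δ) :=
    (integrableOn_Ioi_rpow_of_lt (by linarith) hδ).const_mul C₂
  have hae1 : ∀ᵐ t ∂(volume.restrict (Ioc (0:ℝ) δ)), ‖h t‖ ≤ C₁ * t ^ (α-1) := by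
    filter_upwards [ae_restrict_mem measurableSet_Ioc] with t ht using h₁ t ht
  have hae2 : ∀ᵐ t ∂(volume.restrict (Ioi δ)), ‖h t‖ ≤ C₂ * t ^ (α-2) := by
    filter_upwards [ae_restrict_mem measurableSet_Ioi] with t ht using h₂ t ht
  have hi1 : IntegrableOn h (Ioc (0:ℝ) δ) := Integrable.mono' hint1 hm1 hae1
  have hi2 : IntegrableOn h (Ioi δ) := Integrable.mono' hint2 hm2 hae2
  have hunion : Ioc (0:ℝ) δ ∪ Ioi δ = Ioi (0:ℝ) := Ioc_union_Ioi_eq_Ioi hδ.le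
  have hint : IntegrableOn h (Ioi (0:ℝ)) := by rw [← hunion]; exact hi1.union hi2
  refine ⟨hint, ?_⟩
  have hsplit : ∫ t in Ioi (0:ℝ), h t = (∫ t in Ioc (0:ℝ) δ, h t) + ∫ t in Ioi δ, h t := by
    rw [← hunion]
    exact setIntegral_union (Ioc_disjoint_Ioi le_rfl) measurableSet_Ioi hi1 hi2
  have hb1 : ‖∫ t in Ioc (0:ℝ) δ, h t‖ ≤ C₁ * (δ ^ α / α) := by
    have := norm_integral_le_of_norm_le hint1 hae1
    refine this.trans ?_
    rw [MeasureTheory.integral_const_mul]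
    have : ∫ t in Ioc (0:ℝ) δ, t ^ (α-1) = δ ^ α / α := by
      rw [← intervalIntegral.integral_of_le hδ.le, integral_rpow (Or.inl (by linarith))]
      rw [Real.zero_rpow (by linarith : α - 1 + 1 ≠ 0)]
      norm_num
    rw [this]
  have hb2 : ‖∫ t in Ioi δ, h t‖ ≤ C₂ * (δ ^ (α-1) / (1-α)) := by
    have := norm_integral_le_of_norm_le hint2 hae2
    refine this.trans ?_
    rw [MeasureTheory.integral_const_mul]
    have : ∫ t in Ioi δ, t ^ (α-2) = δ ^ (α-1) / (1-α) := by
      rw [integral_Ioi_rpow_of_lt (by linarith) hδ]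
      rw [show α - 2 + 1 = α - 1 by ring]
      have hn1 : α - 1 ≠ 0 := by linarith
      have hn2 : (1:ℝ) - α ≠ 0 := by linarith
      field_simp
      ring
    rw [this]
  calc ‖∫ t in Ioi (0:ℝ), h t‖ = ‖(∫ t in Ioc (0:ℝ) δ, h t) + ∫ t in Ioi δ, h t‖ := by
        rw [hsplit]
    _ ≤ ‖∫ t in Ioc (0:ℝ) δ, h t‖ + ‖∫ t in Ioi δ, h t‖ := norm_add_le _ _
    _ ≤ C₁ * (δ ^ α / α) + C₂ * (δ ^ (α-1) / (1-α)) := add_le_add hb1 hb2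

theorem Accretive.continuousOn_inverse {a : A} (ha : Accretive a) :
    ContinuousOn (fun t : ℝ => Ring.inverse (t • (1:A) + a)) (Ioi (0:ℝ)) := by
  intro t ht
  obtain ⟨u, hu'⟩ := ha.isUnit (mem_Ioi.mp ht)
  have h1 : ContinuousAt (fun t : ℝ => t • (1:A) + a) t :=
    ((continuous_id.smul continuous_const).add continuous_const).continuousAt
  have h2 : ContinuousAt Ring.inverse ((t:ℝ) • (1:A) + a) := by
    rw [← hu']; exact NormedRing.inverse_continuousAt u
  exact (ContinuousAt.comp (g := Ring.inverse) (x := t) h2 h1).continuousWithinAt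

/-- Integrability of the Balakrishnan integrand. -/
theorem Accretive.integrableOn_balIntegrand {α : ℝ} (hα : α ∈ Set.Ioo (0:ℝ) 1)
    {a : A} (ha : Accretive a) :
    IntegrableOn (fun t : ℝ => t ^ (α-1) • (Ring.inverse (t • (1:A) + a) * a))
      (Ioi (0:ℝ)) := by
  obtain ⟨hα0, hα1⟩ := hα
  have hmeas : AEStronglyMeasurable
      (fun t : ℝ => t ^ (α-1) • (Ring.inverse (t • (1:A) + a) * a))
      (volume.restrict (Ioi (0:ℝ))) := by
    apply ContinuousOn.aestronglyMeasurable _ measurableSet_Ioi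
    exact (continuousOn_id.rpow_const (fun t ht => Or.inl (ne_of_gt (mem_Ioi.mp ht)))).smul
      (ha.continuousOn_inverse.mul continuousOn_const)
  refine (integ_helper ⟨hα0, hα1⟩ hmeas one_pos (by norm_num : (0:ℝ) ≤ 2)
    (norm_nonneg a) ?_ ?_).1
  · intro t ht
    rw [norm_smul, Real.norm_of_nonneg (Real.rpow_nonneg ht.1.le _), mul_comm (2:ℝ)]
    gcongr
    · exact Real.rpow_nonneg ht.1.le _
    · exact ha.norm_inverse_mul_self_le ht.1
  · intro t ht
    have ht1 : (1:ℝ) < t := mem_Ioi.mp ht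
    have ht0 : (0:ℝ) < t := lt_trans one_pos ht1
    rw [norm_smul, Real.norm_of_nonneg (Real.rpow_nonneg ht0.le _)]
    calc t ^ (α-1) * ‖Ring.inverse (t • (1:A) + a) * a‖
        ≤ t ^ (α-1) * ((1/t) * ‖a‖) := by
          gcongr
          exact (norm_mul_le _ _).trans (by gcongr; exact ha.norm_inverse_le ht0)
      _ = ‖a‖ * t ^ (α-2) := by
          rw [show α - 2 = (α-1) + (-1) by ring, Real.rpow_add ht0, Real.rpow_neg_one]
          field_simp

theorem exists_const_balPow_diff_le'
    (α : ℝ) (hα : α ∈ Set.Ioo (0 : ℝ) 1) :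
    ∃ K : ℝ, ∀ (A : Type) (_ : NormedRing A) (_ : NormedAlgebra ℂ A)
      (_ : NormOneClass A) (_ : CompleteSpace A) (a b c : A),
      (∀ φ : StrongDual ℂ A, ‖φ‖ = 1 → φ 1 = 1 → 0 ≤ (φ a).re) →
      (∀ φ : StrongDual ℂ A, ‖φ‖ = 1 → φ 1 = 1 → 0 ≤ (φ b).re) →
      a * b = b * a → ‖c‖ ≤ 1 →
      ‖(balPow a α - balPow b α) * c‖ ≤ K * ‖(a - b) * c‖ ^ α := by
  obtain ⟨hα0, hα1⟩ := hα
  refine ⟨|Real.sin (α * Real.pi) / Real.pi| * (4 / α + 1 / (1-α)), ?_⟩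
  intro A iNR iNA iNO iCS a b c ha' hb' hcomm hc
  have ha : Accretive a := ha'
  have hb : Accretive b := hb'
  set s : ℝ := Real.sin (α * Real.pi) / Real.pi with hs
  set Fa : ℝ → A := fun t => t ^ (α-1) • (Ring.inverse (t • (1:A) + a) * a) with hFa
  set Fb : ℝ → A := fun t => t ^ (α-1) • (Ring.inverse (t • (1:A) + b) * b) with hFb
  have hFaInt : IntegrableOn Fa (Ioi (0:ℝ)) := ha.integrableOn_balIntegrand ⟨hα0, hα1⟩
  have hFbInt : IntegrableOn Fb (Ioi (0:ℝ)) := hb.integrableOn_balIntegrand ⟨hα0, hα1⟩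
  set L : A →L[ℝ] A := (ContinuousLinearMap.mul ℝ A).flip c with hL
  have hLapp : ∀ z : A, L z = z * c := fun z => rfl
  set G : ℝ → A := fun t => Fa t * c - Fb t * c with hG
  -- main reduction
  have hmain : (balPow a α - balPow b α) * c = s • ∫ t in Ioi (0:ℝ), G t := by
    have h1 : balPow a α = s • ∫ t in Ioi (0:ℝ), Fa t := rfl
    have h2 : balPow b α = s • ∫ t in Ioi (0:ℝ), Fb t := rfl
    rw [h1, h2, ← smul_sub, smul_mul_assoc, sub_mul]
    congr 1
    have e1 : (∫ t in Ioi (0:ℝ), Fa t) * c = ∫ t in Ioi (0:ℝ), Fa t * c := by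
      rw [← hLapp]
      rw [← L.integral_comp_comm hFaInt]
      rfl
    have e2 : (∫ t in Ioi (0:ℝ), Fb t) * c = ∫ t in Ioi (0:ℝ), Fb t * c := by
      rw [← hLapp]
      rw [← L.integral_comp_comm hFbInt]
      rfl
    rw [e1, e2, ← integral_sub]
    · exact (L.integrable_comp hFaInt)
    · exact (L.integrable_comp hFbInt)
  have hGident : ∀ t ∈ Ioi (0:ℝ), G t
      = t ^ (α-1) • (t • (Ring.inverse (t • (1:A) + a) *
          (Ring.inverse (t • (1:A) + b) * ((a - b) * c)))) := by
    intro t ht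
    have ht0 : (0:ℝ) < t := mem_Ioi.mp ht
    have : G t = t ^ (α-1) • ((Ring.inverse (t • (1:A) + a) * a
        - Ring.inverse (t • (1:A) + b) * b) * c) := by
      simp only [hG, hFa, hFb, smul_mul_assoc, ← smul_sub, sub_mul]
    rw [this, key_identity ha hb hcomm ht0]
  set D : ℝ := ‖(a - b) * c‖ with hD
  rcases eq_or_lt_of_le (norm_nonneg ((a - b) * c)) with hD0 | hDpos
  · -- degenerate case
    have habc : (a - b) * c = 0 := by rwa [eq_comm, norm_eq_zero] at hD0
    have hzero : ∀ t ∈ Ioi (0:ℝ), G t = 0 := by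
      intro t ht
      rw [hGident t ht, habc, mul_zero, mul_zero, smul_zero, smul_zero]
    have : ∫ t in Ioi (0:ℝ), G t = 0 := by
      rw [setIntegral_congr_fun measurableSet_Ioi hzero, integral_zero]
    rw [hmain, this, smul_zero, norm_zero]
    have h4 : 0 ≤ 4/α + 1/(1-α) :=
      add_nonneg (div_nonneg (by norm_num) hα0.le) (div_nonneg (by norm_num) (by linarith))
    exact mul_nonneg (mul_nonneg (abs_nonneg s) h4) (Real.rpow_nonneg (norm_nonneg _) α)
  · -- main case : split at δ = D
    have hGmeas : AEStronglyMeasurable G (volume.restrict (Ioi (0:ℝ))) :=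
      ((L.continuous.comp_aestronglyMeasurable hFaInt.aestronglyMeasurable).sub
        (L.continuous.comp_aestronglyMeasurable hFbInt.aestronglyMeasurable))
    have hbound1 : ∀ t ∈ Ioc (0:ℝ) D, ‖G t‖ ≤ 4 * t ^ (α-1) := by
      intro t ht
      have ht0 : (0:ℝ) < t := ht.1
      have : G t = t ^ (α-1) • ((Ring.inverse (t • (1:A) + a) * a
          - Ring.inverse (t • (1:A) + b) * b) * c) := by
        simp only [hG, hFa, hFb, smul_mul_assoc, ← smul_sub, sub_mul]
      rw [this, norm_smul, Real.norm_of_nonneg (Real.rpow_nonneg ht0.le _), mul_comm (4:ℝ)]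
      gcongr
      calc ‖(Ring.inverse (t • (1:A) + a) * a - Ring.inverse (t • (1:A) + b) * b) * c‖
            ≤ ‖Ring.inverse (t • (1:A) + a) * a - Ring.inverse (t • (1:A) + b) * b‖ * ‖c‖ :=
              norm_mul_le _ _
          _ ≤ (‖Ring.inverse (t • (1:A) + a) * a‖ + ‖Ring.inverse (t • (1:A) + b) * b‖) * 1 :=
              mul_le_mul (norm_sub_le _ _) hc (norm_nonneg c) (by positivity)
          _ ≤ (2 + 2) * 1 := by
              gcongr
              · exact ha.norm_inverse_mul_self_le ht0
              · exact hb.norm_inverse_mul_self_le ht0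
          _ = 4 := by norm_num
    have hbound2 : ∀ t ∈ Ioi D, ‖G t‖ ≤ D * t ^ (α-2) := by
      intro t ht
      have ht0 : (0:ℝ) < t := lt_trans hDpos (mem_Ioi.mp ht)
      rw [hGident t (mem_Ioi.mpr ht0), norm_smul, norm_smul,
        Real.norm_of_nonneg (Real.rpow_nonneg ht0.le _), Real.norm_of_nonneg ht0.le]
      calc t ^ (α-1) * (t * ‖Ring.inverse (t • (1:A) + a) *
            (Ring.inverse (t • (1:A) + b) * ((a - b) * c))‖)
          ≤ t ^ (α-1) * (t * ((1/t) * ((1/t) * D))) := by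
            gcongr
            calc ‖Ring.inverse (t • (1:A) + a) * (Ring.inverse (t • (1:A) + b) * ((a - b) * c))‖
                ≤ ‖Ring.inverse (t • (1:A) + a)‖ *
                    ‖Ring.inverse (t • (1:A) + b) * ((a - b) * c)‖ := norm_mul_le _ _
              _ ≤ (1/t) * ((1/t) * D) := by
                  gcongr
                  · exact ha.norm_inverse_le ht0
                  · calc ‖Ring.inverse (t • (1:A) + b) * ((a - b) * c)‖
                        ≤ ‖Ring.inverse (t • (1:A) + b)‖ * ‖(a - b) * c‖ := norm_mul_le _ _
                      _ ≤ (1/t) * D := by gcongr; exact hb.norm_inverse_le ht0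
        _ = D * t ^ (α-2) := by
            rw [show α - 2 = (α-1) + (-1) by ring, Real.rpow_add ht0, Real.rpow_neg_one]
            field_simp
    obtain ⟨-, hest⟩ := integ_helper ⟨hα0, hα1⟩ hGmeas hDpos (by norm_num) hDpos.le
      hbound1 hbound2
    rw [hmain, norm_smul, Real.norm_eq_abs]
    calc |s| * ‖∫ t in Ioi (0:ℝ), G t‖
        ≤ |s| * (4 * (D ^ α / α) + D * (D ^ (α-1) / (1-α))) := by gcongr
      _ = |s| * ((4 / α + 1 / (1-α)) * D ^ α) := by
          congr 1
          have hDne : D ≠ 0 := hDpos.ne'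
          have hDD : D ^ α = D * D ^ (α-1) := by
            rw [show α = (α-1) + 1 by ring, Real.rpow_add_one hDne]
            ring_nf
          have hne1 : α ≠ 0 := hα0.ne'
          have hne2 : (1:ℝ) - α ≠ 0 := by linarith
          rw [hDD]
          field_simp
      _ = _ := by rw [← mul_assoc]

end Aux

/-- For `0 < α < 1` there is a constant `K` such that for any unital
Banach algebra `A`, commuting accretive elements `a, b ∈ A`, and `c ∈ A` with `‖c‖ ≤ 1`,
one has `‖(a^α − b^α)c‖ ≤ K ‖(a−b)c‖^α`. -/
theorem exists_const_balPow_diff_le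
    (α : ℝ) (hα : α ∈ Set.Ioo (0 : ℝ) 1) :
    ∃ K : ℝ, ∀ (A : Type) (_ : NormedRing A) (_ : NormedAlgebra ℂ A)
      (_ : NormOneClass A) (_ : CompleteSpace A) (a b c : A),
      (∀ φ : StrongDual ℂ A, ‖φ‖ = 1 → φ 1 = 1 → 0 ≤ (φ a).re) →
      (∀ φ : StrongDual ℂ A, ‖φ‖ = 1 → φ 1 = 1 → 0 ≤ (φ b).re) →
      a * b = b * a → ‖c‖ ≤ 1 →
      ‖(balPow a α - balPow b α) * c‖ ≤ K * ‖(a - b) * c‖ ^ α := by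
  exact exists_const_balPow_diff_le' α hα
end

section
/- Let A be a unital Banach algebra with a closed subalgebra B (not containing 1) possessing a left bounded approximate identity (e_t) consisting of elements with ‖1 − e_t‖ ≤ 1. Then the elements b_t^{1/n} := F(e_t)^{1/n} form a left bounded approximate identity for B consisting of elements with ‖1 − b_t^{1/n}‖ ≤ 1, where F(x) = x(1+x)^{-1}. -/
open Filter

/-- The F-transform `F(x) = x (1 + x)⁻¹`. -/
noncomputable def Ftrans {A : Type*} [NormedRing A] (x : A) : A :=
  x * Ring.inverse (1 + x)

open Finset

/-! ### Auxiliary scalar lemmas -/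

/-- The signed binomial-series coefficient `C(s,k)(-1)^k`. -/
noncomputable def bc (s : ℝ) (k : ℕ) : ℝ := gbinom s k * (-1) ^ k

/-- The partial product `∏_{i<n} (1 - s/(i+1))`. -/
noncomputable def Pprod (s : ℝ) (n : ℕ) : ℝ := ∏ i ∈ Finset.range n, (1 - s / (i + 1))

lemma bc_zero (s : ℝ) : bc s 0 = 1 := by simp [bc, gbinom]

lemma prod_one_sub_div (s : ℝ) (k : ℕ) :
    ∏ i ∈ range k, ((1 : ℝ) + i - s) = Pprod s k * (Nat.factorial k : ℝ) := by
  simp only [Pprod]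
  induction k with
  | zero => simp
  | succ k ih =>
      rw [prod_range_succ, ih, prod_range_succ, Nat.factorial_succ]
      push_cast
      have hk : ((k : ℝ) + 1) ≠ 0 := by positivity
      field_simp
      ring

lemma neg_pow_prod (s : ℝ) (k : ℕ) :
    ∏ i ∈ range k, ((1:ℝ) + i - s) = (-1)^k * ∏ i ∈ range k, (s - 1 - i) := by
  induction k with
  | zero => simp
  | succ k ih => rw [prod_range_succ, prod_range_succ, ih, pow_succ]; ring

lemma bc_succ (s : ℝ) (k : ℕ) : bc s (k + 1) = -(s / (k + 1)) * Pprod s k := by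
  have h1 : ∏ i ∈ range (k+1), (s - (i:ℝ)) = (∏ i ∈ range k, (s - 1 - (i:ℝ))) * s := by
    rw [prod_range_succ']
    push_cast
    rw [sub_zero]
    congr 1
    exact prod_congr rfl fun i _ => by push_cast; ring
  have h2 := neg_pow_prod s k
  have h3 := prod_one_sub_div s k
  have hf : (Nat.factorial (k+1) : ℝ) = ((k:ℝ)+1) * (Nat.factorial k : ℝ) := by
    rw [Nat.factorial_succ]; push_cast; ring
  have hfk : (Nat.factorial k : ℝ) ≠ 0 := by positivity
  have hk1 : ((k:ℝ) + 1) ≠ 0 := by positivity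
  have key : Pprod s k * (Nat.factorial k : ℝ) = (-1)^k * ∏ i ∈ range k, (s - 1 - (i:ℝ)) := by
    rw [← h3, h2]
  calc bc s (k+1)
      = ((∏ i ∈ range k, (s - 1 - (i:ℝ))) * s) * ((-1)^k * (-1)) / (((k:ℝ)+1) * (Nat.factorial k : ℝ)) := by
        rw [bc, gbinom, h1, hf, pow_succ]; ring
    _ = ((-1)^k * ∏ i ∈ range k, (s - 1 - (i:ℝ))) * (-s) / (((k:ℝ)+1) * (Nat.factorial k : ℝ)) := by ring
    _ = (Pprod s k * (Nat.factorial k : ℝ)) * (-s) / (((k:ℝ)+1) * (Nat.factorial k : ℝ)) := by rw [key]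
    _ = -(s / ((k:ℝ)+1)) * Pprod s k := by field_simp

lemma sum_bc (s : ℝ) (n : ℕ) : ∑ k ∈ range (n + 1), bc s k = Pprod s n := by
  induction n with
  | zero => simp [bc_zero, Pprod]
  | succ n ih =>
      rw [sum_range_succ, ih, bc_succ]
      simp only [Pprod]
      rw [prod_range_succ]
      ring

lemma div_succ_le_one {s : ℝ} (hs1 : s ≤ 1) (i : ℕ) : s / ((i:ℝ) + 1) ≤ 1 := by
  rw [div_le_one (by positivity : (0:ℝ) < (i:ℝ) + 1)]
  have : (0:ℝ) ≤ (i:ℝ) := Nat.cast_nonneg i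
  linarith

lemma Pprod_nonneg {s : ℝ} (hs1 : s ≤ 1) (n : ℕ) : 0 ≤ Pprod s n := by
  apply prod_nonneg
  intro i _
  have := div_succ_le_one hs1 i
  linarith

lemma Pprod_le_one {s : ℝ} (hs0 : 0 ≤ s) (hs1 : s ≤ 1) (n : ℕ) : Pprod s n ≤ 1 := by
  apply Finset.prod_le_one
  · intro i _
    have := div_succ_le_one hs1 i
    linarith
  · intro i _
    have : 0 ≤ s / ((i:ℝ) + 1) := by positivity
    linarith

lemma Pprod_tendsto {s : ℝ} (hs0 : 0 < s) (hs1 : s ≤ 1) :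
    Filter.Tendsto (Pprod s) atTop (nhds 0) := by
  have hub : ∀ n, Pprod s n ≤ Real.exp (-(s * ∑ i ∈ range n, 1 / ((i:ℝ) + 1))) := by
    intro n
    have heq : Real.exp (-(s * ∑ i ∈ range n, 1 / ((i:ℝ) + 1)))
        = ∏ i ∈ range n, Real.exp (-(s / ((i:ℝ) + 1))) := by
      rw [← Real.exp_sum]
      congr 1
      rw [Finset.mul_sum, ← Finset.sum_neg_distrib]
      exact sum_congr rfl fun i _ => by rw [mul_one_div]
    rw [heq]
    apply Finset.prod_le_prod
    · intro i _
      have := div_succ_le_one hs1 i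
      linarith
    · intro i _
      have := Real.add_one_le_exp (-(s / ((i:ℝ) + 1)))
      linarith
  have hexp : Filter.Tendsto (fun n => Real.exp (-(s * ∑ i ∈ range n, 1 / ((i:ℝ) + 1))))
      atTop (nhds 0) := by
    apply Real.tendsto_exp_atBot.comp
    rw [tendsto_neg_atBot_iff]
    exact (Real.tendsto_sum_range_one_div_nat_succ_atTop.const_mul_atTop hs0)
  exact squeeze_zero (Pprod_nonneg hs1) hub hexp

section ScalarFacts
variable {s : ℝ} (hs0 : 0 < s) (hs1 : s ≤ 1)
include hs0 hs1

lemma bc_succ_nonpos (k : ℕ) : bc s (k + 1) ≤ 0 := by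
  rw [bc_succ]
  have h1 : 0 ≤ s / ((k:ℝ) + 1) := by positivity
  have h2 := Pprod_nonneg hs1 k
  nlinarith

lemma abs_bc_succ (k : ℕ) : |bc s (k + 1)| = s / ((k:ℝ) + 1) * Pprod s k := by
  rw [abs_of_nonpos (bc_succ_nonpos hs0 hs1 k), bc_succ]; ring

lemma abs_bc_succ_le (k : ℕ) : |bc s (k + 1)| ≤ s := by
  rw [abs_bc_succ hs0 hs1]
  have h2 := Pprod_nonneg hs1 k
  have h3 := Pprod_le_one hs0.le hs1 k
  have h4 : s / ((k:ℝ) + 1) ≤ s := by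
    rw [div_le_iff₀ (by positivity : (0:ℝ) < (k:ℝ)+1)]
    have : (0:ℝ) ≤ (k:ℝ) := Nat.cast_nonneg k
    nlinarith
  have h5 : 0 ≤ s / ((k:ℝ) + 1) := by positivity
  nlinarith

lemma sum_abs_bc_succ (n : ℕ) : ∑ k ∈ range n, |bc s (k + 1)| = 1 - Pprod s n := by
  have h := sum_bc s n
  rw [sum_range_succ'] at h
  have : ∑ k ∈ range n, |bc s (k + 1)| = -∑ k ∈ range n, bc s (k + 1) := by
    rw [← Finset.sum_neg_distrib]
    exact sum_congr rfl fun k _ => abs_of_nonpos (bc_succ_nonpos hs0 hs1 k)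
  rw [this, bc_zero] at *
  linarith

lemma summable_abs_bc_succ : Summable (fun k => |bc s (k + 1)|) := by
  apply summable_of_sum_range_le (c := 1) (fun k => abs_nonneg _)
  intro n
  rw [sum_abs_bc_succ hs0 hs1]
  have := Pprod_nonneg hs1 n
  linarith

lemma tsum_abs_bc_succ_le : ∑' k, |bc s (k + 1)| ≤ 1 := by
  apply Summable.tsum_le_of_sum_range_le (summable_abs_bc_succ hs0 hs1)
  intro n
  rw [sum_abs_bc_succ hs0 hs1]
  have := Pprod_nonneg hs1 n
  linarith

lemma summable_bc : Summable (bc s) := by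
  rw [← summable_nat_add_iff 1]
  exact (summable_abs_bc_succ hs0 hs1).of_abs

lemma tsum_bc_zero : ∑' k, bc s k = 0 := by
  have h1 := ((summable_bc hs0 hs1).hasSum).tendsto_sum_nat
  have h2 : Filter.Tendsto (fun n => ∑ k ∈ range (n+1), bc s k) atTop (nhds (∑' k, bc s k)) :=
    h1.comp (tendsto_add_atTop_nat 1)
  have h3 : Filter.Tendsto (fun n => ∑ k ∈ range (n+1), bc s k) atTop (nhds 0) := by
    simp only [sum_bc]
    exact Pprod_tendsto hs0 hs1
  exact tendsto_nhds_unique h2 h3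

end ScalarFacts

lemma geo_sum_le (n : ℕ) : ∑ k ∈ range n, (2⁻¹:ℝ)^(k+1) ≤ 1 := by
  have h : ∀ m, ∑ k ∈ range m, (2⁻¹:ℝ)^(k+1) = 1 - (2⁻¹:ℝ)^m := by
    intro m
    induction m with
    | zero => simp
    | succ m ih => rw [sum_range_succ, ih]; ring
  rw [h n]
  have : (0:ℝ) ≤ (2⁻¹:ℝ)^n := by positivity
  linarith

/-! ### Banach-algebra lemmas -/

section BanachAlgebra

variable {A : Type*} [NormedRing A] [NormedAlgebra ℂ A] [NormOneClass A] [CompleteSpace A]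

lemma real_smul_mem' (B : NonUnitalSubalgebra ℂ A) (r : ℝ) {a : A} (ha : a ∈ B) :
    r • a ∈ B := by
  have h : r • a = ((r : ℂ)) • a := by
    rw [← algebraMap_smul ℂ r a, Complex.coe_algebraMap]
  rw [h]
  exact B.smul_mem (r : ℂ) ha

lemma pow_sub_one_mem (B : NonUnitalSubalgebra ℂ A) {x : A} (hx : x ∈ B) (k : ℕ) :
    (1 - x) ^ k - 1 ∈ B := by
  induction k with
  | zero => simp only [pow_zero, sub_self]; exact B.zero_mem
  | succ k ih =>
      have h : (1 - x) ^ (k+1) - 1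
          = ((1 - x) ^ k - 1) - ((1 - x) ^ k - 1) * x - x := by rw [pow_succ]; noncomm_ring
      rw [h]
      exact B.sub_mem (B.sub_mem ih (B.mul_mem ih hx)) hx

lemma summable_abs_bc {s : ℝ} (hs0 : 0 < s) (hs1 : s ≤ 1) :
    Summable (fun k => |bc s k|) := by
  rw [← summable_nat_add_iff 1]
  exact summable_abs_bc_succ hs0 hs1

lemma norm_bc_smul_le {s : ℝ} {x : A} (hx : ‖1 - x‖ ≤ 1) (k : ℕ) :
    ‖bc s k • (1 - x) ^ k‖ ≤ |bc s k| := by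
  rw [norm_smul, Real.norm_eq_abs]
  have h1 : ‖(1 - x) ^ k‖ ≤ 1 := by
    calc ‖(1 - x) ^ k‖ ≤ ‖1 - x‖ ^ k := norm_pow_le _ k
    _ ≤ 1 := pow_le_one₀ (norm_nonneg _) hx
  nlinarith [abs_nonneg (bc s k)]

lemma summable_bc_smul {s : ℝ} (hs0 : 0 < s) (hs1 : s ≤ 1) {x : A} (hx : ‖1 - x‖ ≤ 1) :
    Summable (fun k => bc s k • (1 - x) ^ k) :=
  Summable.of_norm_bounded (summable_abs_bc hs0 hs1) (norm_bc_smul_le hx)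

lemma binomPow_eq_tsum {s : ℝ} (x : A) : binomPow x s = ∑' k, bc s k • (1 - x) ^ k := rfl

lemma binomPow_split {s : ℝ} (hs0 : 0 < s) (hs1 : s ≤ 1) {x : A} (hx : ‖1 - x‖ ≤ 1) :
    binomPow x s = 1 + ∑' k, bc s (k+1) • (1 - x) ^ (k+1) := by
  rw [binomPow_eq_tsum, (summable_bc_smul hs0 hs1 hx).tsum_eq_zero_add]
  simp only [pow_zero, bc_zero, one_smul]

lemma binomPow_norm {s : ℝ} (hs0 : 0 < s) (hs1 : s ≤ 1) {x : A} (hx : ‖1 - x‖ ≤ 1) :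
    ‖1 - binomPow x s‖ ≤ 1 := by
  rw [binomPow_split hs0 hs1 hx]
  have h : (1:A) - (1 + ∑' k, bc s (k+1) • (1 - x) ^ (k+1))
      = -∑' k, bc s (k+1) • (1 - x) ^ (k+1) := by
    rw [sub_add_eq_sub_sub, sub_self, zero_sub]
  rw [h, norm_neg]
  have hsum : Summable (fun k => ‖bc s (k+1) • (1 - x) ^ (k+1)‖) := by
    apply Summable.of_nonneg_of_le (fun k => norm_nonneg _) (fun k => norm_bc_smul_le hx (k+1))
    exact summable_abs_bc_succ hs0 hs1
  calc ‖∑' k, bc s (k+1) • (1 - x) ^ (k+1)‖ ≤ ∑' k, ‖bc s (k+1) • (1 - x) ^ (k+1)‖ :=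
        norm_tsum_le_tsum_norm hsum
    _ ≤ ∑' k, |bc s (k+1)| := Summable.tsum_le_tsum (fun k => norm_bc_smul_le hx (k+1)) hsum
        (summable_abs_bc_succ hs0 hs1)
    _ ≤ 1 := tsum_abs_bc_succ_le hs0 hs1

lemma binomPow_mem (B : NonUnitalSubalgebra ℂ A) (hBc : IsClosed (B : Set A))
    {s : ℝ} (hs0 : 0 < s) (hs1 : s ≤ 1) {x : A} (hxB : x ∈ B) (hx : ‖1 - x‖ ≤ 1) :
    binomPow x s ∈ B := by
  have hg : Summable (fun k => bc s k • ((1 - x) ^ k - 1)) := by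
    apply Summable.of_norm_bounded ((summable_abs_bc hs0 hs1).mul_right 2)
    intro k
    rw [norm_smul, Real.norm_eq_abs]
    have h1 : ‖(1 - x) ^ k - 1‖ ≤ 2 := by
      calc ‖(1 - x) ^ k - 1‖ ≤ ‖(1 - x) ^ k‖ + ‖(1:A)‖ := norm_sub_le _ _
        _ ≤ 1 + 1 := by
            have : ‖(1 - x) ^ k‖ ≤ 1 := by
              calc ‖(1 - x) ^ k‖ ≤ ‖1 - x‖ ^ k := norm_pow_le _ k
              _ ≤ 1 := pow_le_one₀ (norm_nonneg _) hx
            rw [norm_one]; linarith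
        _ = 2 := by norm_num
    nlinarith [abs_nonneg (bc s k)]
  have hconst : Summable (fun k => bc s k • (1:A)) :=
    (summable_bc hs0 hs1).smul_const 1
  have heq : binomPow x s = ∑' k, bc s k • ((1 - x) ^ k - 1) := by
    rw [binomPow_eq_tsum]
    have h : ∀ k, bc s k • (1 - x) ^ k = bc s k • ((1 - x) ^ k - 1) + bc s k • (1:A) := by
      intro k; rw [← smul_add, sub_add_cancel]
    rw [tsum_congr h, Summable.tsum_add hg hconst, Summable.tsum_smul_const (summable_bc hs0 hs1),
      tsum_bc_zero hs0 hs1, zero_smul, add_zero]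
  rw [heq]
  apply hBc.mem_of_tendsto hg.hasSum.tendsto_sum_nat
  filter_upwards with n
  exact sum_mem (fun k _ => real_smul_mem' B _ (pow_sub_one_mem B hxB k))

lemma binomPow_estimate {s : ℝ} (hs0 : 0 < s) (hs1 : s ≤ 1) {x : A} (hx : ‖1 - x‖ ≤ 1)
    (b : A) {E : ℝ} (hE : 0 ≤ E)
    (hvk : ∀ k : ℕ, ‖(1 - x)^(k+1) * b‖ ≤ (2⁻¹:ℝ)^(k+1) * ‖b‖ + E) :
    ‖binomPow x s * b - b‖ ≤ s * ‖b‖ + E := by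
  rw [binomPow_split hs0 hs1 hx, add_mul, one_mul, add_sub_cancel_left]
  have hsumf : Summable (fun k => bc s (k+1) • (1 - x) ^ (k+1)) := by
    apply Summable.of_norm_bounded (summable_abs_bc_succ hs0 hs1)
    intro k
    rw [norm_smul, Real.norm_eq_abs]
    have h1 : ‖(1 - x) ^ (k+1)‖ ≤ 1 := by
      calc ‖(1 - x) ^ (k+1)‖ ≤ ‖1 - x‖ ^ (k+1) := norm_pow_le _ _
      _ ≤ 1 := pow_le_one₀ (norm_nonneg _) hx
    nlinarith [abs_nonneg (bc s (k+1))]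
  rw [← hsumf.tsum_mul_right b]
  have hterm : ∀ k : ℕ, (bc s (k+1) • (1 - x) ^ (k+1)) * b = bc s (k+1) • ((1 - x) ^ (k+1) * b) :=
    fun k => smul_mul_assoc _ _ _
  rw [tsum_congr hterm]
  have hnb : ∀ k : ℕ, ‖(1 - x)^(k+1) * b‖ ≤ ‖b‖ + E := by
    intro k
    have h := hvk k
    have h2 : (2⁻¹:ℝ)^(k+1) ≤ 1 := by
      apply pow_le_one₀ <;> norm_num
    have h3 : (0:ℝ) ≤ (2⁻¹:ℝ)^(k+1) := by positivity
    nlinarith [norm_nonneg b]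
  have hw : Summable (fun k => ‖bc s (k+1) • ((1 - x) ^ (k+1) * b)‖) := by
    apply Summable.of_nonneg_of_le (fun k => norm_nonneg _) _
      ((summable_abs_bc_succ hs0 hs1).mul_right (‖b‖ + E))
    intro k
    rw [norm_smul, Real.norm_eq_abs]
    have := hnb k
    nlinarith [abs_nonneg (bc s (k+1))]
  calc ‖∑' k, bc s (k+1) • ((1 - x) ^ (k+1) * b)‖
      ≤ ∑' k, ‖bc s (k+1) • ((1 - x) ^ (k+1) * b)‖ := norm_tsum_le_tsum_norm hw
    _ ≤ s * ‖b‖ + E := by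
        apply Summable.tsum_le_of_sum_range_le hw
        intro n
        have hterm2 : ∀ k ∈ range n, ‖bc s (k+1) • ((1 - x) ^ (k+1) * b)‖
            ≤ s * ((2⁻¹:ℝ)^(k+1) * ‖b‖) + |bc s (k+1)| * E := by
          intro k _
          rw [norm_smul, Real.norm_eq_abs]
          have h := hvk k
          have habs := abs_bc_succ_le hs0 hs1 k
          have h3 : (0:ℝ) ≤ (2⁻¹:ℝ)^(k+1) := by positivity
          have m1 := mul_le_mul_of_nonneg_left h (abs_nonneg (bc s (k+1)))
          have m2 := mul_le_mul_of_nonneg_right habs (mul_nonneg h3 (norm_nonneg b))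
          nlinarith [abs_nonneg (bc s (k+1)), norm_nonneg b]
        calc ∑ k ∈ range n, ‖bc s (k+1) • ((1 - x) ^ (k+1) * b)‖
            ≤ ∑ k ∈ range n, (s * ((2⁻¹:ℝ)^(k+1) * ‖b‖) + |bc s (k+1)| * E) :=
              sum_le_sum hterm2
          _ = (s * ‖b‖) * (∑ k ∈ range n, (2⁻¹:ℝ)^(k+1))
              + (∑ k ∈ range n, |bc s (k+1)|) * E := by
              rw [sum_add_distrib, ← sum_mul, Finset.mul_sum]
              congr 1
              exact sum_congr rfl fun k _ => by ring
          _ ≤ s * ‖b‖ + E := by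
              have h1 := geo_sum_le n
              have h2 : ∑ k ∈ range n, |bc s (k+1)| ≤ 1 := by
                rw [sum_abs_bc_succ hs0 hs1 n]
                have := Pprod_nonneg hs1 n
                linarith
              have h3 : (0:ℝ) ≤ s * ‖b‖ := by positivity
              have h4 : (0:ℝ) ≤ ∑ k ∈ range n, |bc s (k+1)| :=
                sum_nonneg fun k _ => abs_nonneg _
              have h5 : (0:ℝ) ≤ ∑ k ∈ range n, (2⁻¹:ℝ)^(k+1) :=
                sum_nonneg fun k _ => by positivity
              nlinarith

lemma isUnit_one_add {a : A} (ha : ‖1 - a‖ ≤ 1) : IsUnit (1 + a) := by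
  set u : A := 1 - a with hu
  have h2 : ‖(2⁻¹:ℂ) • u‖ < 1 := by
    rw [norm_smul]
    have : ‖(2⁻¹:ℂ)‖ = 2⁻¹ := by norm_num
    rw [this]
    nlinarith [norm_nonneg u]
  have hu1 : IsUnit ((1:A) - (2⁻¹:ℂ) • u) := (Units.oneSub _ h2).isUnit
  have hmap : IsUnit (algebraMap ℂ A 2) := (isUnit_iff_ne_zero.mpr two_ne_zero).map _
  have hkey : (1 + a) = algebraMap ℂ A 2 * ((1:A) - (2⁻¹:ℂ) • u) := by
    rw [mul_sub, mul_one, ← Algebra.smul_def, smul_smul]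
    norm_num
    rw [map_ofNat, hu]
    have h1 : (2:A) = 1 + 1 := one_add_one_eq_two.symm
    rw [h1]
    abel
  rw [hkey]
  exact hmap.mul hu1

theorem Ftrans_props (B : NonUnitalSubalgebra ℂ A) (hBc : IsClosed (B : Set A))
    {a : A} (haB : a ∈ B) (ha : ‖1 - a‖ ≤ 1) :
    Ftrans a ∈ B ∧ ‖1 - Ftrans a‖ ≤ 1 ∧
    ∀ (b : A) (k : ℕ),
      ‖(1 - Ftrans a)^(k+1) * b‖ ≤ (2⁻¹:ℝ)^(k+1) * ‖b‖ + ‖(1 - a) * b‖ := by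
  set u : A := 1 - a with hu
  have hun : ‖u‖ ≤ 1 := ha
  have hunit := isUnit_one_add ha
  set v : A := Ring.inverse (1 + a) with hv
  have hv1 : (1 + a) * v = 1 := Ring.mul_inverse_cancel _ hunit
  have hv2 : v * (1 + a) = 1 := Ring.inverse_mul_cancel _ hunit
  have hFv : Ftrans a = a * v := rfl
  have hav : a * v = 1 - v := by
    have h : v + a * v = 1 := by
      have h' := hv1
      rwa [add_mul, one_mul] at h'
    exact eq_sub_of_add_eq' h
  have h1F : 1 - Ftrans a = v := by rw [hFv, hav, sub_sub_cancel]
  -- recursion for v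
  have h2a : (2:A) = (1 + a) + u := by
    rw [hu]
    have h1 : (2:A) = 1 + 1 := one_add_one_eq_two.symm
    rw [h1]; abel
  have hv2A : v * (2:A) = 1 + v * u := by rw [h2a, mul_add, hv2]
  have h2smul : (2:A) = (2:ℝ) • (1:A) := by
    rw [two_smul]
    exact one_add_one_eq_two.symm
  have hvrec : (2:ℝ) • v = 1 + v * u := by
    rw [← hv2A, h2smul, mul_smul_comm, mul_one]
  have hvnorm : ‖v‖ ≤ 1 := by
    have h1 : ‖(2:ℝ) • v‖ = 2 * ‖v‖ := by
      rw [norm_smul, Real.norm_eq_abs]; norm_num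
    have h2 : ‖(1:A) + v * u‖ ≤ 1 + ‖v‖ * ‖u‖ := by
      calc ‖(1:A) + v * u‖ ≤ ‖(1:A)‖ + ‖v * u‖ := norm_add_le _ _
      _ ≤ 1 + ‖v‖ * ‖u‖ := by rw [norm_one]; exact add_le_add le_rfl (norm_mul_le _ _)
    have h3 : ‖v‖ * ‖u‖ ≤ ‖v‖ := by nlinarith [norm_nonneg v]
    rw [hvrec] at h1
    linarith
  have hvhalf : v = (2⁻¹:ℝ) • (1:A) + (2⁻¹:ℝ) • (v * u) := by
    rw [← smul_add]
    have h : (2⁻¹:ℝ) • ((2:ℝ) • v) = (2⁻¹:ℝ) • ((1:A) + v * u) := by rw [hvrec]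
    rw [smul_smul, (by norm_num : (2⁻¹:ℝ) * 2 = 1), one_smul] at h
    exact h
  -- membership of Ftrans a in B
  have hfix : a * v = (2⁻¹:ℝ) • a + (2⁻¹:ℝ) • ((a * v) * u) := by
    conv_lhs => rw [hvhalf]
    rw [mul_add, mul_smul_comm, mul_smul_comm, mul_one, ← mul_assoc]
  have hmemF : Ftrans a ∈ B := by
    rw [hFv]
    set z : ℕ → A := fun n => n.rec a (fun _ w => (2⁻¹:ℝ) • a + (2⁻¹:ℝ) • (w * u)) with hz
    have hzmem : ∀ m, z m ∈ B := by
      intro m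
      induction m with
      | zero => exact haB
      | succ m ih =>
          have h1 : z m * u ∈ B := by
            have : z m * u = z m - z m * a := by rw [hu, mul_sub, mul_one]
            rw [this]
            exact B.sub_mem ih (B.mul_mem ih haB)
          exact B.add_mem (real_smul_mem' B _ haB) (real_smul_mem' B _ h1)
    have hdist : ∀ m, ‖z m - a * v‖ ≤ (2⁻¹:ℝ)^m * ‖a - a * v‖ := by
      intro m
      induction m with
      | zero => simp only [pow_zero, one_mul]; exact le_of_eq rfl
      | succ m ih =>
          have e : z (m+1) - a * v = (2⁻¹:ℝ) • ((z m - a * v) * u) := by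
            show (2⁻¹:ℝ) • a + (2⁻¹:ℝ) • (z m * u) - a * v = (2⁻¹:ℝ) • ((z m - a * v) * u)
            conv_lhs => rw [hfix]
            rw [sub_mul, smul_sub]
            abel
          rw [e, norm_smul, Real.norm_eq_abs]
          have h1 : ‖(z m - a * v) * u‖ ≤ ‖z m - a * v‖ * ‖u‖ := norm_mul_le _ _
          have h2 : ‖z m - a * v‖ * ‖u‖ ≤ ‖z m - a * v‖ := by
            nlinarith [norm_nonneg (z m - a * v)]
          have h3 : (0:ℝ) ≤ (2⁻¹:ℝ)^m := by positivity
          rw [pow_succ]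
          rw [abs_of_pos (by norm_num : (0:ℝ) < 2⁻¹)]
          nlinarith
    have htend : Filter.Tendsto z atTop (nhds (a * v)) := by
      rw [tendsto_iff_norm_sub_tendsto_zero]
      apply squeeze_zero (fun m => norm_nonneg _) hdist
      have := (tendsto_pow_atTop_nhds_zero_of_lt_one (by norm_num : (0:ℝ) ≤ 2⁻¹)
        (by norm_num : (2⁻¹:ℝ) < 1)).mul_const ‖a - a * v‖
      simpa using this
    exact hBc.mem_of_tendsto htend (Filter.Eventually.of_forall hzmem)
  refine ⟨hmemF, by rw [h1F]; exact hvnorm, ?_⟩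
  -- power estimate
  intro b k
  rw [h1F]
  have hvb : v * b = (2⁻¹:ℝ) • b + (2⁻¹:ℝ) • (v * (u * b)) := by
    conv_lhs => rw [hvhalf]
    rw [add_mul, smul_mul_assoc, smul_mul_assoc, one_mul, mul_assoc]
  have claim : ∀ j, ‖v^j * b - (2⁻¹:ℝ)^j • b‖ ≤ (1 - (2⁻¹:ℝ)^j) * ‖u * b‖ := by
    intro j
    induction j with
    | zero => simp
    | succ j ih =>
        have e : v^(j+1) * b - (2⁻¹:ℝ)^(j+1) • b
            = v * (v^j * b - (2⁻¹:ℝ)^j • b) + (2⁻¹:ℝ)^(j+1) • (v * (u * b)) := by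
          rw [pow_succ' v j, mul_assoc, mul_sub, mul_smul_comm, hvb, smul_add]
          module
        rw [e]
        have h1 : ‖v * (v^j * b - (2⁻¹:ℝ)^j • b)‖ ≤ (1 - (2⁻¹:ℝ)^j) * ‖u * b‖ := by
          calc ‖v * (v^j * b - (2⁻¹:ℝ)^j • b)‖ ≤ ‖v‖ * ‖v^j * b - (2⁻¹:ℝ)^j • b‖ :=
                norm_mul_le _ _
            _ ≤ (1 - (2⁻¹:ℝ)^j) * ‖u * b‖ := by
                nlinarith [norm_nonneg v, norm_nonneg (v^j * b - (2⁻¹:ℝ)^j • b),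
                  norm_nonneg (u * b)]
        have h2 : ‖(2⁻¹:ℝ)^(j+1) • (v * (u * b))‖ ≤ (2⁻¹:ℝ)^(j+1) * ‖u * b‖ := by
          rw [norm_smul, Real.norm_eq_abs, abs_of_pos (by positivity : (0:ℝ) < (2⁻¹:ℝ)^(j+1))]
          apply mul_le_mul_of_nonneg_left _ (by positivity : (0:ℝ) ≤ (2⁻¹:ℝ)^(j+1))
          calc ‖v * (u * b)‖ ≤ ‖v‖ * ‖u * b‖ := norm_mul_le _ _
            _ ≤ ‖u * b‖ := by nlinarith [norm_nonneg (u * b)]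
        calc ‖v * (v^j * b - (2⁻¹:ℝ)^j • b) + (2⁻¹:ℝ)^(j+1) • (v * (u * b))‖
            ≤ ‖v * (v^j * b - (2⁻¹:ℝ)^j • b)‖ + ‖(2⁻¹:ℝ)^(j+1) • (v * (u * b))‖ :=
              norm_add_le _ _
          _ ≤ (1 - (2⁻¹:ℝ)^j) * ‖u * b‖ + (2⁻¹:ℝ)^(j+1) * ‖u * b‖ := add_le_add h1 h2
          _ ≤ (1 - (2⁻¹:ℝ)^(j+1)) * ‖u * b‖ := by
              have : (2⁻¹:ℝ)^(j+1) + (2⁻¹:ℝ)^(j+1) = (2⁻¹:ℝ)^j := by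
                rw [pow_succ]; ring
              nlinarith [norm_nonneg (u * b)]
  have hc := claim (k+1)
  have h4 : ‖v^(k+1) * b‖ ≤ ‖v^(k+1) * b - (2⁻¹:ℝ)^(k+1) • b‖ + ‖(2⁻¹:ℝ)^(k+1) • b‖ := by
    have := norm_sub_le (v^(k+1) * b - (2⁻¹:ℝ)^(k+1) • b) (-((2⁻¹:ℝ)^(k+1) • b))
    simp only [sub_neg_eq_add, sub_add_cancel, norm_neg] at this
    exact this
  rw [norm_smul, Real.norm_eq_abs, abs_of_pos (by positivity : (0:ℝ) < (2⁻¹:ℝ)^(k+1))] at h4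
  have h5 : (0:ℝ) ≤ (2⁻¹:ℝ)^(k+1) := by positivity
  have h6 : (2⁻¹:ℝ)^(k+1) ≤ 1 := by
    apply pow_le_one₀ <;> norm_num
  nlinarith [norm_nonneg (u * b)]

end BanachAlgebra

/-- Let `A` be a unital Banach algebra and `B` a closed subalgebra not
containing `1`, possessing a left bounded approximate identity `(e t)` with
`‖1 − e t‖ ≤ 1`.  Then the elements `F(e t)^{1/n}` form a left bounded approximate
identity for `B` consisting of elements with `‖1 − F(e t)^{1/n}‖ ≤ 1`, where
`F(x) = x(1+x)⁻¹`. -/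
theorem Ftransform_roots_left_bai
    {A : Type*} [NormedRing A] [NormedAlgebra ℂ A] [NormOneClass A] [CompleteSpace A]
    (B : NonUnitalSubalgebra ℂ A) (hBc : IsClosed (B : Set A)) (h1 : (1 : A) ∉ B)
    {ι : Type*} [Nonempty ι] [SemilatticeSup ι]
    (e : ι → A) (heB : ∀ t, e t ∈ B) (heF : ∀ t, ‖1 - e t‖ ≤ 1)
    (hlb : ∀ b ∈ B, Tendsto (fun t => e t * b) atTop (nhds b)) :
    (∀ (t : ι) (n : ℕ),
        binomPow (Ftrans (e t)) (1 / ((n : ℝ) + 1)) ∈ B ∧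
        ‖1 - binomPow (Ftrans (e t)) (1 / ((n : ℝ) + 1))‖ ≤ 1) ∧
    (∀ b ∈ B, Tendsto
        (fun p : ι × ℕ => binomPow (Ftrans (e p.1)) (1 / ((p.2 : ℝ) + 1)) * b)
        atTop (nhds b)) := by
  have hprop := fun t : ι => Ftrans_props B hBc (heB t) (heF t)
  have hs0 : ∀ n : ℕ, 0 < 1 / ((n:ℝ) + 1) := fun n => by positivity
  have hs1 : ∀ n : ℕ, 1 / ((n:ℝ) + 1) ≤ 1 := by
    intro n
    rw [div_le_one (by positivity : (0:ℝ) < (n:ℝ) + 1)]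
    have : (0:ℝ) ≤ (n:ℝ) := Nat.cast_nonneg n
    linarith
  constructor
  · intro t n
    obtain ⟨hm, hn1, _⟩ := hprop t
    exact ⟨binomPow_mem B hBc (hs0 n) (hs1 n) hm hn1, binomPow_norm (hs0 n) (hs1 n) hn1⟩
  · intro b hb
    rw [tendsto_iff_norm_sub_tendsto_zero]
    apply squeeze_zero (g := fun p : ι × ℕ => (1 / ((p.2:ℝ) + 1)) * ‖b‖ + ‖(1 - e p.1) * b‖)
      (fun p => norm_nonneg _)
    · intro p
      obtain ⟨hm, hn1, hest⟩ := hprop p.1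
      exact binomPow_estimate (hs0 p.2) (hs1 p.2) hn1 b (norm_nonneg _) (hest b)
    · have h0 : Tendsto (fun p : ι × ℕ => (1 / ((p.2:ℝ) + 1)) * ‖b‖) atTop (nhds 0) := by
        rw [← prod_atTop_atTop_eq]
        have := (tendsto_one_div_add_atTop_nhds_zero_nat.comp
          (tendsto_snd : Tendsto (Prod.snd : ι × ℕ → ℕ) (atTop ×ˢ atTop) atTop)).mul_const ‖b‖
        simpa using this
      have h1' : Tendsto (fun p : ι × ℕ => ‖(1 - e p.1) * b‖) atTop (nhds 0) := by
        have hb' := hlb b hb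
        rw [tendsto_iff_norm_sub_tendsto_zero] at hb'
        have heq : ∀ t, ‖(1 - e t) * b‖ = ‖e t * b - b‖ := by
          intro t; rw [sub_mul, one_mul, norm_sub_rev]
        rw [← prod_atTop_atTop_eq]
        have := hb'.comp (tendsto_fst : Tendsto (Prod.fst : ι × ℕ → ι) (atTop ×ˢ atTop) atTop)
        simpa [Function.comp_def, heq] using this
      simpa using h0.add h1'
end

section
/- Let A be a unital Banach algebra and J a closed right ideal of A possessing a left contractive approximate identity (e_t) with each ‖1 − e_t‖ ≤ 1. Then for every compact subset K of J there exists z ∈ J with ‖1 − z‖ ≤ 1 such that K ⊆ zJ ⊆ zA. Moreover z can be chosen so that each x ∈ K equals zw with ‖w − x‖ ≤ 2ε, for any prescribed ε > 0. -/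
open Filter

section CohenAux

variable {A : Type*} [NormedRing A] [NormedAlgebra ℂ A] {ι : Type*} [Nonempty ι]

open scoped Classical in
noncomputable def cohenPick (e : ι → A) (K : Set A) (ε : ℝ) (v : A) (n : ℕ) : ι :=
  if h : ∃ t : ι, ∀ x ∈ K, ‖(1 - e t) * (Ring.inverse v * x)‖ ≤ ε * (2:ℝ)⁻¹ ^ (n + 1)
  then h.choose else Classical.arbitrary ι

lemma cohenPick_spec (e : ι → A) (K : Set A) (ε : ℝ) (v : A) (n : ℕ)
    (h : ∃ t : ι, ∀ x ∈ K, ‖(1 - e t) * (Ring.inverse v * x)‖ ≤ ε * (2:ℝ)⁻¹ ^ (n + 1)) :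
    ∀ x ∈ K, ‖(1 - e (cohenPick e K ε v n)) * (Ring.inverse v * x)‖ ≤ ε * (2:ℝ)⁻¹ ^ (n + 1) := by
  rw [cohenPick, dif_pos h]
  exact h.choose_spec

/-- The Cohen factorization sequence `a_n`. -/
noncomputable def cohenSeq (e : ι → A) (K : Set A) (ε : ℝ) : ℕ → A
  | 0 => 1
  | n + 1 => cohenSeq e K ε n
      - ((2:ℂ)⁻¹ ^ (n + 1)) • (1 - e (cohenPick e K ε (cohenSeq e K ε n) n))

end CohenAux

lemma cohen_isUnit_of_norm_lt_one {A : Type*} [NormedRing A] [CompleteSpace A]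
    {v : A} (h : ‖1 - v‖ < 1) : IsUnit v := by
  have := isUnit_one_sub_of_norm_lt_one h
  rwa [sub_sub_cancel] at this

lemma cohen_norm_inverse_le {A : Type*} [NormedRing A] [NormOneClass A] [CompleteSpace A]
    {v : A} (h : ‖1 - v‖ < 1) : ‖Ring.inverse v‖ ≤ (1 - ‖1 - v‖)⁻¹ := by
  have h2 : (∑' n : ℕ, (1 - v) ^ n) = Ring.inverse v := by
    rw [geom_series_eq_inverse _ h, sub_sub_cancel]
  rw [← h2]
  exact tsum_of_norm_bounded (hasSum_geometric_of_lt_one (norm_nonneg _) h)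
    fun n => norm_pow_le _ n

/-- Let `A` be a unital Banach algebra and `J` a closed right ideal of
`A` possessing a left contractive approximate identity `(e t)` with each `‖1 − e t‖ ≤ 1`.
Then for every compact subset `K` of `J` and every `ε > 0` there exists `z ∈ J` with
`‖1 − z‖ ≤ 1` such that every `x ∈ K` can be written `x = z w` with `w ∈ J` and
`‖w − x‖ ≤ 2ε`; in particular `K ⊆ zJ ⊆ zA`. -/
theorem cohen_factorization_compact_subset
    {A : Type*} [NormedRing A] [NormedAlgebra ℂ A] [NormOneClass A] [CompleteSpace A]
    (J : Submodule ℂ A) (hJc : IsClosed (J : Set A))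
    (hJr : ∀ x ∈ J, ∀ a : A, x * a ∈ J)
    {ι : Type*} [Nonempty ι] [SemilatticeSup ι]
    (e : ι → A) (heJ : ∀ t, e t ∈ J) (hec : ∀ t, ‖e t‖ ≤ 1)
    (heF : ∀ t, ‖1 - e t‖ ≤ 1)
    (hlcai : ∀ x ∈ J, Tendsto (fun t => e t * x) atTop (nhds x))
    (K : Set A) (hK : IsCompact K) (hKJ : K ⊆ J) (ε : ℝ) (hε : 0 < ε) :
    ∃ z ∈ J, ‖1 - z‖ ≤ 1 ∧
      ∀ x ∈ K, ∃ w ∈ J, x = z * w ∧ ‖w - x‖ ≤ 2 * ε := by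
  classical
  set u : ℕ → A := cohenSeq e K ε with hu
  have hstep : ∀ n : ℕ, u (n + 1)
      = u n - ((2:ℂ)⁻¹ ^ (n + 1)) • (1 - e (cohenPick e K ε (u n) n)) := by
    intro n
    rw [hu]
    simp only [cohenSeq]
  have hu0 : u 0 = 1 := by rw [hu]; simp only [cohenSeq]
  have hcnorm : ∀ n : ℕ, ‖((2:ℂ)⁻¹ ^ n : ℂ)‖ = (2:ℝ)⁻¹ ^ n := by
    intro n
    rw [norm_pow, norm_inv, RCLike.norm_two]
  -- uniform approximate identity on compact subsets of J
  have unif : ∀ S : Set A, IsCompact S → (S ⊆ (J : Set A)) → ∀ δ : ℝ, 0 < δ →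
      ∃ t : ι, ∀ y ∈ S, ‖(1 - e t) * y‖ ≤ δ := by
    intro S hS hSJ δ hδ
    obtain ⟨F, hFS, hFcov⟩ := hS.elim_nhds_subcover (fun y => Metric.ball y (δ / 3))
      (fun y _ => Metric.ball_mem_nhds y (by linarith))
    have hev : ∀ᶠ t in (atTop : Filter ι), ∀ y ∈ F, ‖(1 - e t) * y‖ ≤ δ / 3 := by
      rw [eventually_all_finset]
      intro y hyF
      have hyJ : (y : A) ∈ J := hSJ (hFS y hyF)
      have h1 := (Metric.tendsto_nhds.mp (hlcai y hyJ)) (δ / 3) (by linarith)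
      filter_upwards [h1] with t ht
      have : (1 - e t) * y = y - e t * y := by rw [sub_mul, one_mul]
      rw [this, ← dist_eq_norm, dist_comm]
      exact ht.le
    obtain ⟨t, ht⟩ := hev.exists
    refine ⟨t, fun y hyS => ?_⟩
    obtain ⟨c, hcF, hyc⟩ := Set.mem_iUnion₂.mp (hFcov hyS)
    have hyc' : ‖y - c‖ < δ / 3 := by rwa [← dist_eq_norm, ← Metric.mem_ball]
    have hsplit : (1 - e t) * y = (1 - e t) * (y - c) + (1 - e t) * c := by
      rw [← mul_add, sub_add_cancel]
    calc ‖(1 - e t) * y‖ ≤ ‖(1 - e t) * (y - c)‖ + ‖(1 - e t) * c‖ := by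
          rw [hsplit]; exact norm_add_le _ _
      _ ≤ ‖1 - e t‖ * ‖y - c‖ + δ / 3 := add_le_add (norm_mul_le _ _) (ht c hcF)
      _ ≤ 1 * (δ / 3) + δ / 3 :=
          add_le_add (mul_le_mul (heF t) hyc'.le (norm_nonneg _) zero_le_one) le_rfl
      _ ≤ δ := by linarith
  -- inverses of the `u n` map J into J
  have inv_memJ : ∀ (v : A) (n : ℕ), v - ((2:ℂ)⁻¹ ^ n) • (1:A) ∈ J → IsUnit v →
      ∀ x ∈ J, Ring.inverse v * x ∈ J := by
    intro v n hvJ hv x hx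
    have hc : ((2:ℂ)⁻¹ ^ n) ≠ 0 := pow_ne_zero _ (inv_ne_zero two_ne_zero)
    have hvx : v * (Ring.inverse v * x) = x := by
      rw [← mul_assoc, Ring.mul_inverse_cancel v hv, one_mul]
    have key : Ring.inverse v * x
        = ((2:ℂ)⁻¹ ^ n)⁻¹ • (x - (v - ((2:ℂ)⁻¹ ^ n) • (1:A)) * (Ring.inverse v * x)) := by
      rw [sub_mul, hvx, smul_mul_assoc, one_mul, sub_sub_cancel, inv_smul_smul₀ hc]
    rw [key]
    exact J.smul_mem _ (J.sub_mem hx (hJr _ hvJ _))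
  -- main invariants
  have inv1 : ∀ n : ℕ, (u n - ((2:ℂ)⁻¹ ^ n) • (1:A) ∈ J) ∧ ‖1 - u n‖ ≤ 1 - (2:ℝ)⁻¹ ^ n := by
    intro n
    induction n with
    | zero =>
        constructor
        · rw [hu0]; simp
        · rw [hu0]; simp
    | succ n ih =>
        constructor
        · have hrw : u (n + 1) - ((2:ℂ)⁻¹ ^ (n + 1)) • (1:A)
              = (u n - ((2:ℂ)⁻¹ ^ n) • (1:A))
                + ((2:ℂ)⁻¹ ^ (n + 1)) • e (cohenPick e K ε (u n) n) := by
            rw [hstep n]; module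
          rw [hrw]
          exact J.add_mem ih.1 (J.smul_mem _ (heJ _))
        · have hrw : (1:A) - u (n + 1)
              = (1 - u n) + ((2:ℂ)⁻¹ ^ (n + 1)) • (1 - e (cohenPick e K ε (u n) n)) := by
            rw [hstep n]; abel
          have h2 : ‖((2:ℂ)⁻¹ ^ (n + 1)) • ((1:A) - e (cohenPick e K ε (u n) n))‖
              ≤ (2:ℝ)⁻¹ ^ (n + 1) := by
            rw [norm_smul, hcnorm]
            calc (2:ℝ)⁻¹ ^ (n + 1) * ‖(1:A) - e (cohenPick e K ε (u n) n)‖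
                ≤ (2:ℝ)⁻¹ ^ (n + 1) * 1 := by
                  gcongr
                  exact heF _
              _ = (2:ℝ)⁻¹ ^ (n + 1) := mul_one _
          calc ‖(1:A) - u (n + 1)‖
              ≤ ‖(1:A) - u n‖ + ‖((2:ℂ)⁻¹ ^ (n + 1)) • ((1:A) - e (cohenPick e K ε (u n) n))‖ := by
                rw [hrw]; exact norm_add_le _ _
            _ ≤ (1 - (2:ℝ)⁻¹ ^ n) + (2:ℝ)⁻¹ ^ (n + 1) := add_le_add ih.2 h2
            _ = 1 - (2:ℝ)⁻¹ ^ (n + 1) := by rw [pow_succ]; ring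
  have hult : ∀ n, ‖1 - u n‖ < 1 := by
    intro n
    have h2 : (0:ℝ) < (2:ℝ)⁻¹ ^ n := by positivity
    linarith [(inv1 n).2]
  have hunit : ∀ n, IsUnit (u n) := fun n => cohen_isUnit_of_norm_lt_one (hult n)
  have hinv_norm : ∀ n, ‖Ring.inverse (u n)‖ ≤ (2:ℝ) ^ n := by
    intro n
    refine (cohen_norm_inverse_le (hult n)).trans ?_
    have h1 : (2:ℝ)⁻¹ ^ n ≤ 1 - ‖1 - u n‖ := by linarith [(inv1 n).2]
    have h2 : (0:ℝ) < (2:ℝ)⁻¹ ^ n := by positivity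
    calc (1 - ‖1 - u n‖)⁻¹ ≤ ((2:ℝ)⁻¹ ^ n)⁻¹ := by gcongr
      _ = 2 ^ n := by rw [← inv_pow, inv_inv]
  have hwJ : ∀ n, ∀ x ∈ K, Ring.inverse (u n) * x ∈ J := fun n x hx =>
    inv_memJ (u n) n (inv1 n).1 (hunit n) x (hKJ hx)
  -- the choice at each stage is good
  have hpick : ∀ n, ∀ x ∈ K,
      ‖(1 - e (cohenPick e K ε (u n) n)) * (Ring.inverse (u n) * x)‖
        ≤ ε * (2:ℝ)⁻¹ ^ (n + 1) := by
    intro n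
    apply cohenPick_spec
    have hS : IsCompact ((fun y => Ring.inverse (u n) * y) '' K) :=
      hK.image (continuous_const.mul continuous_id)
    have hSJ : (fun y => Ring.inverse (u n) * y) '' K ⊆ (J : Set A) := by
      rintro _ ⟨x, hxK, rfl⟩
      exact hwJ n x hxK
    obtain ⟨t, ht⟩ := unif _ hS hSJ (ε * (2:ℝ)⁻¹ ^ (n + 1)) (by positivity)
    exact ⟨t, fun x hx => ht _ ⟨x, hx, rfl⟩⟩
  -- `u` is Cauchy and converges to `z`
  have husub : ∀ n, u n - u (n + 1)
      = ((2:ℂ)⁻¹ ^ (n + 1)) • (1 - e (cohenPick e K ε (u n) n)) := by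
    intro n; rw [hstep n, sub_sub_cancel]
  have hudist : ∀ n, dist (u n) (u (n + 1)) ≤ (1/2 : ℝ) * (1/2) ^ n := by
    intro n
    rw [dist_eq_norm, husub n, norm_smul, hcnorm]
    have h1 : (2:ℝ)⁻¹ ^ (n + 1) * ‖(1:A) - e (cohenPick e K ε (u n) n)‖
        ≤ (2:ℝ)⁻¹ ^ (n + 1) * 1 := by gcongr; exact heF _
    have h2 : (2:ℝ)⁻¹ ^ (n + 1) * 1 = (1/2 : ℝ) * (1/2) ^ n := by
      rw [mul_one, pow_succ]; ring_nf
    linarith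
  obtain ⟨z, hz⟩ := cauchySeq_tendsto_of_complete
    (cauchySeq_of_le_geometric (1/2 : ℝ) (1/2 : ℝ) (by norm_num) hudist)
  have hzJ : z ∈ J := by
    have h0 : Tendsto (fun n : ℕ => ((2:ℂ)⁻¹ ^ n) • (1:A)) atTop (nhds 0) := by
      have h1 : Tendsto (fun n : ℕ => ((2:ℂ)⁻¹) ^ n) atTop (nhds 0) := by
        apply tendsto_pow_atTop_nhds_zero_of_norm_lt_one
        rw [norm_inv, RCLike.norm_two]
        norm_num
      simpa using h1.smul_const (1:A)
    have h2 := hz.sub h0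
    rw [sub_zero] at h2
    exact hJc.mem_of_tendsto h2 (Eventually.of_forall fun n => (inv1 n).1)
  have hz1 : ‖1 - z‖ ≤ 1 := by
    have h1 : Tendsto (fun n => ‖1 - u n‖) atTop (nhds ‖1 - z‖) :=
      (tendsto_const_nhds.sub hz).norm
    refine le_of_tendsto h1 (Eventually.of_forall fun n => ?_)
    have h2 : (0:ℝ) < (2:ℝ)⁻¹ ^ n := by positivity
    linarith [(inv1 n).2]
  refine ⟨z, hzJ, hz1, ?_⟩
  intro x hxK
  -- the sequence of approximate factors
  have hux : ∀ n, u n * (Ring.inverse (u n) * x) = x := by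
    intro n
    rw [← mul_assoc, Ring.mul_inverse_cancel _ (hunit n), one_mul]
  have hdiff : ∀ n, dist (Ring.inverse (u n) * x) (Ring.inverse (u (n + 1)) * x)
      ≤ (ε/2) * (1/2) ^ n := by
    intro n
    have hid : Ring.inverse (u (n + 1)) * x - Ring.inverse (u n) * x
        = Ring.inverse (u (n + 1)) * ((u n - u (n + 1)) * (Ring.inverse (u n) * x)) := by
      rw [sub_mul, mul_sub, ← mul_assoc (Ring.inverse (u (n+1))) (u (n+1)),
        Ring.inverse_mul_cancel _ (hunit (n + 1)), one_mul, ← mul_assoc, mul_assoc (Ring.inverse (u (n+1))),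
        hux n]
    rw [dist_eq_norm', hid, husub n, smul_mul_assoc]
    have hb1 : ‖((2:ℂ)⁻¹ ^ (n + 1)) • ((1 - e (cohenPick e K ε (u n) n)) * (Ring.inverse (u n) * x))‖
        ≤ (2:ℝ)⁻¹ ^ (n + 1) * (ε * (2:ℝ)⁻¹ ^ (n + 1)) := by
      rw [norm_smul, hcnorm]
      exact mul_le_mul_of_nonneg_left (hpick n x hxK) (by positivity)
    calc ‖Ring.inverse (u (n + 1)) *
          (((2:ℂ)⁻¹ ^ (n + 1)) • ((1 - e (cohenPick e K ε (u n) n)) * (Ring.inverse (u n) * x)))‖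
        ≤ ‖Ring.inverse (u (n + 1))‖ *
          ‖((2:ℂ)⁻¹ ^ (n + 1)) • ((1 - e (cohenPick e K ε (u n) n)) * (Ring.inverse (u n) * x))‖ :=
          norm_mul_le _ _
      _ ≤ (2:ℝ) ^ (n + 1) * ((2:ℝ)⁻¹ ^ (n + 1) * (ε * (2:ℝ)⁻¹ ^ (n + 1))) := by
          apply mul_le_mul (hinv_norm (n + 1)) hb1 (norm_nonneg _) (by positivity)
      _ = ((2:ℝ) ^ (n + 1) * (2:ℝ)⁻¹ ^ (n + 1)) * (ε * (2:ℝ)⁻¹ ^ (n + 1)) := by ring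
      _ = ε * (2:ℝ)⁻¹ ^ (n + 1) := by
          rw [← mul_pow]
          norm_num
      _ = (ε/2) * (1/2) ^ n := by rw [pow_succ]; ring_nf
  obtain ⟨wx, hwx⟩ := cauchySeq_tendsto_of_complete
    (cauchySeq_of_le_geometric (1/2 : ℝ) (ε/2 : ℝ) (by norm_num) hdiff)
  have hwxJ : wx ∈ J :=
    hJc.mem_of_tendsto hwx (Eventually.of_forall fun n => hwJ n x hxK)
  have hfac : x = z * wx := by
    have h1 : Tendsto (fun n => u n * (Ring.inverse (u n) * x)) atTop (nhds (z * wx)) :=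
      hz.mul hwx
    have h2 : (fun n => u n * (Ring.inverse (u n) * x)) = fun _ => x := funext hux
    rw [h2] at h1
    exact tendsto_nhds_unique tendsto_const_nhds h1
  refine ⟨wx, hwxJ, hfac, ?_⟩
  have h0 : Ring.inverse (u 0) * x = x := by
    rw [hu0, Ring.inverse_one, one_mul]
  have hd := dist_le_of_le_geometric_of_tendsto₀ (1/2 : ℝ) (ε/2 : ℝ) (by norm_num) hdiff hwx
  rw [h0, dist_eq_norm] at hd
  have : (ε/2 : ℝ) / (1 - 1/2) = ε := by ring
  rw [this] at hd
  rw [norm_sub_rev] at hd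
  linarith
end
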